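/- arXiv:2506.15335 — 6 statements merged into one kernel-verified Lean document; each statement's English description precedes it below -/
import Mathlib

section
/- Let n ≥ 3. The ℝ-linear subspace of ℝ[x,y] spanned by Δ = q_n together with all of its iterated partial derivatives (of all orders, including order zero) equals the ℝ-span of the 2n polynomials 1, Δ, and p_k, q_k for 1 ≤ k ≤ n−1; moreover these 2n polynomials are linearly independent over ℝ, so this space (the space of harmonics of I₂(n)) has dimension 2n. -/
open MvPolynomial

/-- The real part of `(x+iy)^k`: `p_k = Σ_j (−1)^j C(k,2j) x^{k−2j} y^{2j}`. -/
noncomputable def pD (k : ℕ) : MvPolynomial (Fin 2) ℝ :=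
  ∑ j ∈ Finset.range (k / 2 + 1),
    C ((-1 : ℝ) ^ j * (k.choose (2 * j) : ℝ)) * X 0 ^ (k - 2 * j) * X 1 ^ (2 * j)

/-- The imaginary part of `(x+iy)^k`: `q_k = Σ_j (−1)^j C(k,2j+1) x^{k−2j−1} y^{2j+1}`. -/
noncomputable def qD (k : ℕ) : MvPolynomial (Fin 2) ℝ :=
  ∑ j ∈ Finset.range ((k + 1) / 2),
    C ((-1 : ℝ) ^ j * (k.choose (2 * j + 1) : ℝ)) * X 0 ^ (k - (2 * j + 1)) * X 1 ^ (2 * j + 1)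

/-- Action of the reflection `s` of the dihedral group on `ℝ[x,y]`. -/
noncomputable def sAct : MvPolynomial (Fin 2) ℝ →ₐ[ℝ] MvPolynomial (Fin 2) ℝ :=
  aeval ![X 0, -X 1]

/-- Action of the rotation `r` (through angle `2π/n`) of the dihedral group on `ℝ[x,y]`. -/
noncomputable def rAct (n : ℕ) : MvPolynomial (Fin 2) ℝ →ₐ[ℝ] MvPolynomial (Fin 2) ℝ :=
  aeval ![C (Real.cos (2 * Real.pi / n)) * X 0 - C (Real.sin (2 * Real.pi / n)) * X 1,
          C (Real.sin (2 * Real.pi / n)) * X 0 + C (Real.cos (2 * Real.pi / n)) * X 1]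

open Finset
lemma dterm0 (c : ℝ) (a b : ℕ) :
    pderiv (0:Fin 2) (C c * X 0 ^ a * X 1 ^ b) = C (c * a) * X 0 ^ (a-1) * X 1 ^ b := by
  simp [pderiv_mul, pderiv_pow, pderiv_X, Pi.single_apply]; ring

lemma dterm1 (c : ℝ) (a b : ℕ) :
    pderiv (1:Fin 2) (C c * X 0 ^ a * X 1 ^ b) = C (c * b) * X 0 ^ a * X 1 ^ (b-1) := by
  simp [pderiv_mul, pderiv_pow, pderiv_X, Pi.single_apply]; ring

lemma nat1 (n m : ℕ) : (n+1).choose m * (n+1-m) = (n+1) * n.choose m := by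
  rw [Nat.add_one_mul_choose_eq, Nat.choose_succ_right_eq]

lemma nat2 (n m : ℕ) : (n+1).choose (m+1) * (m+1) = (n+1) * n.choose m :=
  (Nat.add_one_mul_choose_eq n m).symm

lemma pD_eq (k : ℕ) : pD k = ∑ j ∈ range (k+1),
    C ((-1 : ℝ) ^ j * (k.choose (2 * j) : ℝ)) * X 0 ^ (k - 2 * j) * X 1 ^ (2 * j) := by
  rw [pD]
  apply Finset.sum_subset
  · intro j hj; simp only [mem_range] at *; omega
  · intro j _ hj
    simp only [mem_range, not_lt] at hj
    rw [Nat.choose_eq_zero_of_lt (by omega)]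
    simp

lemma qD_eq (k : ℕ) : qD k = ∑ j ∈ range (k+1),
    C ((-1 : ℝ) ^ j * (k.choose (2 * j + 1) : ℝ)) * X 0 ^ (k - (2 * j + 1)) * X 1 ^ (2 * j + 1) := by
  rw [qD]
  apply Finset.sum_subset
  · intro j hj; simp only [mem_range] at *; omega
  · intro j _ hj
    simp only [mem_range, not_lt] at hj
    rw [Nat.choose_eq_zero_of_lt (by omega)]
    simp

lemma smul_term (r c : ℝ) (a b : ℕ) :
    r • (C c * X 0 ^ a * X 1 ^ b : MvPolynomial (Fin 2) ℝ) = C (r * c) * X 0 ^ a * X 1 ^ b := by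
  rw [MvPolynomial.smul_eq_C_mul, map_mul]; ring


lemma dA (k : ℕ) : pderiv (0:Fin 2) (pD (k+1)) = ((k+1 : ℕ) : ℝ) • pD k := by
  rw [pD_eq (k+1), pD_eq k, map_sum, Finset.smul_sum]
  rw [show k+1+1 = (k+1)+1 from rfl, Finset.sum_range_succ]
  have hlast : pderiv (0:Fin 2) (C ((-1:ℝ)^(k+1) * (((k+1).choose (2*(k+1))) : ℝ)) *
      X 0 ^ ((k+1) - 2*(k+1)) * X 1 ^ (2*(k+1))) = 0 := by
    rw [dterm0]
    have h0 : (k+1) - 2*(k+1) = 0 := by omega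
    rw [h0]; simp
  rw [hlast, add_zero]
  refine Finset.sum_congr rfl fun j hj => ?_
  rw [dterm0, smul_term]
  have he : (k+1) - 2*j - 1 = k - 2*j := by omega
  have hc : ((-1:ℝ)^j * (((k+1).choose (2*j)):ℝ)) * (((k+1) - 2*j : ℕ):ℝ)
      = ((k+1:ℕ):ℝ) * ((-1:ℝ)^j * ((k.choose (2*j)):ℝ)) := by
    rw [mul_assoc, ← Nat.cast_mul, nat1 k (2*j), Nat.cast_mul]; ring
  rw [he, hc]

lemma dC (k : ℕ) : pderiv (0:Fin 2) (qD (k+1)) = ((k+1 : ℕ) : ℝ) • qD k := by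
  rw [qD_eq (k+1), qD_eq k, map_sum, Finset.smul_sum]
  rw [show k+1+1 = (k+1)+1 from rfl, Finset.sum_range_succ]
  have hlast : pderiv (0:Fin 2) (C ((-1:ℝ)^(k+1) * (((k+1).choose (2*(k+1)+1)) : ℝ)) *
      X 0 ^ ((k+1) - (2*(k+1)+1)) * X 1 ^ (2*(k+1)+1)) = 0 := by
    rw [dterm0]
    have h0 : (k+1) - (2*(k+1)+1) = 0 := by omega
    rw [h0]; simp
  rw [hlast, add_zero]
  refine Finset.sum_congr rfl fun j hj => ?_
  rw [dterm0, smul_term]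
  have he : (k+1) - (2*j+1) - 1 = k - (2*j+1) := by omega
  have hc : ((-1:ℝ)^j * (((k+1).choose (2*j+1)):ℝ)) * (((k+1) - (2*j+1) : ℕ):ℝ)
      = ((k+1:ℕ):ℝ) * ((-1:ℝ)^j * ((k.choose (2*j+1)):ℝ)) := by
    rw [mul_assoc, ← Nat.cast_mul, nat1 k (2*j+1), Nat.cast_mul]; ring
  rw [he, hc]

lemma dD (k : ℕ) : pderiv (1:Fin 2) (qD (k+1)) = ((k+1 : ℕ) : ℝ) • pD k := by
  rw [qD_eq (k+1), pD_eq k, map_sum, Finset.smul_sum]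
  rw [show k+1+1 = (k+1)+1 from rfl, Finset.sum_range_succ]
  have hlast : pderiv (1:Fin 2) (C ((-1:ℝ)^(k+1) * (((k+1).choose (2*(k+1)+1)) : ℝ)) *
      X 0 ^ ((k+1) - (2*(k+1)+1)) * X 1 ^ (2*(k+1)+1)) = 0 := by
    rw [Nat.choose_eq_zero_of_lt (by omega)]
    simp
  rw [hlast, add_zero]
  refine Finset.sum_congr rfl fun j hj => ?_
  rw [dterm1, smul_term]
  have he : (k+1) - (2*j+1) = k - 2*j := by omega
  have hf : 2*j+1-1 = 2*j := by omega
  have hc : ((-1:ℝ)^j * (((k+1).choose (2*j+1)):ℝ)) * ((2*j+1 : ℕ):ℝ)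
      = ((k+1:ℕ):ℝ) * ((-1:ℝ)^j * ((k.choose (2*j)):ℝ)) := by
    rw [mul_assoc, ← Nat.cast_mul, nat2 k (2*j), Nat.cast_mul]; ring
  rw [he, hf, hc]

lemma dB (k : ℕ) : pderiv (1:Fin 2) (pD (k+1)) = (-((k+1 : ℕ) : ℝ)) • qD k := by
  rw [pD_eq (k+1), qD_eq k, map_sum, Finset.smul_sum]
  rw [show k+1+1 = (k+1)+1 from rfl, Finset.sum_range_succ']
  have h0 : pderiv (1:Fin 2) (C ((-1:ℝ)^0 * (((k+1).choose (2*0)) : ℝ)) *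
      X 0 ^ ((k+1) - 2*0) * X 1 ^ (2*0)) = 0 := by
    rw [dterm1]; simp
  rw [h0, add_zero]
  refine Finset.sum_congr rfl fun j hj => ?_
  rw [dterm1, smul_term]
  have he : (k+1) - 2*(j+1) = k - (2*j+1) := by omega
  have hf : 2*(j+1)-1 = 2*j+1 := by omega
  have hc : ((-1:ℝ)^(j+1) * (((k+1).choose (2*(j+1))):ℝ)) * ((2*(j+1) : ℕ):ℝ)
      = (-((k+1:ℕ):ℝ)) * ((-1:ℝ)^j * ((k.choose (2*j+1)):ℝ)) := by
    have h2 : 2*(j+1) = (2*j+1)+1 := by omega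
    rw [h2, mul_assoc, ← Nat.cast_mul, nat2 k (2*j+1), Nat.cast_mul, pow_succ]; ring
  rw [he, hf, hc]

lemma pD0 : pD 0 = 1 := by simp [pD]
lemma qD0 : qD 0 = 0 := by simp [qD]

lemma fold_smul (l : List (Fin 2)) (c : ℝ) (f : MvPolynomial (Fin 2) ℝ) :
    l.foldl (fun h i => pderiv i h) (c • f) = c • l.foldl (fun h i => pderiv i h) f := by
  induction l generalizing f with
  | nil => rfl
  | cons i l ih =>
    rw [List.foldl_cons, show (pderiv i) (c • f) = c • (pderiv i) f from Derivation.map_smul _ _ _,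
      List.foldl_cons]
    exact ih _

lemma foldrepq (j : ℕ) : ∀ m, ∃ c : ℝ, 0 < c ∧
    (List.replicate j (0:Fin 2)).foldl (fun h i => pderiv i h) (qD (m+j)) = c • qD m := by
  induction j with
  | zero => exact fun m => ⟨1, one_pos, by simp⟩
  | succ j ih =>
    intro m
    obtain ⟨c, hc, hcc⟩ := ih m
    refine ⟨((m+j+1:ℕ):ℝ) * c, by positivity, ?_⟩
    rw [List.replicate_succ, List.foldl_cons, show m+(j+1) = (m+j)+1 from rfl, dC, fold_smul,
      hcc, smul_smul]

lemma foldrepp (j : ℕ) : ∀ m, ∃ c : ℝ, 0 < c ∧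
    (List.replicate j (0:Fin 2)).foldl (fun h i => pderiv i h) (pD (m+j)) = c • pD m := by
  induction j with
  | zero => exact fun m => ⟨1, one_pos, by simp⟩
  | succ j ih =>
    intro m
    obtain ⟨c, hc, hcc⟩ := ih m
    refine ⟨((m+j+1:ℕ):ℝ) * c, by positivity, ?_⟩
    rw [List.replicate_succ, List.foldl_cons, show m+(j+1) = (m+j)+1 from rfl, dA, fold_smul,
      hcc, smul_smul]

/-- exponent vector -/
noncomputable def e (a b : ℕ) : Fin 2 →₀ ℕ := Finsupp.single 0 a + Finsupp.single 1 b

lemma coeff_term (c : ℝ) (u v a b : ℕ) :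
    coeff (e a b) (C c * X 0 ^ u * X 1 ^ v) = if u = a ∧ v = b then c else 0 := by
  have h1 : (C c * X 0 ^ u * X 1 ^ v : MvPolynomial (Fin 2) ℝ)
      = monomial (e u v) c := by
    rw [X_pow_eq_monomial, X_pow_eq_monomial, C_apply, monomial_mul, monomial_mul, e]
    simp
  rw [h1, coeff_monomial]
  congr 1
  simp only [eq_iff_iff]
  constructor
  · intro h
    have h0 := DFunLike.congr_fun h 0
    have h2 := DFunLike.congr_fun h 1
    simp [e, Finsupp.single_apply] at h0 h2
    exact ⟨h0, h2⟩
  · rintro ⟨rfl, rfl⟩; rfl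

lemma coeffP1 (k a : ℕ) : coeff (e a 0) (pD k) = if a = k then 1 else 0 := by
  rw [pD_eq, coeff_sum]
  simp only [coeff_term]
  rw [Finset.sum_eq_single 0]
  · rcases eq_or_ne a k with rfl | h
    · simp
    · simp [h, Ne.symm h]
  · intro j _ hj
    rw [if_neg]; rintro ⟨-, h⟩; omega
  · intro h; simp at h

lemma coeffP2 (k a : ℕ) : coeff (e a 1) (pD k) = 0 := by
  rw [pD_eq, coeff_sum]
  simp only [coeff_term]
  apply Finset.sum_eq_zero
  intro j _
  rw [if_neg]; rintro ⟨-, h⟩; omega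

lemma coeffQ1 (k a : ℕ) : coeff (e a 0) (qD k) = 0 := by
  rw [qD_eq, coeff_sum]
  simp only [coeff_term]
  apply Finset.sum_eq_zero
  intro j _
  rw [if_neg]; rintro ⟨-, h⟩; omega

lemma coeffQ2 (k a : ℕ) : coeff (e a 1) (qD k) = if a = k - 1 then (k:ℝ) else 0 := by
  rw [qD_eq, coeff_sum]
  simp only [coeff_term]
  rw [Finset.sum_eq_single 0]
  · rcases eq_or_ne a (k-1) with h | h
    · simp [h]
    · simp [h, Ne.symm h]
  · intro j _ hj
    rw [if_neg]; rintro ⟨-, h⟩; omega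
  · intro h; simp at h

lemma coeffOne (a b : ℕ) :
    coeff (e a b) (1 : MvPolynomial (Fin 2) ℝ) = if a = 0 ∧ b = 0 then 1 else 0 := by
  have h : (1 : MvPolynomial (Fin 2) ℝ) = C 1 * X 0 ^ 0 * X 1 ^ 0 := by simp
  rw [h, coeff_term]
  congr 1
  rw [eq_iff_iff]
  exact and_congr eq_comm eq_comm


/-- The space of harmonics of `I₂(n)` (the span of `Δ = q_n` and all of its iterated partial
derivatives) is spanned by the `2n` linearly independent polynomials
`1, Δ, p_1, q_1, …, p_{n−1}, q_{n−1}`, and hence has dimension `2n`. -/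
theorem stmt1 (n : ℕ) (hn : 3 ≤ n)
    (H : Submodule ℝ (MvPolynomial (Fin 2) ℝ))
    (hH : H = Submodule.span ℝ
      {g | ∃ l : List (Fin 2), g = l.foldl (fun h i => MvPolynomial.pderiv i h) (qD n)})
    (F : Fin 2 ⊕ Fin (n - 1) ⊕ Fin (n - 1) → MvPolynomial (Fin 2) ℝ)
    (hF : F = Sum.elim ![1, qD n]
      (Sum.elim (fun k : Fin (n - 1) => pD (k.1 + 1)) (fun k : Fin (n - 1) => qD (k.1 + 1)))) :
    H = Submodule.span ℝ (Set.range F) ∧ LinearIndependent ℝ F ∧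
    Module.finrank ℝ H = 2 * n := by
  subst hF
  -- membership of generators in H
  have hmemS : ∀ l : List (Fin 2), l.foldl (fun h i => pderiv i h) (qD n) ∈ H := by
    intro l; rw [hH]; exact Submodule.subset_span ⟨l, rfl⟩
  have hqH : ∀ k, k ≤ n → qD k ∈ H := by
    intro k hk
    obtain ⟨c, hc, hcc⟩ := foldrepq (n-k) k
    rw [show k + (n-k) = n by omega] at hcc
    have h2 := H.smul_mem c⁻¹ (hmemS (List.replicate (n-k) 0))
    rwa [hcc, inv_smul_smul₀ hc.ne'] at h2
  have hpH : ∀ k, k ≤ n - 1 → pD k ∈ H := by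
    intro k hk
    obtain ⟨c, hc, hcc⟩ := foldrepp (n-1-k) k
    rw [show k + (n-1-k) = n-1 by omega] at hcc
    have hd : pderiv (1:Fin 2) (qD n) = (((n-1)+1:ℕ):ℝ) • pD (n-1) := by
      rw [show n = (n-1)+1 by omega]; exact dD (n-1)
    have h1 : ((1:Fin 2) :: List.replicate (n-1-k) 0).foldl (fun h i => pderiv i h) (qD n)
        = ((((n-1)+1:ℕ):ℝ) * c) • pD k := by
      rw [List.foldl_cons, hd, fold_smul, hcc, smul_smul]
    have hpos : (0:ℝ) < (((n-1)+1:ℕ):ℝ) * c := by positivity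
    have h2 := H.smul_mem ((((n-1)+1:ℕ):ℝ) * c)⁻¹
      (hmemS ((1:Fin 2) :: List.replicate (n-1-k) 0))
    rwa [h1, inv_smul_smul₀ hpos.ne'] at h2
  set F := Sum.elim ![(1 : MvPolynomial (Fin 2) ℝ), qD n]
      (Sum.elim (fun k : Fin (n - 1) => pD (k.1 + 1)) (fun k : Fin (n - 1) => qD (k.1 + 1)))
    with hF
  -- generators in span of range F
  have hF0 : (1 : MvPolynomial (Fin 2) ℝ) ∈ Set.range F := ⟨Sum.inl 0, rfl⟩
  have hFq : qD n ∈ Set.range F := ⟨Sum.inl 1, rfl⟩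
  have hFp : ∀ k, k < n-1 → pD (k+1) ∈ Set.range F :=
    fun k hk => ⟨Sum.inr (Sum.inl ⟨k, hk⟩), rfl⟩
  have hFq' : ∀ k, k < n-1 → qD (k+1) ∈ Set.range F :=
    fun k hk => ⟨Sum.inr (Sum.inr ⟨k, hk⟩), rfl⟩
  have hpT : ∀ m, m ≤ n-1 → pD m ∈ Submodule.span ℝ (Set.range F) := by
    intro m hm
    match m with
    | 0 => rw [pD0]; exact Submodule.subset_span hF0
    | (k+1) => exact Submodule.subset_span (hFp k (by omega))
  have hqT : ∀ m, m ≤ n → qD m ∈ Submodule.span ℝ (Set.range F) := by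
    intro m hm
    match m with
    | 0 => rw [qD0]; exact Submodule.zero_mem _
    | (k+1) =>
      rcases eq_or_lt_of_le hm with h | h
      · rw [h]; exact Submodule.subset_span hFq
      · exact Submodule.subset_span (hFq' k (by omega))
  -- the predicate P and closure under pderiv
  have step : ∀ (i : Fin 2) (f : MvPolynomial (Fin 2) ℝ),
      (∃ (c : ℝ) (m : ℕ), (m + 1 ≤ n ∧ f = c • pD m) ∨ (m ≤ n ∧ f = c • qD m)) →
      (∃ (c : ℝ) (m : ℕ), (m + 1 ≤ n ∧ pderiv i f = c • pD m) ∨ (m ≤ n ∧ pderiv i f = c • qD m)) := by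
    rintro i f ⟨c, m, ⟨hm, rfl⟩ | ⟨hm, rfl⟩⟩
    · match m with
      | 0 =>
        refine ⟨0, 0, Or.inr ⟨by omega, ?_⟩⟩
        rw [Derivation.map_smul, pD0, zero_smul]
        simp
      | (k+1) =>
        rcases (by omega : i = 0 ∨ i = 1) with rfl | rfl
        · exact ⟨c * ((k+1:ℕ):ℝ), k, Or.inl ⟨by omega,
            by rw [Derivation.map_smul, dA, smul_smul]⟩⟩
        · exact ⟨c * (-((k+1:ℕ):ℝ)), k, Or.inr ⟨by omega,
            by rw [Derivation.map_smul, dB, smul_smul]⟩⟩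
    · match m with
      | 0 =>
        refine ⟨0, 0, Or.inr ⟨by omega, ?_⟩⟩
        rw [Derivation.map_smul, qD0, zero_smul]
        simp
      | (k+1) =>
        rcases (by omega : i = 0 ∨ i = 1) with rfl | rfl
        · exact ⟨c * ((k+1:ℕ):ℝ), k, Or.inr ⟨by omega,
            by rw [Derivation.map_smul, dC, smul_smul]⟩⟩
        · exact ⟨c * ((k+1:ℕ):ℝ), k, Or.inl ⟨by omega,
            by rw [Derivation.map_smul, dD, smul_smul]⟩⟩
  have foldP : ∀ (l : List (Fin 2)) (f : MvPolynomial (Fin 2) ℝ),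
      (∃ (c : ℝ) (m : ℕ), (m + 1 ≤ n ∧ f = c • pD m) ∨ (m ≤ n ∧ f = c • qD m)) →
      (∃ (c : ℝ) (m : ℕ), (m + 1 ≤ n ∧ l.foldl (fun h i => pderiv i h) f = c • pD m) ∨
        (m ≤ n ∧ l.foldl (fun h i => pderiv i h) f = c • qD m)) := by
    intro l
    induction l with
    | nil => exact fun f h => h
    | cons i l ih => exact fun f h => ih _ (step i f h)
  have hHT : H ≤ Submodule.span ℝ (Set.range F) := by
    rw [hH, Submodule.span_le]
    rintro g ⟨l, rfl⟩
    obtain ⟨c, m, ⟨hm, hh⟩ | ⟨hm, hh⟩⟩ :=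
      foldP l (qD n) ⟨1, n, Or.inr ⟨le_rfl, (one_smul _ _).symm⟩⟩
    · rw [hh]; exact Submodule.smul_mem _ _ (hpT m (by omega))
    · rw [hh]; exact Submodule.smul_mem _ _ (hqT m hm)
  have hTH : Submodule.span ℝ (Set.range F) ≤ H := by
    rw [Submodule.span_le]
    rintro g ⟨i, rfl⟩
    rcases i with i | j | j
    · fin_cases i
      · show (1 : MvPolynomial (Fin 2) ℝ) ∈ H
        rw [← pD0]; exact hpH 0 (by omega)
      · exact hqH n le_rfl
    · exact hpH (j.1+1) (by omega)
    · exact hqH (j.1+1) (by omega)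
  have hspan : H = Submodule.span ℝ (Set.range F) := le_antisymm hHT hTH
  -- linear independence
  have hli : LinearIndependent ℝ F := by
    rw [Fintype.linearIndependent_iff]
    intro g hg
    have key : ∀ a b : ℕ, ∑ i, g i * coeff (e a b) (F i) = 0 := by
      intro a b
      have h2 := congrArg (coeff (e a b)) hg
      rw [coeff_sum] at h2
      simpa [coeff_smul, smul_eq_mul] using h2
    have key' : ∀ a b : ℕ,
        g (Sum.inl 0) * coeff (e a b) 1 + g (Sum.inl 1) * coeff (e a b) (qD n)
        + ((∑ j : Fin (n-1), g (Sum.inr (Sum.inl j)) * coeff (e a b) (pD (j.1+1)))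
          + ∑ j : Fin (n-1), g (Sum.inr (Sum.inr j)) * coeff (e a b) (qD (j.1+1))) = 0 := by
      intro a b
      have h2 := key a b
      rwa [Fintype.sum_sum_type, Fintype.sum_sum_type, Fin.sum_univ_two] at h2
    intro i
    rcases i with i | j | j
    · fin_cases i
      · have h2 := key' 0 0
        rw [coeffOne, coeffQ1, if_pos ⟨rfl, rfl⟩, Finset.sum_eq_zero (fun j _ => by
            rw [coeffP1, if_neg (by omega), mul_zero]),
          Finset.sum_eq_zero (fun j _ => by rw [coeffQ1, mul_zero])] at h2
        simpa using h2
      · have h2 := key' (n-1) 1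
        rw [coeffOne, coeffQ2, if_neg (by omega), if_pos rfl,
          Finset.sum_eq_zero (fun j _ => by rw [coeffP2, mul_zero]),
          Finset.sum_eq_zero (fun j (_ : j ∈ Finset.univ) => by
            rw [coeffQ2, if_neg (by omega), mul_zero])] at h2
        have hn0 : ((n:ℕ):ℝ) ≠ 0 := by positivity
        simp only [mul_zero, zero_mul, add_zero, zero_add] at h2
        exact (mul_eq_zero.mp h2).resolve_right hn0
    · have h2 := key' (j.1+1) 0
      rw [coeffOne, coeffQ1, if_neg (by omega),
        Fintype.sum_eq_single j (fun x hx => by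
          rw [coeffP1, if_neg (by
            intro hcon
            exact hx (Fin.ext (by omega))), mul_zero]),
        coeffP1, if_pos rfl,
        Finset.sum_eq_zero (fun x (_ : x ∈ Finset.univ) => by rw [coeffQ1, mul_zero])] at h2
      simpa using h2
    · have h2 := key' j.1 1
      rw [coeffOne, coeffQ2, if_neg (by omega), if_neg (by omega),
        Finset.sum_eq_zero (fun x (_ : x ∈ Finset.univ) => by rw [coeffP2, mul_zero]),
        Fintype.sum_eq_single j (fun x hx => by
          rw [coeffQ2, if_neg (by
            intro hcon
            exact hx (Fin.ext (by omega))), mul_zero]),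
        coeffQ2, if_pos (by omega)] at h2
      simp only [mul_zero, zero_mul, add_zero, zero_add] at h2
      have hj0 : ((j.1+1:ℕ):ℝ) ≠ 0 := by positivity
      exact (mul_eq_zero.mp h2).resolve_right hj0
  refine ⟨hspan, hli, ?_⟩
  rw [hspan, finrank_span_eq_card hli]
  simp only [Fintype.card_sum, Fintype.card_fin]
  omega
end

section
/- Let n ≥ 3. For every k ≥ 1 the polynomials p_{k+1} and q_{k+1} lie in the ideal (p_k, q_k) of ℝ[x,y]. Consequently the dihedral Specht ideals form a strictly decreasing chain I₀ ⊋ I₁ ⊋ ⋯ ⊋ I_{⌊(n−1)/2⌋}; if n is odd then I_{(n−1)/2} ⊋ I_n, and if n is even then I_{(n−2)/2} ⊋ I_{n/2}^{Re} and I_{(n−2)/2} ⊋ I_{n/2}^{Im}, the ideals I_{n/2}^{Re} and I_{n/2}^{Im} are incomparable with respect to inclusion, and both strictly contain I_n. -/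
open MvPolynomial

-- parity split of Finset.range sum
theorem sum_range_parity {M : Type*} [AddCommMonoid M] (g : ℕ → M) (N : ℕ) :
    ∑ j ∈ Finset.range N, g j
      = ∑ m ∈ Finset.range ((N+1)/2), g (2*m) + ∑ m ∈ Finset.range (N/2), g (2*m+1) := by
  induction N with
  | zero => simp
  | succ N ih =>
    rcases Nat.even_or_odd N with ⟨a, ha⟩ | ⟨a, ha⟩
    · have h1 : (N+1+1)/2 = a + 1 := by omega
      have h2 : (N+1)/2 = a := by omega
      have h3 : N/2 = a := by omega
      rw [Finset.sum_range_succ, ih, h1, h2, h3, Finset.sum_range_succ]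
      have : 2 * a = N := by omega
      rw [this]
      abel
    · have h1 : (N+1+1)/2 = a + 1 := by omega
      have h2 : (N+1)/2 = a + 1 := by omega
      have h3 : N/2 = a := by omega
      rw [Finset.sum_range_succ, ih, h1, h2, h3, Finset.sum_range_succ, ha, Finset.sum_range_succ]
      abel


noncomputable def cx : MvPolynomial (Fin 2) ℝ →+* MvPolynomial (Fin 2) ℂ :=
  MvPolynomial.map (algebraMap ℝ ℂ)

theorem cx_main (k : ℕ) :
    cx (pD k) + C Complex.I * cx (qD k) = (X 0 + C Complex.I * X 1) ^ k := by
  rw [add_comm (X 0 : MvPolynomial (Fin 2) ℂ), add_pow, sum_range_parity]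
  have h2 : (k + 1 + 1) / 2 = k / 2 + 1 := by omega
  rw [h2]
  congr 1
  · rw [pD, cx, map_sum]
    refine Finset.sum_congr rfl fun m hm => ?_
    rw [map_mul, map_mul, map_pow, map_pow, MvPolynomial.map_X, MvPolynomial.map_X,
      MvPolynomial.map_C, mul_pow, ← C_pow]
    have hI : Complex.I ^ (2 * m) = (-1 : ℂ) ^ m := by rw [pow_mul, Complex.I_sq]
    rw [hI]
    have : algebraMap ℝ ℂ ((-1 : ℝ) ^ m * (k.choose (2 * m) : ℝ))
        = (-1 : ℂ) ^ m * (k.choose (2 * m) : ℂ) := by push_cast; ring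
    rw [this]
    simp only [C_mul, ← C_eq_coe_nat]
    ring
  · rw [qD, cx, map_sum, Finset.mul_sum]
    refine Finset.sum_congr rfl fun m hm => ?_
    rw [map_mul, map_mul, map_pow, map_pow, MvPolynomial.map_X, MvPolynomial.map_X,
      MvPolynomial.map_C, mul_pow, ← C_pow]
    have hI : Complex.I ^ (2 * m + 1) = (-1 : ℂ) ^ m * Complex.I := by
      rw [pow_succ, pow_mul, Complex.I_sq]
    rw [hI]
    have : algebraMap ℝ ℂ ((-1 : ℝ) ^ m * (k.choose (2 * m + 1) : ℝ))
        = (-1 : ℂ) ^ m * (k.choose (2 * m + 1) : ℂ) := by push_cast; ring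
    rw [this]
    simp only [C_mul, ← C_eq_coe_nat]
    ring

theorem cx_inj : Function.Injective cx :=
  MvPolynomial.map_injective _ Complex.ofReal_injective

theorem cx_conj (p : MvPolynomial (Fin 2) ℝ) :
    MvPolynomial.map (starRingEnd ℂ) (cx p) = cx p := by
  rw [cx, MvPolynomial.map_map,
    show (starRingEnd ℂ).comp (algebraMap ℝ ℂ) = algebraMap ℝ ℂ from
      RingHom.ext fun x => Complex.conj_ofReal x]

theorem cx_split {p q r s : MvPolynomial (Fin 2) ℝ}
    (h : cx p + C Complex.I * cx q = cx r + C Complex.I * cx s) : p = r ∧ q = s := by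
  have h2 := congrArg (MvPolynomial.map (starRingEnd ℂ)) h
  simp only [map_add, map_mul, MvPolynomial.map_C, cx_conj, Complex.conj_I, map_neg,
    neg_mul] at h2
  have hp : cx p = cx r := by
    have := congrArg₂ (· + ·) h h2
    have h3 : (2 : MvPolynomial (Fin 2) ℂ) * cx p = 2 * cx r := by ring_nf; ring_nf at this; linear_combination this
    exact mul_left_cancel₀ (two_ne_zero) h3
  refine ⟨cx_inj hp, cx_inj ?_⟩
  have h4 : C Complex.I * cx q = C Complex.I * cx s := by
    rw [hp] at h
    exact add_left_cancel h
  have hI : (C Complex.I : MvPolynomial (Fin 2) ℂ) ≠ 0 := by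
    simp [Complex.I_ne_zero]
  exact mul_left_cancel₀ hI h4

theorem rec_p (k : ℕ) : pD (k + 1) = X 0 * pD k - X 1 * qD k ∧
    qD (k + 1) = X 1 * pD k + X 0 * qD k := by
  have h := cx_main (k + 1)
  rw [pow_succ, ← cx_main k] at h
  have hI2 : (C Complex.I : MvPolynomial (Fin 2) ℂ) ^ 2 = -1 := by
    rw [← C_pow, Complex.I_sq, map_neg, map_one]
  have h' : cx (pD (k+1)) + C Complex.I * cx (qD (k+1))
      = cx (X 0 * pD k - X 1 * qD k) + C Complex.I * cx (X 1 * pD k + X 0 * qD k) := by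
    rw [h]
    simp only [map_add, map_sub, map_mul, cx, MvPolynomial.map_X]
    ring_nf
    rw [hI2]
    ring
  obtain ⟨h1, h2⟩ := cx_split h'
  exact ⟨h1, h2⟩

theorem double (m : ℕ) : pD (2 * m) = pD m ^ 2 - qD m ^ 2 ∧
    qD (2 * m) = 2 * (pD m * qD m) := by
  have h := cx_main (2 * m)
  rw [pow_mul'] at h
  rw [← cx_main m] at h
  have hI2 : (C Complex.I : MvPolynomial (Fin 2) ℂ) ^ 2 = -1 := by
    rw [← C_pow, Complex.I_sq, map_neg, map_one]
  have h' : cx (pD (2*m)) + C Complex.I * cx (qD (2*m))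
      = cx (pD m ^ 2 - qD m ^ 2) + C Complex.I * cx (2 * (pD m * qD m)) := by
    rw [h]
    simp only [map_add, map_sub, map_mul, map_pow, map_ofNat, cx]
    ring_nf
    rw [hI2]
    ring
  obtain ⟨h1, h2⟩ := cx_split h'
  exact ⟨h1, h2⟩

theorem eval_cx (w : Fin 2 → ℝ) (p : MvPolynomial (Fin 2) ℝ) :
    eval (fun i => (w i : ℂ)) (cx p) = ((eval w p : ℝ) : ℂ) := by
  rw [cx, eval_map]
  have h := MvPolynomial.eval₂_comp_left Complex.ofRealHom (RingHom.id ℝ) w p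
  simp only [RingHom.comp_id] at h
  exact h.symm

theorem eval_trig (θ : ℝ) (k : ℕ) :
    eval ![Real.cos θ, Real.sin θ] (pD k) = Real.cos (k * θ) ∧
    eval ![Real.cos θ, Real.sin θ] (qD k) = Real.sin (k * θ) := by
  have h := congrArg (eval fun i => ((![Real.cos θ, Real.sin θ] : Fin 2 → ℝ) i : ℂ)) (cx_main k)
  simp only [eval_add, eval_mul, eval_pow, eval_C, eval_X, eval_cx] at h
  have hv0 : ((![Real.cos θ, Real.sin θ] : Fin 2 → ℝ) 0 : ℂ) = (Real.cos θ : ℂ) := by simp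
  have hv1 : ((![Real.cos θ, Real.sin θ] : Fin 2 → ℝ) 1 : ℂ) = (Real.sin θ : ℂ) := by simp
  rw [hv0, hv1] at h
  have hdm : ((Real.cos θ : ℂ) + Complex.I * (Real.sin θ : ℂ)) ^ k
      = ((Real.cos (k * θ) : ℂ) + Complex.I * (Real.sin (k * θ) : ℂ)) := by
    have e1 : ((Real.cos θ : ℂ) + Complex.I * (Real.sin θ : ℂ)) = Complex.exp (θ * Complex.I) := by
      rw [Complex.exp_mul_I, Complex.ofReal_cos, Complex.ofReal_sin]
      ring
    rw [e1, ← Complex.exp_nat_mul]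
    have : (k : ℂ) * ((θ : ℂ) * Complex.I) = ((k * θ : ℝ) : ℂ) * Complex.I := by
      push_cast; ring
    rw [this, Complex.exp_mul_I, Complex.ofReal_cos, Complex.ofReal_sin]
    ring
  rw [hdm] at h
  constructor
  · have := congrArg Complex.re h
    simpa [Complex.cos_ofReal_re, Complex.sin_ofReal_im, Complex.cos_ofReal_im,
      Complex.sin_ofReal_re, ← Complex.ofReal_mul] using this
  · have := congrArg Complex.im h
    simpa [Complex.cos_ofReal_re, Complex.sin_ofReal_im, Complex.cos_ofReal_im,
      Complex.sin_ofReal_re, ← Complex.ofReal_mul] using this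

lemma degree_fin2 (d : Fin 2 →₀ ℕ) : d.degree = d 0 + d 1 := by
  rw [Finsupp.degree_apply, Finset.sum_subset (Finset.subset_univ _)
    (fun x _ hx => Finsupp.notMem_support_iff.mp hx)]
  exact Fin.sum_univ_two d

theorem pD_hom (k : ℕ) : (pD k).IsHomogeneous k := by
  rw [pD]
  apply MvPolynomial.IsHomogeneous.sum
  intro j hj
  rw [Finset.mem_range] at hj
  have h2 : 2 * j ≤ k := by omega
  have := ((MvPolynomial.isHomogeneous_C (σ := Fin 2)
      ((-1 : ℝ) ^ j * (k.choose (2 * j) : ℝ))).mul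
    (MvPolynomial.isHomogeneous_X_pow 0 (k - 2 * j))).mul
    (MvPolynomial.isHomogeneous_X_pow 1 (2 * j))
  convert this using 1
  omega

theorem qD_hom (k : ℕ) : (qD k).IsHomogeneous k := by
  rw [qD]
  apply MvPolynomial.IsHomogeneous.sum
  intro j hj
  rw [Finset.mem_range] at hj
  have h2 : 2 * j + 1 ≤ k := by omega
  have := ((MvPolynomial.isHomogeneous_C (σ := Fin 2)
      ((-1 : ℝ) ^ j * (k.choose (2 * j + 1) : ℝ))).mul
    (MvPolynomial.isHomogeneous_X_pow 0 (k - (2 * j + 1)))).mul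
    (MvPolynomial.isHomogeneous_X_pow 1 (2 * j + 1))
  convert this using 1
  omega

theorem coeff_mul_homog {a : MvPolynomial (Fin 2) ℝ} {d : ℕ} (ha : a.IsHomogeneous d)
    (u : MvPolynomial (Fin 2) ℝ) {m : Fin 2 →₀ ℕ} (hm : m.degree < d) :
    coeff m (u * a) = 0 := by
  rw [coeff_mul]
  apply Finset.sum_eq_zero
  rintro ⟨m1, m2⟩ hp
  dsimp only
  rw [Finset.HasAntidiagonal.mem_antidiagonal] at hp
  have hdeg : m2.degree ≤ m.degree := by
    rw [← hp]
    simp only [degree_fin2, Finsupp.add_apply]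
    omega
  rw [ha.coeff_eq_zero (by omega), mul_zero]

theorem not_mem_span_pair {a b x : MvPolynomial (Fin 2) ℝ} {d : ℕ}
    (ha : a.IsHomogeneous d) (hb : b.IsHomogeneous d) {m : Fin 2 →₀ ℕ}
    (hm : m.degree < d) (hx : coeff m x ≠ 0) :
    x ∉ Ideal.span ({a, b} : Set (MvPolynomial (Fin 2) ℝ)) := by
  intro hmem
  rw [Ideal.mem_span_pair] at hmem
  obtain ⟨u, v, huv⟩ := hmem
  apply hx
  rw [← huv, coeff_add, coeff_mul_homog ha u hm, coeff_mul_homog hb v hm, add_zero]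

theorem not_mem_span_single {a x : MvPolynomial (Fin 2) ℝ} {d : ℕ}
    (ha : a.IsHomogeneous d) {m : Fin 2 →₀ ℕ}
    (hm : m.degree < d) (hx : coeff m x ≠ 0) :
    x ∉ Ideal.span ({a} : Set (MvPolynomial (Fin 2) ℝ)) := by
  have : ({a} : Set (MvPolynomial (Fin 2) ℝ)) = {a, a} := by simp
  rw [this]
  exact not_mem_span_pair ha ha hm hx

theorem coeff_pD_xk (k : ℕ) : coeff (Finsupp.single 0 k) (pD k) = 1 := by
  rw [pD]
  have hterm : ∀ (c : ℝ) (a b : ℕ), C c * (X 0 : MvPolynomial (Fin 2) ℝ) ^ a * X 1 ^ b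
      = monomial (Finsupp.single 0 a + Finsupp.single 1 b) c := by
    intro c a b
    rw [X_pow_eq_monomial, X_pow_eq_monomial, C_apply, monomial_mul, monomial_mul]
    simp
  simp_rw [hterm, coeff_sum, coeff_monomial]
  rw [Finset.sum_eq_single_of_mem 0 (by simp)]
  · simp
  · intro j _ hj
    rw [if_neg]
    intro heq
    have := DFunLike.congr_fun heq 1
    simp [Finsupp.single_apply] at this
    omega

theorem coeff_qD_xk (k : ℕ) (hk : 1 ≤ k) :
    coeff (Finsupp.single 0 (k - 1) + Finsupp.single 1 1) (qD k) = k := by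
  rw [qD]
  have hterm : ∀ (c : ℝ) (a b : ℕ), C c * (X 0 : MvPolynomial (Fin 2) ℝ) ^ a * X 1 ^ b
      = monomial (Finsupp.single 0 a + Finsupp.single 1 b) c := by
    intro c a b
    rw [X_pow_eq_monomial, X_pow_eq_monomial, C_apply, monomial_mul, monomial_mul]
    simp
  simp_rw [hterm, coeff_sum, coeff_monomial]
  rw [Finset.sum_eq_single_of_mem 0 (by simp; omega)]
  · simp [Nat.choose_one_right]
  · intro j _ hj
    rw [if_neg]
    intro heq
    have := DFunLike.congr_fun heq 1
    simp [Finsupp.single_apply, Finsupp.add_apply] at this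
    omega

theorem memP (k : ℕ) : pD k ∈ Ideal.span ({pD k, qD k} : Set (MvPolynomial (Fin 2) ℝ)) :=
  Ideal.subset_span (by simp)

theorem memQ (k : ℕ) : qD k ∈ Ideal.span ({pD k, qD k} : Set (MvPolynomial (Fin 2) ℝ)) :=
  Ideal.subset_span (by simp)

theorem p_succ_mem (k : ℕ) :
    pD (k + 1) ∈ Ideal.span ({pD k, qD k} : Set (MvPolynomial (Fin 2) ℝ)) := by
  rw [(rec_p k).1]
  exact sub_mem (Ideal.mul_mem_left _ _ (memP k)) (Ideal.mul_mem_left _ _ (memQ k))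

theorem q_succ_mem (k : ℕ) :
    qD (k + 1) ∈ Ideal.span ({pD k, qD k} : Set (MvPolynomial (Fin 2) ℝ)) := by
  rw [(rec_p k).2]
  exact add_mem (Ideal.mul_mem_left _ _ (memP k)) (Ideal.mul_mem_left _ _ (memQ k))

theorem span_succ_le (k : ℕ) :
    Ideal.span ({pD (k+1), qD (k+1)} : Set (MvPolynomial (Fin 2) ℝ))
      ≤ Ideal.span {pD k, qD k} := by
  rw [Ideal.span_le]
  rintro x hx
  rcases hx with rfl | rfl
  · exact p_succ_mem k
  · exact q_succ_mem k

theorem chain_le (j k : ℕ) :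
    Ideal.span ({pD (k+j), qD (k+j)} : Set (MvPolynomial (Fin 2) ℝ))
      ≤ Ideal.span {pD k, qD k} := by
  induction j with
  | zero => exact le_refl _
  | succ j ih => exact le_trans (span_succ_le (k + j)) ih

lemma deg_single0 (k : ℕ) : (Finsupp.single (0 : Fin 2) k).degree = k := by
  rw [degree_fin2]; simp

lemma deg_mu (k : ℕ) :
    (Finsupp.single (0 : Fin 2) (k - 1) + Finsupp.single 1 1).degree = (k - 1) + 1 := by
  rw [degree_fin2]; simp [Finsupp.single_apply]

theorem pD_notmem_pair {k d : ℕ} (h : k < d) :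
    pD k ∉ Ideal.span ({pD d, qD d} : Set (MvPolynomial (Fin 2) ℝ)) :=
  not_mem_span_pair (pD_hom d) (qD_hom d) (by rw [deg_single0]; exact h)
    (by rw [coeff_pD_xk]; norm_num)

theorem pD_notmem_single {k d : ℕ} {a : MvPolynomial (Fin 2) ℝ} (ha : a.IsHomogeneous d)
    (h : k < d) : pD k ∉ Ideal.span ({a} : Set (MvPolynomial (Fin 2) ℝ)) :=
  not_mem_span_single ha (by rw [deg_single0]; exact h)
    (by rw [coeff_pD_xk]; norm_num)


/-- Inclusions among the dihedral Specht ideals: `p_{k+1}, q_{k+1} ∈ (p_k, q_k)` for `k ≥ 1`;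
the chain `I₀ ⊋ I₁ ⊋ ⋯ ⊋ I_{⌊(n−1)/2⌋}` is strictly decreasing; for odd `n`,
`I_{(n−1)/2} ⊋ I_n`; for even `n`, `I_{(n−2)/2} ⊋ I_{n/2}^{Re}, I_{n/2}^{Im}`, the latter two
are incomparable and both strictly contain `I_n`. -/
theorem stmt5 (n : ℕ) (hn : 3 ≤ n) :
    (∀ k : ℕ, 1 ≤ k →
      pD (k + 1) ∈ Ideal.span ({pD k, qD k} : Set (MvPolynomial (Fin 2) ℝ)) ∧
      qD (k + 1) ∈ Ideal.span ({pD k, qD k} : Set (MvPolynomial (Fin 2) ℝ))) ∧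
    (∀ k : ℕ, k < (n - 1) / 2 →
      Ideal.span ({pD (k + 1), qD (k + 1)} : Set (MvPolynomial (Fin 2) ℝ))
        < Ideal.span {pD k, qD k}) ∧
    (Odd n →
      Ideal.span ({qD n} : Set (MvPolynomial (Fin 2) ℝ))
        < Ideal.span {pD ((n - 1) / 2), qD ((n - 1) / 2)}) ∧
    (Even n →
      Ideal.span ({pD (n / 2)} : Set (MvPolynomial (Fin 2) ℝ))
        < Ideal.span {pD ((n - 2) / 2), qD ((n - 2) / 2)} ∧
      Ideal.span ({qD (n / 2)} : Set (MvPolynomial (Fin 2) ℝ))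
        < Ideal.span {pD ((n - 2) / 2), qD ((n - 2) / 2)} ∧
      ¬ Ideal.span ({pD (n / 2)} : Set (MvPolynomial (Fin 2) ℝ)) ≤ Ideal.span {qD (n / 2)} ∧
      ¬ Ideal.span ({qD (n / 2)} : Set (MvPolynomial (Fin 2) ℝ)) ≤ Ideal.span {pD (n / 2)} ∧
      Ideal.span ({qD n} : Set (MvPolynomial (Fin 2) ℝ)) < Ideal.span {pD (n / 2)} ∧
      Ideal.span ({qD n} : Set (MvPolynomial (Fin 2) ℝ)) < Ideal.span {qD (n / 2)}) := by
  refine ⟨fun k _ => ⟨p_succ_mem k, q_succ_mem k⟩, ?_, ?_, ?_⟩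
  · intro k _
    refine lt_of_le_not_ge (span_succ_le k) fun hle => ?_
    exact pD_notmem_pair (Nat.lt_succ_self k) (hle (memP k))
  · intro hodd
    set l := (n - 1) / 2 with hl
    have hln : l + (n - l) = n := by omega
    refine lt_of_le_not_ge ?_ fun hle => ?_
    · refine Ideal.span_le.mpr (Set.singleton_subset_iff.mpr ?_)
      apply chain_le (n - l) l
      rw [hln]
      exact memQ n
    · exact pD_notmem_single (qD_hom n) (by omega) (hle (memP l))
  · intro heven
    have hn4 : 4 ≤ n := by
      rcases heven with ⟨t, ht⟩; omega
    set m := n / 2 with hm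
    have hm2 : 2 ≤ m := by omega
    set m' := (n - 2) / 2 with hm'
    have hmm : m' + 1 = m := by omega
    have h2m : 2 * m = n := by
      rcases heven with ⟨t, ht⟩; omega
    have hPmem : pD m ∈ Ideal.span ({pD m', qD m'} : Set (MvPolynomial (Fin 2) ℝ)) := by
      have := p_succ_mem m'; rwa [hmm] at this
    have hQmem : qD m ∈ Ideal.span ({pD m', qD m'} : Set (MvPolynomial (Fin 2) ℝ)) := by
      have := q_succ_mem m'; rwa [hmm] at this
    have hqn_p : qD n = pD m * (2 * qD m) := by
      have := (double m).2
      rw [h2m] at this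
      rw [this]; ring
    have hqn_q : qD n = qD m * (2 * pD m) := by
      have := (double m).2
      rw [h2m] at this
      rw [this]; ring
    refine ⟨?_, ?_, ?_, ?_, ?_, ?_⟩
    · refine lt_of_le_not_ge (Ideal.span_le.mpr (Set.singleton_subset_iff.mpr hPmem))
        fun hle => ?_
      exact pD_notmem_single (pD_hom m) (show m' < m by omega) (hle (memP m'))
    · refine lt_of_le_not_ge (Ideal.span_le.mpr (Set.singleton_subset_iff.mpr hQmem))
        fun hle => ?_
      exact pD_notmem_single (qD_hom m) (show m' < m by omega) (hle (memP m'))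
    · intro hle
      rw [Ideal.span_singleton_le_span_singleton] at hle
      obtain ⟨c, hc⟩ := hle
      have h1 := (eval_trig 0 m).1
      have h2 := (eval_trig 0 m).2
      simp only [mul_zero, Real.cos_zero, Real.sin_zero] at h1 h2
      rw [hc, map_mul, h2, zero_mul] at h1
      exact one_ne_zero h1.symm
    · intro hle
      rw [Ideal.span_singleton_le_span_singleton] at hle
      obtain ⟨c, hc⟩ := hle
      have hm0 : (m : ℝ) ≠ 0 := by positivity
      have harg : (m : ℝ) * (Real.pi / (2 * m)) = Real.pi / 2 := by
        field_simp
      have h1 := (eval_trig (Real.pi / (2 * m)) m).1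
      have h2 := (eval_trig (Real.pi / (2 * m)) m).2
      rw [harg, Real.cos_pi_div_two] at h1
      rw [harg, Real.sin_pi_div_two] at h2
      rw [hc, map_mul, h1, zero_mul] at h2
      exact one_ne_zero h2.symm
    · refine lt_of_le_not_ge (Ideal.span_singleton_le_span_singleton.mpr ⟨2 * qD m, hqn_p⟩)
        fun hle => ?_
      exact pD_notmem_single (qD_hom n) (show m < n by omega)
        (hle (Ideal.subset_span (Set.mem_singleton _)))
    · refine lt_of_le_not_ge (Ideal.span_singleton_le_span_singleton.mpr ⟨2 * pD m, hqn_q⟩)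
        fun hle => ?_
      · have hmem := hle (Ideal.subset_span (Set.mem_singleton _))
        refine not_mem_span_single (qD_hom n) (m := Finsupp.single 0 (m - 1) + Finsupp.single 1 1)
          ?_ ?_ hmem
        · rw [deg_mu]; omega
        · rw [coeff_qD_xk m (by omega)]
          positivity
end

section
/- Let n ≥ 3. The ideals I₀ = (1), I₁ = (x, y) and I_n = (q_n) of ℝ[x,y] are radical ideals, and if n is even then the ideals I_{n/2}^{Re} = (p_{n/2}) and I_{n/2}^{Im} = (q_{n/2}) are radical ideals as well. -/
open MvPolynomial

/-! ### Auxiliary lemmas -/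

namespace Stmt6Aux

open Complex Finset

/-- Units of a bivariate polynomial ring over a field are constants. -/
lemma isUnit_eq_C {K : Type*} [Field K] {p : MvPolynomial (Fin 2) K} (h : IsUnit p) :
    ∃ c : K, p = C c := by
  set e := finSuccEquiv K 1 with he
  obtain ⟨r, hr, hrp⟩ := Polynomial.isUnit_iff.mp (h.map e)
  set e2 := finSuccEquiv K 0 with he2
  obtain ⟨s, hs, hsp⟩ := Polynomial.isUnit_iff.mp (hr.map e2)
  obtain ⟨a, rfl⟩ : ∃ a : K, s = C a := ⟨constantCoeff s, (eq_C_of_isEmpty s)⟩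
  have hr' : r = C a := by
    apply e2.injective
    rw [← hsp, show (C a : MvPolynomial (Fin 1) K) = algebraMap K _ a from rfl,
      e2.commutes, Polynomial.algebraMap_apply]
    rfl
  refine ⟨a, e.injective ?_⟩
  rw [← hrp, hr', show (C a : MvPolynomial (Fin 2) K) = algebraMap K _ a from rfl,
    e.commutes, Polynomial.algebraMap_apply]
  rfl

lemma primeX0 : Prime (X 0 : MvPolynomial (Fin 2) ℂ) := by
  rw [show (X 0 : MvPolynomial (Fin 2) ℂ) =
      (finSuccEquiv ℂ 1).toRingEquiv.toMulEquiv.symm Polynomial.X by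
    rw [← finSuccEquiv_X_zero (R := ℂ) (n := 1)]
    exact ((finSuccEquiv ℂ 1).toRingEquiv.toMulEquiv.symm_apply_apply _).symm]
  rw [MulEquiv.prime_iff (finSuccEquiv ℂ 1).toRingEquiv.toMulEquiv.symm]
  exact Polynomial.prime_X

/-- The shear automorphism `x ↦ x + c y`, `y ↦ y`. -/
noncomputable def shear (c : ℂ) : MvPolynomial (Fin 2) ℂ ≃ₐ[ℂ] MvPolynomial (Fin 2) ℂ :=
  AlgEquiv.ofAlgHom (aeval ![X 0 + C c * X 1, X 1]) (aeval ![X 0 - C c * X 1, X 1])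
    (by apply MvPolynomial.algHom_ext; intro i; fin_cases i <;> simp [aeval_X])
    (by apply MvPolynomial.algHom_ext; intro i; fin_cases i <;> simp [aeval_X])

/-- The automorphism swapping the two variables. -/
noncomputable def swapE : MvPolynomial (Fin 2) ℂ ≃ₐ[ℂ] MvPolynomial (Fin 2) ℂ :=
  AlgEquiv.ofAlgHom (aeval ![X 1, X 0]) (aeval ![X 1, X 0])
    (by apply MvPolynomial.algHom_ext; intro i; fin_cases i <;> simp [aeval_X])
    (by apply MvPolynomial.algHom_ext; intro i; fin_cases i <;> simp [aeval_X])

lemma prime_shear (c : ℂ) : Prime (X 0 + C c * X 1 : MvPolynomial (Fin 2) ℂ) := by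
  have h : (X 0 + C c * X 1 : MvPolynomial (Fin 2) ℂ)
      = (shear c).toRingEquiv.toMulEquiv (X 0) := by
    show _ = aeval _ (X 0)
    simp [shear, aeval_X]
  rw [h, MulEquiv.prime_iff (shear c).toRingEquiv.toMulEquiv]
  exact primeX0

lemma primeX1 : Prime (X 1 : MvPolynomial (Fin 2) ℂ) := by
  have h : (X 1 : MvPolynomial (Fin 2) ℂ) = swapE.toRingEquiv.toMulEquiv (X 0) := by
    show _ = aeval _ (X 0)
    simp [swapE, aeval_X]
  rw [h, MulEquiv.prime_iff swapE.toRingEquiv.toMulEquiv]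
  exact primeX0

/-- Any nonzero linear form in two variables is prime. -/
lemma prime_linear {a b : ℂ} (h : a ≠ 0 ∨ b ≠ 0) :
    Prime (C a * X 0 + C b * X 1 : MvPolynomial (Fin 2) ℂ) := by
  rcases eq_or_ne a 0 with rfl | ha
  · have hb : b ≠ 0 := h.resolve_left (by simp)
    rw [show (C (0:ℂ) * X 0 + C b * X 1 : MvPolynomial (Fin 2) ℂ) = C b * X 1 by simp]
    exact (associated_unit_mul_left (X 1) (C b) (hb.isUnit.map (C : ℂ →+* _))).symm.prime primeX1
  · have key : (C a * X 0 + C b * X 1 : MvPolynomial (Fin 2) ℂ)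
        = C a * (X 0 + C (b / a) * X 1) := by
      rw [mul_add, ← mul_assoc, ← C_mul, mul_div_cancel₀ _ ha]
    rw [key]
    exact (associated_unit_mul_left _ (C a) (ha.isUnit.map (C : ℂ →+* _))).symm.prime
      (prime_shear (b / a))

/-- `z = x + iy`. -/
noncomputable def zC : MvPolynomial (Fin 2) ℂ := X 0 + C I * X 1
/-- `w = x - iy`. -/
noncomputable def wC : MvPolynomial (Fin 2) ℂ := X 0 - C I * X 1

lemma factor_eq (c : ℂ) :
    zC - C c * wC = C (1 - c) * X 0 + C (I * (1 + c)) * X 1 := by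
  simp only [zC, wC, map_add, map_sub, map_mul, map_one, C_1]
  ring

lemma prime_factor (c : ℂ) : Prime (zC - C c * wC) := by
  rw [factor_eq]
  apply prime_linear
  by_contra hcon
  push_neg at hcon
  obtain ⟨h1, h2⟩ := hcon
  have e1 : c = 1 := (sub_eq_zero.mp h1).symm
  rw [e1] at h2
  norm_num [I_ne_zero] at h2

lemma factor_dvd_factor {c d : ℂ} (h : (zC - C c * wC) ∣ (zC - C d * wC)) : c = d := by
  obtain ⟨g, hg⟩ := h
  have hev := congrArg (eval ![I * (1 + c), -(1 - c)]) hg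
  rw [factor_eq, factor_eq] at hev
  simp only [map_add, map_mul, eval_C, eval_X, Matrix.cons_val_zero, Matrix.cons_val_one,
    Matrix.head_cons] at hev
  have hz : (1 - c) * (I * (1 + c)) + I * (1 + c) * (-(1 - c)) = 0 := by ring
  rw [hz, zero_mul] at hev
  have : 2 * I * (d - c) = 0 := by linear_combination -hev
  have h2 : d - c = 0 := by
    have hI : (2 : ℂ) * I ≠ 0 := by simp [I_ne_zero]
    exact (mul_eq_zero.mp this).resolve_left hI
  exact (sub_eq_zero.mp h2).symm

lemma scalar_prod (m : ℕ) (hm : m ≠ 0) (a b : ℂ) :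
    a ^ m - b ^ m = ∏ j ∈ Finset.range m, (a - Complex.exp (2 * Real.pi * I / m) ^ j * b) := by
  have hζ := Complex.isPrimitiveRoot_exp m hm
  have hpoly := X_pow_sub_C_eq_prod hζ (Nat.pos_of_ne_zero hm) (one_pow m)
  rcases eq_or_ne b 0 with rfl | hb
  · simp [Finset.prod_const, hm]
  · have h := congrArg (Polynomial.eval (a / b)) hpoly
    simp only [Polynomial.eval_sub, Polynomial.eval_pow, Polynomial.eval_X, Polynomial.eval_C,
      Polynomial.eval_prod, Polynomial.eval_mul, mul_one] at h
    have key : ∀ j ∈ Finset.range m, a - exp (2 * Real.pi * I / m) ^ j * b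
        = b * (a / b - exp (2 * Real.pi * I / m) ^ j) := by
      intro j _
      field_simp
    rw [Finset.prod_congr rfl key, Finset.prod_mul_distrib, Finset.prod_const, card_range, ← h]
    rw [div_pow, mul_sub, mul_one, mul_div_cancel₀ _ (pow_ne_zero m hb)]

lemma scalar_even (k : ℕ) (s t : ℂ) :
    (s + I * t) ^ k + (s - I * t) ^ k
      = 2 * ∑ j ∈ range (k / 2 + 1), ((-1 : ℂ) ^ j * (k.choose (2 * j) : ℂ)
          * s ^ (k - 2 * j) * t ^ (2 * j)) := by
  have h1 : (s + I * t) ^ k = ∑ m ∈ range (k + 1), (I * t) ^ m * s ^ (k - m) * k.choose m := by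
    rw [add_comm s (I * t)]; exact add_pow _ _ _
  have h2 : (s - I * t) ^ k = ∑ m ∈ range (k + 1), (-(I * t)) ^ m * s ^ (k - m) * k.choose m := by
    rw [sub_eq_add_neg, add_comm s (-(I * t))]; exact add_pow _ _ _
  rw [h1, h2, ← Finset.sum_add_distrib]
  rw [Finset.sum_congr rfl (fun m _ => (by ring :
    (I * t) ^ m * s ^ (k - m) * (k.choose m : ℂ) + (-(I * t)) ^ m * s ^ (k - m) * (k.choose m : ℂ)
      = ((I * t) ^ m + (-(I * t)) ^ m) * s ^ (k - m) * (k.choose m : ℂ)))]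
  rw [← Finset.sum_filter_of_ne (p := fun m => Even m)
    (fun m _ hne => by
      by_contra hodd
      exact hne (by rw [(Nat.not_even_iff_odd.mp hodd).neg_pow]; ring_nf))]
  rw [Finset.mul_sum]
  refine Finset.sum_bij' (fun m _ => m / 2) (fun j _ => 2 * j) ?_ ?_ ?_ ?_ ?_
  · intro m hm
    simp only [Finset.mem_filter, Finset.mem_range] at hm ⊢
    omega
  · intro j hj
    simp only [Finset.mem_filter, Finset.mem_range] at hj ⊢
    exact ⟨by omega, even_two_mul j⟩
  · intro m hm
    simp only [Finset.mem_filter, Finset.mem_range] at hm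
    obtain ⟨hml, c, rfl⟩ := hm
    show 2 * ((c + c) / 2) = c + c
    omega
  · intro j hj
    show 2 * j / 2 = j
    omega
  · intro m hm
    simp only [Finset.mem_filter, Finset.mem_range] at hm
    obtain ⟨hml, c, rfl⟩ := hm
    beta_reduce
    have hcc : c + c = 2 * c := by omega
    rw [hcc]
    have hd : 2 * c / 2 = c := by omega
    rw [hd]
    have e1 : (I * t) ^ (2 * c) = (-1 : ℂ) ^ c * t ^ (2 * c) := by
      rw [pow_mul, mul_pow, I_sq, neg_one_mul, neg_pow, ← pow_mul]
    have e2 : (-(I * t)) ^ (2 * c) = (I * t) ^ (2 * c) := Even.neg_pow (even_two_mul c) _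
    rw [e2, e1]
    ring

lemma scalar_odd (k : ℕ) (s t : ℂ) :
    (s + I * t) ^ k - (s - I * t) ^ k
      = 2 * I * ∑ j ∈ range ((k + 1) / 2), ((-1 : ℂ) ^ j * (k.choose (2 * j + 1) : ℂ)
          * s ^ (k - (2 * j + 1)) * t ^ (2 * j + 1)) := by
  have h1 : (s + I * t) ^ k = ∑ m ∈ range (k + 1), (I * t) ^ m * s ^ (k - m) * k.choose m := by
    rw [add_comm s (I * t)]; exact add_pow _ _ _
  have h2 : (s - I * t) ^ k = ∑ m ∈ range (k + 1), (-(I * t)) ^ m * s ^ (k - m) * k.choose m := by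
    rw [sub_eq_add_neg, add_comm s (-(I * t))]; exact add_pow _ _ _
  rw [h1, h2, ← Finset.sum_sub_distrib]
  rw [Finset.sum_congr rfl (fun m _ => (by ring :
    (I * t) ^ m * s ^ (k - m) * (k.choose m : ℂ) - (-(I * t)) ^ m * s ^ (k - m) * (k.choose m : ℂ)
      = ((I * t) ^ m - (-(I * t)) ^ m) * s ^ (k - m) * (k.choose m : ℂ)))]
  rw [← Finset.sum_filter_of_ne (p := fun m => Odd m)
    (fun m _ hne => by
      by_contra heven
      rw [Nat.not_odd_iff_even] at heven
      exact hne (by rw [heven.neg_pow]; ring_nf))]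
  rw [Finset.mul_sum]
  refine Finset.sum_bij' (fun m _ => m / 2) (fun j _ => 2 * j + 1) ?_ ?_ ?_ ?_ ?_
  · intro m hm
    simp only [Finset.mem_filter, Finset.mem_range] at hm ⊢
    obtain ⟨hml, c, rfl⟩ := hm
    omega
  · intro j hj
    simp only [Finset.mem_filter, Finset.mem_range] at hj ⊢
    exact ⟨by omega, ⟨j, by omega⟩⟩
  · intro m hm
    simp only [Finset.mem_filter, Finset.mem_range] at hm
    obtain ⟨hml, c, rfl⟩ := hm
    show 2 * ((2 * c + 1) / 2) + 1 = 2 * c + 1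
    omega
  · intro j hj
    show (2 * j + 1) / 2 = j
    omega
  · intro m hm
    simp only [Finset.mem_filter, Finset.mem_range] at hm
    obtain ⟨hml, c, rfl⟩ := hm
    beta_reduce
    have hd : (2 * c + 1) / 2 = c := by omega
    rw [hd]
    have e1 : (I * t) ^ (2 * c + 1) = (-1 : ℂ) ^ c * I * t ^ (2 * c + 1) := by
      rw [mul_pow, pow_succ (I) (2*c), pow_mul, I_sq]
    have e2 : (-(I * t)) ^ (2 * c + 1) = -((I * t) ^ (2 * c + 1)) :=
      Odd.neg_pow ⟨c, by omega⟩ _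
    rw [e2, e1]
    ring

lemma zw_add (k : ℕ) : zC ^ k + wC ^ k = C 2 * map (algebraMap ℝ ℂ) (pD k) := by
  apply MvPolynomial.funext
  intro v
  simp only [zC, wC, pD, map_add, map_sub, map_mul, map_pow, map_sum, eval_X, eval_C,
    MvPolynomial.eval_map, eval₂_sum, eval₂_mul, eval₂_pow, eval₂_C, eval₂_X,
    map_natCast, map_one, map_neg]
  exact scalar_even k (v 0) (v 1)

lemma zw_sub (k : ℕ) : zC ^ k - wC ^ k = C (2 * I) * map (algebraMap ℝ ℂ) (qD k) := by
  apply MvPolynomial.funext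
  intro v
  simp only [zC, wC, qD, map_add, map_sub, map_mul, map_pow, map_sum, eval_X, eval_C,
    MvPolynomial.eval_map, eval₂_sum, eval₂_mul, eval₂_pow, eval₂_C, eval₂_X,
    map_natCast, map_one, map_neg]
  exact scalar_odd k (v 0) (v 1)

lemma zw_prod (m : ℕ) (hm : m ≠ 0) :
    zC ^ m - wC ^ m
      = ∏ j ∈ Finset.range m, (zC - C (Complex.exp (2 * Real.pi * I / m) ^ j) * wC) := by
  apply MvPolynomial.funext
  intro v
  simp only [zC, wC, map_prod, map_add, map_sub, map_mul, map_pow, eval_X, eval_C]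
  exact scalar_prod m hm (v 0 + I * v 1) (v 0 - I * v 1)

lemma sf_zw (m : ℕ) (hm : m ≠ 0) : Squarefree (zC ^ m - wC ^ m) := by
  have hζ := Complex.isPrimitiveRoot_exp m hm
  rw [zw_prod m hm]
  have key : ∀ s : Finset ℕ, (∀ j ∈ s, j < m) →
      Squarefree (∏ j ∈ s, (zC - C (Complex.exp (2 * Real.pi * I / m) ^ j) * wC)) := by
    intro s
    induction s using Finset.induction_on with
    | empty => intro _; simp only [Finset.prod_empty]; exact squarefree_one
    | @insert a s ha ih =>
      intro hs
      rw [Finset.prod_insert ha]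
      refine squarefree_mul_iff.mpr ⟨?_, (prime_factor _).squarefree,
        ih fun j hj => hs j (Finset.mem_insert_of_mem hj)⟩
      refine (prime_factor _).irreducible.isRelPrime_iff_not_dvd.mpr ?_
      intro hdvd
      obtain ⟨l, hl, hdl⟩ := ((prime_factor _).dvd_finset_prod_iff _).mp hdvd
      have hexp := factor_dvd_factor hdl
      have : a = l := hζ.pow_inj (hs a (Finset.mem_insert_self a s))
        (hs l (Finset.mem_insert_of_mem hl)) hexp
      exact ha (this ▸ hl)
  exact key (Finset.range m) (fun j hj => Finset.mem_range.mp hj)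

lemma squarefree_of_map {f : MvPolynomial (Fin 2) ℝ}
    (h : Squarefree (map (algebraMap ℝ ℂ) f)) : Squarefree f := by
  intro d hd
  have hdvd : (map (algebraMap ℝ ℂ) d) * (map (algebraMap ℝ ℂ) d) ∣ map (algebraMap ℝ ℂ) f := by
    rw [← map_mul]
    exact map_dvd (MvPolynomial.map (algebraMap ℝ ℂ)) hd
  have hu := h _ hdvd
  obtain ⟨c, hc⟩ := isUnit_eq_C hu
  have hd_eq : d = C (coeff 0 d) := by
    apply MvPolynomial.ext
    intro m
    rcases eq_or_ne m 0 with rfl | hm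
    · simp
    · have : coeff m (map (algebraMap ℝ ℂ) d) = 0 := by
        rw [hc, coeff_C, if_neg (Ne.symm hm)]
      rw [coeff_map] at this
      rw [coeff_C, if_neg (Ne.symm hm)]
      exact (map_eq_zero_iff (algebraMap ℝ ℂ) (algebraMap ℝ ℂ).injective).mp this
  have hc0 : coeff 0 d ≠ 0 := by
    intro h0
    rw [hd_eq, h0, map_zero, map_zero] at hu
    exact hu.ne_zero rfl
  rw [hd_eq]
  exact IsUnit.of_mul_eq_one (C (coeff 0 d)⁻¹) (by rw [← C_mul, mul_inv_cancel₀ hc0, C_1])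

lemma sq_qD (k : ℕ) (hk : k ≠ 0) : Squarefree (qD k) := by
  apply squarefree_of_map
  have h := sf_zw k hk
  rw [zw_sub] at h
  exact h.of_mul_right

lemma sq_pD (k : ℕ) (hk : k ≠ 0) : Squarefree (pD k) := by
  apply squarefree_of_map
  have h := sf_zw (2 * k) (by omega)
  have hfac : zC ^ (2 * k) - wC ^ (2 * k) = (zC ^ k - wC ^ k) * (zC ^ k + wC ^ k) := by
    rw [mul_comm 2 k, pow_mul, pow_mul]
    ring
  rw [hfac, zw_add] at h
  exact h.of_mul_right.of_mul_right

lemma span_X_ker : Ideal.span ({X 0, X 1} : Set (MvPolynomial (Fin 2) ℝ))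
    = RingHom.ker (constantCoeff : MvPolynomial (Fin 2) ℝ →+* ℝ) := by
  apply le_antisymm
  · rw [Ideal.span_le]
    rintro p (rfl | rfl) <;> simp [RingHom.mem_ker]
  · intro f hf
    rw [RingHom.mem_ker] at hf
    have key : ∀ g : MvPolynomial (Fin 2) ℝ,
        g - C (constantCoeff g) ∈ Ideal.span ({X 0, X 1} : Set (MvPolynomial (Fin 2) ℝ)) := by
      intro g
      induction g using MvPolynomial.induction_on with
      | C a => simp
      | add p q hp hq =>
        have : p + q - C (constantCoeff (p + q)) =
            (p - C (constantCoeff p)) + (q - C (constantCoeff q)) := by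
          rw [map_add, map_add]
          ring
        rw [this]
        exact Ideal.add_mem _ hp hq
      | mul_X p i hp =>
        have : p * X i - C (constantCoeff (p * X i)) = p * X i := by
          simp
        rw [this]
        apply Ideal.mul_mem_left
        fin_cases i
        · exact Ideal.subset_span (Set.mem_insert _ _)
        · exact Ideal.subset_span (Set.mem_insert_of_mem _ rfl)
    have hmem := key f
    rwa [hf, map_zero, sub_zero] at hmem

end Stmt6Aux

/-- The dihedral Specht ideals `I₀ = (1)`, `I₁ = (x,y)` and `I_n = (q_n)` are radical,
and for even `n` so are `I_{n/2}^{Re} = (p_{n/2})` and `I_{n/2}^{Im} = (q_{n/2})`. -/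
theorem stmt6 (n : ℕ) (hn : 3 ≤ n) :
    (Ideal.span ({1} : Set (MvPolynomial (Fin 2) ℝ))).IsRadical ∧
    (Ideal.span ({X 0, X 1} : Set (MvPolynomial (Fin 2) ℝ))).IsRadical ∧
    (Ideal.span ({qD n} : Set (MvPolynomial (Fin 2) ℝ))).IsRadical ∧
    (Even n →
      (Ideal.span ({pD (n / 2)} : Set (MvPolynomial (Fin 2) ℝ))).IsRadical ∧
      (Ideal.span ({qD (n / 2)} : Set (MvPolynomial (Fin 2) ℝ))).IsRadical) := by
  refine ⟨?_, ?_, ?_, fun _ => ⟨?_, ?_⟩⟩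
  · rw [Ideal.span_singleton_one]
    exact le_top
  · rw [Stmt6Aux.span_X_ker]
    exact (RingHom.ker_isPrime _).isRadical
  · exact isRadical_iff_span_singleton.mp (Stmt6Aux.sq_qD n (by omega)).isRadical
  · exact isRadical_iff_span_singleton.mp (Stmt6Aux.sq_pD (n / 2) (by omega)).isRadical
  · exact isRadical_iff_span_singleton.mp (Stmt6Aux.sq_qD (n / 2) (by omega)).isRadical
end

section
/- Let n ≥ 5 and 2 ≤ k ≤ ⌊(n−1)/2⌋. The ideal I_k = (p_k, q_k) of ℝ[x,y] is not a radical ideal; its radical equals the maximal ideal (x, y). -/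
open MvPolynomial

lemma sum_range_even_odd {M : Type*} [AddCommMonoid M] (f : ℕ → M) (n : ℕ) :
    ∑ m ∈ Finset.range n, f m
      = (∑ j ∈ Finset.range ((n + 1) / 2), f (2 * j))
        + ∑ j ∈ Finset.range (n / 2), f (2 * j + 1) := by
  induction n with
  | zero => simp
  | succ n ih =>
    rw [Finset.sum_range_succ, ih]
    rcases Nat.even_or_odd n with ⟨t, rfl⟩ | ⟨t, rfl⟩
    · have e1 : (t + t + 1 + 1) / 2 = t + 1 := by omega
      have e2 : (t + t + 1) / 2 = t := by omega
      have e3 : (t + t) / 2 = t := by omega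
      have e4 : t + t = 2 * t := by ring
      rw [e1, e2, e3, e4]
      simp only [Finset.sum_range_succ]
      abel
    · have e1 : (2 * t + 1 + 1) / 2 = t + 1 := by omega
      have e2 : (2 * t + 1) / 2 = t := by omega
      have e3 : (2 * t + 1 + 1 + 1) / 2 = t + 1 := by omega
      rw [e1, e2, e3]
      simp only [Finset.sum_range_succ]
      abel

lemma master (z : ℂ) (hz : z ^ 2 = -1) (k : ℕ) :
    (MvPolynomial.map (algebraMap ℝ ℂ) (pD k))
      + C z * (MvPolynomial.map (algebraMap ℝ ℂ) (qD k))
    = (X 0 + C z * X 1) ^ k := by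
  rw [add_comm (X 0 : MvPolynomial (Fin 2) ℂ), add_pow,
    sum_range_even_odd (fun m => (C z * X 1 : MvPolynomial (Fin 2) ℂ) ^ m * X 0 ^ (k - m) * (k.choose m : MvPolynomial (Fin 2) ℂ)) (k+1)]
  have e1 : (k + 1 + 1) / 2 = k / 2 + 1 := by omega
  rw [e1]
  simp only [pD, qD, map_sum, map_mul, map_pow, MvPolynomial.map_C,
    MvPolynomial.map_X, Finset.mul_sum]
  have hz2 : (C z : MvPolynomial (Fin 2) ℂ) ^ 2 = -1 := by
    rw [← map_pow, hz, map_neg, map_one]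
  refine congrArg₂ (· + ·) ?_ ?_
  · refine Finset.sum_congr rfl fun j hj => ?_
    rw [mul_pow, show (C z : MvPolynomial (Fin 2) ℂ) ^ (2 * j) = ((C z) ^ 2) ^ j from by
      rw [pow_mul], hz2]
    simp only [map_mul, map_pow, map_neg, map_one, map_natCast]
    ring
  · refine Finset.sum_congr rfl fun j hj => ?_
    rw [mul_pow, show (C z : MvPolynomial (Fin 2) ℂ) ^ (2 * j + 1) = ((C z) ^ 2) ^ j * C z from by
      rw [pow_succ, pow_mul], hz2]
    simp only [map_mul, map_pow, map_neg, map_one, map_natCast]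
    ring

lemma pq_sq (k : ℕ) :
    pD k ^ 2 + qD k ^ 2 = ((X 0 : MvPolynomial (Fin 2) ℝ) ^ 2 + X 1 ^ 2) ^ k := by
  have hinj : Function.Injective
      (MvPolynomial.map (algebraMap ℝ ℂ) :
        MvPolynomial (Fin 2) ℝ → MvPolynomial (Fin 2) ℂ) :=
    MvPolynomial.map_injective _ (algebraMap ℝ ℂ).injective
  apply hinj
  have h1 := master Complex.I Complex.I_sq k
  have h2 := master (-Complex.I) (by rw [neg_pow, Complex.I_sq]; ring) k
  have hu : (C Complex.I : MvPolynomial (Fin 2) ℂ) * C Complex.I = -1 := by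
    rw [← map_mul, Complex.I_mul_I, map_neg, map_one]
  calc map (algebraMap ℝ ℂ) (pD k ^ 2 + qD k ^ 2)
      = (map (algebraMap ℝ ℂ) (pD k) + C Complex.I * map (algebraMap ℝ ℂ) (qD k)) *
        (map (algebraMap ℝ ℂ) (pD k) + C (-Complex.I) * map (algebraMap ℝ ℂ) (qD k)) := by
        rw [map_add, map_pow, map_pow, map_neg]
        linear_combination ((map (algebraMap ℝ ℂ) (qD k)) ^ 2) * hu
    _ = (X 0 + C Complex.I * X 1) ^ k * (X 0 + C (-Complex.I) * X 1) ^ k := by rw [h1, h2]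
    _ = ((X 0 + C Complex.I * X 1) * (X 0 + C (-Complex.I) * X 1)) ^ k := (mul_pow _ _ _).symm
    _ = map (algebraMap ℝ ℂ) (((X 0 : MvPolynomial (Fin 2) ℝ) ^ 2 + X 1 ^ 2) ^ k) := by
        rw [map_pow]
        congr 1
        rw [map_add, map_pow, map_pow, MvPolynomial.map_X, MvPolynomial.map_X, map_neg]
        linear_combination (-((X 1 : MvPolynomial (Fin 2) ℂ)) ^ 2) * hu

lemma pD_modR (k : ℕ) : ∃ (c : ℝ) (g : MvPolynomial (Fin 2) ℝ),
    c ≠ 0 ∧ pD k = C c * X 0 ^ k + ((X 0 : MvPolynomial (Fin 2) ℝ) ^ 2 + X 1 ^ 2) * g := by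
  set c : ℝ := ∑ j ∈ Finset.range (k / 2 + 1), (k.choose (2 * j) : ℝ) with hc
  have hcpos : 0 < c := by
    refine Finset.sum_pos' (fun j _ => by positivity) ⟨0, Finset.mem_range.mpr (by omega), ?_⟩
    simp
  have hdvd : ((X 0 : MvPolynomial (Fin 2) ℝ) ^ 2 + X 1 ^ 2) ∣ (pD k - C c * X 0 ^ k) := by
    rw [hc, map_sum, Finset.sum_mul, pD, ← Finset.sum_sub_distrib]
    refine Finset.dvd_sum fun j hj => ?_
    have hjk : 2 * j ≤ k := by
      have := Finset.mem_range.mp hj; omega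
    have hterm : C ((-1 : ℝ) ^ j * (k.choose (2 * j) : ℝ)) * X 0 ^ (k - 2 * j) * X 1 ^ (2 * j)
        - C ((k.choose (2 * j) : ℝ)) * X 0 ^ k
        = C ((k.choose (2 * j) : ℝ)) * X 0 ^ (k - 2 * j) *
          ((-(X 1 ^ 2)) ^ j - ((X 0 : MvPolynomial (Fin 2) ℝ) ^ 2) ^ j) := by
      rw [show (X 0 : MvPolynomial (Fin 2) ℝ) ^ k = X 0 ^ (k - 2 * j) * X 0 ^ (2 * j) from by
        rw [← pow_add]; congr 1; omega]
      rw [neg_pow ((X 1 : MvPolynomial (Fin 2) ℝ) ^ 2) j, ← pow_mul (X 1) 2 j, ← pow_mul (X 0) 2 j]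
      simp only [C_mul, C_pow, map_neg, map_one]
      ring
    rw [hterm]
    have h1 : (-(X 1 ^ 2) - (X 0 : MvPolynomial (Fin 2) ℝ) ^ 2) ∣
        ((-(X 1 ^ 2)) ^ j - ((X 0 : MvPolynomial (Fin 2) ℝ) ^ 2) ^ j) :=
      sub_dvd_pow_sub_pow _ _ j
    have h2 : ((X 0 : MvPolynomial (Fin 2) ℝ) ^ 2 + X 1 ^ 2) ∣
        (-(X 1 ^ 2) - (X 0 : MvPolynomial (Fin 2) ℝ) ^ 2) := by
      refine ⟨-1, by ring⟩
    exact Dvd.dvd.mul_left (h2.trans h1) _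
  obtain ⟨g, hg⟩ := hdvd
  exact ⟨c, g, ne_of_gt hcpos, by linear_combination hg⟩

/-- For `n ≥ 5` and `2 ≤ k ≤ ⌊(n−1)/2⌋` the ideal `I_k = (p_k, q_k)` is not radical and its
radical is the maximal ideal `(x, y)`. -/
theorem stmt7 (n k : ℕ) (hn : 5 ≤ n) (hk1 : 2 ≤ k) (hk2 : k ≤ (n - 1) / 2) :
    ¬ (Ideal.span ({pD k, qD k} : Set (MvPolynomial (Fin 2) ℝ))).IsRadical ∧
    (Ideal.span ({pD k, qD k} : Set (MvPolynomial (Fin 2) ℝ))).radical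
      = Ideal.span {X 0, X 1} := by
  set I := Ideal.span ({pD k, qD k} : Set (MvPolynomial (Fin 2) ℝ)) with hI
  set M := Ideal.span ({X 0, X 1} : Set (MvPolynomial (Fin 2) ℝ)) with hM
  have hMker : M = RingHom.ker (eval (fun _ => (0:ℝ)) : MvPolynomial (Fin 2) ℝ →+* ℝ) := by
    apply le_antisymm
    · rw [hM, Ideal.span_le]
      rintro f (rfl | rfl) <;> simp [RingHom.mem_ker]
    · intro f hf
      rw [RingHom.mem_ker] at hf
      have hf0 : constantCoeff f = 0 := by rwa [eval_zero'] at hf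
      rw [hM, show ({X 0, X 1} : Set (MvPolynomial (Fin 2) ℝ)) = X '' Set.univ from by
        ext f
        simp [Fin.exists_fin_two, eq_comm]]
      rw [mem_ideal_span_X_image]
      intro m hm
      by_contra hcon
      push_neg at hcon
      have hm0 : m = 0 := by
        ext i
        simpa using hcon i (Set.mem_univ i)
      rw [mem_support_iff, hm0] at hm
      rw [constantCoeff_eq] at hf0
      exact hm hf0
  have hMprime : M.IsPrime := hMker ▸ RingHom.ker_isPrime _
  have hpI : pD k ∈ I := Ideal.subset_span (Or.inl rfl)
  have hqI : qD k ∈ I := Ideal.subset_span (Or.inr rfl)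
  have hrk : ((X 0 : MvPolynomial (Fin 2) ℝ) ^ 2 + X 1 ^ 2) ^ k ∈ I := by
    rw [← pq_sq k, sq (pD k), sq (qD k)]
    exact Ideal.add_mem _ (Ideal.mul_mem_left _ _ hpI) (Ideal.mul_mem_left _ _ hqI)
  have hr : ((X 0 : MvPolynomial (Fin 2) ℝ) ^ 2 + X 1 ^ 2) ∈ I.radical := ⟨k, hrk⟩
  obtain ⟨c, g, hc, hpg⟩ := pD_modR k
  have hX0k : (X 0 : MvPolynomial (Fin 2) ℝ) ^ k ∈ I.radical := by
    have h1 : C c * X 0 ^ k ∈ I.radical := by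
      have he : C c * (X 0 : MvPolynomial (Fin 2) ℝ) ^ k
          = pD k - (X 0 ^ 2 + X 1 ^ 2) * g := by rw [hpg]; ring
      rw [he]
      exact Ideal.sub_mem _ (Ideal.le_radical hpI) (Ideal.mul_mem_right _ _ hr)
    have he2 : (X 0 : MvPolynomial (Fin 2) ℝ) ^ k = C c⁻¹ * (C c * X 0 ^ k) := by
      rw [← mul_assoc, ← C_mul, inv_mul_cancel₀ hc, C_1, one_mul]
    rw [he2]
    exact Ideal.mul_mem_left _ _ h1
  have hX0 : (X 0 : MvPolynomial (Fin 2) ℝ) ∈ I.radical := by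
    have h : (X 0 : MvPolynomial (Fin 2) ℝ) ∈ (I.radical).radical := ⟨k, hX0k⟩
    rwa [Ideal.radical_idem] at h
  have hX1 : (X 1 : MvPolynomial (Fin 2) ℝ) ∈ I.radical := by
    have h2 : (X 1 : MvPolynomial (Fin 2) ℝ) ^ 2 ∈ I.radical := by
      have he : (X 1 : MvPolynomial (Fin 2) ℝ) ^ 2 = (X 0 ^ 2 + X 1 ^ 2) - X 0 * X 0 := by
        ring
      rw [he]
      exact Ideal.sub_mem _ hr (Ideal.mul_mem_left _ _ hX0)
    have h : (X 1 : MvPolynomial (Fin 2) ℝ) ∈ (I.radical).radical := ⟨2, h2⟩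
    rwa [Ideal.radical_idem] at h
  have hx0M : (X 0 : MvPolynomial (Fin 2) ℝ) ∈ M := Ideal.subset_span (Or.inl rfl)
  have hx1M : (X 1 : MvPolynomial (Fin 2) ℝ) ∈ M := Ideal.subset_span (Or.inr rfl)
  have hIM : I ≤ M := by
    rw [hI, Ideal.span_le]
    rintro f (rfl | rfl) <;> rw [SetLike.mem_coe]
    · rw [pD]
      refine Ideal.sum_mem _ fun j hj => ?_
      rcases Nat.eq_zero_or_pos j with rfl | hjpos
      · refine Ideal.mul_mem_right _ _ (Ideal.mul_mem_left _ _ ?_)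
        exact M.pow_mem_of_mem hx0M _ (by omega)
      · exact Ideal.mul_mem_left _ _ (M.pow_mem_of_mem hx1M _ (by omega))
    · rw [qD]
      refine Ideal.sum_mem _ fun j hj => ?_
      exact Ideal.mul_mem_left _ _ (M.pow_mem_of_mem hx1M _ (by omega))
  have hradM : I.radical = M := by
    apply le_antisymm
    · exact le_trans (Ideal.radical_mono hIM) (le_of_eq hMprime.radical)
    · rw [hM, Ideal.span_le]
      rintro f (rfl | rfl) <;> rw [SetLike.mem_coe]
      exacts [hX0, hX1]
  refine ⟨?_, hradM⟩
  intro hrad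
  have hXI : (X 0 : MvPolynomial (Fin 2) ℝ) ∈ I := by
    rw [← Ideal.radical_eq_iff.mpr hrad]
    exact hX0
  set φ := (aeval ![(DualNumber.eps : DualNumber ℝ), 0] :
    MvPolynomial (Fin 2) ℝ →ₐ[ℝ] DualNumber ℝ) with hφ
  have hεk : ∀ m : ℕ, 2 ≤ m → (DualNumber.eps : DualNumber ℝ) ^ m = 0 := by
    intro m hm
    have : m = 2 + (m - 2) := by omega
    rw [this, pow_add, sq, DualNumber.eps_mul_eps, zero_mul]
  have hker : I ≤ RingHom.ker φ.toRingHom := by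
    rw [hI, Ideal.span_le]
    rintro f (rfl | rfl) <;> rw [SetLike.mem_coe, RingHom.mem_ker]
    · show φ (pD k) = 0
      rw [pD, map_sum]
      refine Finset.sum_eq_zero fun j hj => ?_
      rcases Nat.eq_zero_or_pos j with rfl | hjpos
      · simp only [hφ, map_mul, map_pow, aeval_X, aeval_C, Matrix.cons_val_zero,
          Matrix.cons_val_one, Matrix.head_cons]
        rw [hεk (k - 2 * 0) (by omega)]
        simp
      · simp only [hφ, map_mul, map_pow, aeval_X, aeval_C, Matrix.cons_val_zero,
          Matrix.cons_val_one, Matrix.head_cons]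
        rw [zero_pow (by omega : 2 * j ≠ 0)]
        simp
    · show φ (qD k) = 0
      rw [qD, map_sum]
      refine Finset.sum_eq_zero fun j hj => ?_
      simp only [hφ, map_mul, map_pow, aeval_X, aeval_C, Matrix.cons_val_zero,
        Matrix.cons_val_one, Matrix.head_cons]
      rw [zero_pow (by omega : 2 * j + 1 ≠ 0)]
      simp
  have hε0 := hker hXI
  rw [RingHom.mem_ker] at hε0
  have hε0' : (DualNumber.eps : DualNumber ℝ) = 0 := by
    simpa [hφ] using hε0
  have := congrArg TrivSqZeroExt.snd hε0'
  simp [DualNumber.snd_eps] at this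
end

section
/- Let λ ≠ μ be partitions with |λ| + |μ| = n. The isotypic component of K[X] with respect to the irreducible Dₙ-representation 𝕊^{{λ,μ}}, i.e. the sum of all Dₙ-submodules of K[X] isomorphic to 𝕊^{{λ,μ}}, is contained in the D-Specht ideal I_{{λ,μ}}^D. -/
open MvPolynomial

/-- `l` is (the list of parts of) a partition: weakly decreasing positive entries. -/
def IsPtn (l : List ℕ) : Prop := l.Pairwise (· ≥ ·) ∧ ∀ x ∈ l, 0 < x

/-- `(i, c)` (row `i`, column `c`, both 0-indexed) is a cell of the Young diagram of `l`. -/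
def IsCell (l : List ℕ) (p : ℕ × ℕ) : Prop := p.2 < l.getD p.1 0

/-- Length of column `c` (0-indexed) of the Young diagram of `l`. -/
def colLen (l : List ℕ) (c : ℕ) : ℕ := l.countP fun x => decide (c < x)

/-- `(tT, tS)` is a bitableau of shape `(l, m)`: a filling of the two Young diagrams with
the integers `Fin n`, each occurring exactly once. -/
def IsBitableau (n : ℕ) (l m : List ℕ) (tT tS : ℕ × ℕ → Fin n) : Prop :=
  (∀ p q, IsCell l p → IsCell l q → tT p = tT q → p = q) ∧
  (∀ p q, IsCell m p → IsCell m q → tS p = tS q → p = q) ∧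
  (∀ p q, IsCell l p → IsCell m q → tT p ≠ tS q) ∧
  ∀ k : Fin n, (∃ p, IsCell l p ∧ tT p = k) ∨ (∃ p, IsCell m p ∧ tS p = k)

/-- The `S`-Specht polynomial of the tableau `t` of shape `l`, evaluated at the squared
variables: the product over all columns of the Vandermonde determinant of the squares of the
variables indexed by the column entries. -/
noncomputable def speSsq (K : Type*) [CommRing K] (n : ℕ) (l : List ℕ) (t : ℕ × ℕ → Fin n) :
    MvPolynomial (Fin n) K :=
  ∏ c ∈ Finset.range (l.getD 0 0), ∏ i ∈ Finset.range (colLen l c),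
    ∏ j ∈ Finset.range (colLen l c),
      if i < j then X (t (i, c)) ^ 2 - X (t (j, c)) ^ 2 else 1

/-- The product of the variables indexed by the entries of a tableau of shape `l`. -/
noncomputable def prodVars (K : Type*) [CommRing K] (n : ℕ) (l : List ℕ) (t : ℕ × ℕ → Fin n) :
    MvPolynomial (Fin n) K :=
  ∏ c ∈ Finset.range (l.getD 0 0), ∏ i ∈ Finset.range (colLen l c), X (t (i, c))

/-- The `B`-Specht polynomial of the bitableau `(tT, tS)` of shape `(l, m)`. -/
noncomputable def speB (K : Type*) [CommRing K] (n : ℕ) (l m : List ℕ)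
    (tT tS : ℕ × ℕ → Fin n) : MvPolynomial (Fin n) K :=
  speSsq K n l tT * speSsq K n m tS * prodVars K n m tS

/-- The `D`-Specht polynomial of a bitableau of shape `(l, l)`; sign `true` is `+`. -/
noncomputable def speD (K : Type*) [CommRing K] (n : ℕ) (sign : Bool) (l : List ℕ)
    (tT tS : ℕ × ℕ → Fin n) : MvPolynomial (Fin n) K :=
  if sign then speB K n l l tT tS + speB K n l l tS tT
  else speB K n l l tT tS - speB K n l l tS tT

/-- Dipartitions: an unordered pair of partitions, or a partition with a sign
(`true` is `+`, `false` is `−`). -/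
inductive Dipart : Type
  | pair (s : Multiset (List ℕ)) : Dipart
  | signed (l : List ℕ) (sign : Bool) : Dipart

/-- A dipartition of `n`: an unordered pair of distinct partitions whose sizes sum to `n`,
or a signed partition of `n/2` (for even `n`). -/
def Dipart.Valid (n : ℕ) : Dipart → Prop
  | .pair s => ∃ l m : List ℕ, s = {l, m} ∧ l ≠ m ∧ IsPtn l ∧ IsPtn m ∧ l.sum + m.sum = n
  | .signed l _ => IsPtn l ∧ 2 * l.sum = n

/-- The bidominance order on bipartitions: `bidom l m w t` means `(l,m) ⊴_B (w,t)`. -/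
def bidom (l m w t : List ℕ) : Prop :=
  ∀ j : ℕ, 1 ≤ j →
    ((l.take j).sum + (m.take j).sum ≤ (w.take j).sum + (t.take j).sum ∧
      l.getD (j - 1) 0 + ((l.take (j - 1)).sum + (m.take (j - 1)).sum)
        ≤ w.getD (j - 1) 0 + ((w.take (j - 1)).sum + (t.take (j - 1)).sum))

/-- `predD l m t w` means `{l,m} ≼_D {t,w}` for unordered pairs of partitions. -/
def predD (l m t w : List ℕ) : Prop :=
  (bidom l m t w ∨ bidom l m w t) ∧ (bidom m l t w ∨ bidom m l w t)

/-- The didominance relation `⊴_D` on dipartitions. -/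
def didom : Dipart → Dipart → Prop
  | .pair s, .pair s' => ∃ l m t w, s = {l, m} ∧ s' = {t, w} ∧ predD l m t w
  | .pair s, .signed l' _ => ∃ l m, s = {l, m} ∧ predD l m l' l'
  | .signed l' _, .pair s => ∃ t w, s = {t, w} ∧ predD l' l' t w
  | .signed l b, .signed m b' => (l = m ∧ b = b') ∨ (l ≠ m ∧ predD l l m m)

/-- The `B`-Specht ideal of shape `(l, m)`. -/
noncomputable def IdealB (K : Type*) [CommRing K] (n : ℕ) (l m : List ℕ) :
    Ideal (MvPolynomial (Fin n) K) :=
  Ideal.span {f | ∃ tT tS, IsBitableau n l m tT tS ∧ f = speB K n l m tT tS}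

/-- The `D`-Specht ideal of a dipartition.  For an unordered pair `{l,m}` it is generated by
all `B`-Specht polynomials of shapes `(l,m)` and `(m,l)`; for a signed partition it is
generated by the `D`-Specht polynomials. -/
noncomputable def IdealD (K : Type*) [CommRing K] (n : ℕ) :
    Dipart → Ideal (MvPolynomial (Fin n) K)
  | .pair s => Ideal.span
      {f | ∃ l m tT tS, s = {l, m} ∧ IsBitableau n l m tT tS ∧ f = speB K n l m tT tS}
  | .signed lam b => Ideal.span
      {f | ∃ tT tS, IsBitableau n lam lam tT tS ∧ f = speD K n b lam tT tS}

/-- The variety of the `B`-Specht ideal in `Kⁿ`. -/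
def varB (K : Type*) [CommRing K] (n : ℕ) (l m : List ℕ) : Set (Fin n → K) :=
  {x | ∀ f ∈ IdealB K n l m, MvPolynomial.eval x f = 0}

/-- The variety of the `D`-Specht ideal in `Kⁿ`. -/
def varD (K : Type*) [CommRing K] (n : ℕ) (d : Dipart) : Set (Fin n → K) :=
  {x | ∀ f ∈ IdealD K n d, MvPolynomial.eval x f = 0}

/-- The signed-permutation action on `K[X₁,…,Xₙ]`: `X i ↦ ε i · X (σ i)`. -/
noncomputable def dact (K : Type*) [CommRing K] (n : ℕ) (ε : Fin n → ℤˣ)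
    (σ : Equiv.Perm (Fin n)) : MvPolynomial (Fin n) K →ₐ[K] MvPolynomial (Fin n) K :=
  MvPolynomial.aeval fun i => ((ε i : ℤ) : MvPolynomial (Fin n) K) * X (σ i)


section StmtNineAux
open Finset

theorem aux_prod_prime_dvd {R : Type*} [CommRing R] [IsDomain R] {ι : Type*} [DecidableEq ι]
    (s : Finset ι) (p : ι → R) {f : R}
    (hp : ∀ i ∈ s, Prime (p i))
    (hnd : ∀ i ∈ s, ∀ j ∈ s, i ≠ j → ¬ p i ∣ p j)
    (hd : ∀ i ∈ s, p i ∣ f) : (∏ i ∈ s, p i) ∣ f := by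
  induction s using Finset.induction generalizing f with
  | empty => simpa using one_dvd f
  | @insert a s ha ih =>
    obtain ⟨g, rfl⟩ := hd a (mem_insert_self a s)
    rw [Finset.prod_insert ha]
    refine mul_dvd_mul_left _ (ih (fun i hi => hp i (mem_insert_of_mem hi))
      (fun i hi j hj hij => hnd i (mem_insert_of_mem hi) j (mem_insert_of_mem hj) hij)
      (fun i hi => ?_))
    have hia : i ≠ a := fun h => ha (h ▸ hi)
    rcases (hp i (mem_insert_of_mem hi)).2.2 _ _ (hd i (mem_insert_of_mem hi)) with h | h
    · exact absurd h (hnd i (mem_insert_of_mem hi) a (mem_insert_self a s) hia)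
    · exact h

theorem aux_not_dvd_of_eval {K : Type*} [CommRing K] {n : ℕ}
    {p q : MvPolynomial (Fin n) K} (x : Fin n → K)
    (hq : MvPolynomial.eval x q = 0) (hp : MvPolynomial.eval x p ≠ 0) : ¬ q ∣ p := by
  rintro ⟨c, rfl⟩
  exact hp (by rw [map_mul, hq, zero_mul])

theorem aux_notdvd_lin {K : Type*} [Field K] {n : ℕ} {a b c d w : Fin n} {s t : K}
    (ht : t ≠ 0) (hw : w = c ∨ w = d) (hwa : w ≠ a) (hwb : w ≠ b) (hcd : c ≠ d) :
    ¬ (X a + C s * X b : MvPolynomial (Fin n) K) ∣ (X c + C t * X d) := by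
  apply aux_not_dvd_of_eval (fun i => if i = w then 1 else 0)
  · simp only [map_add, map_mul, MvPolynomial.eval_C, MvPolynomial.eval_X]
    rw [if_neg (fun h : a = w => hwa h.symm), if_neg (fun h : b = w => hwb h.symm)]
    ring
  · simp only [map_add, map_mul, MvPolynomial.eval_C, MvPolynomial.eval_X]
    rcases hw with rfl | rfl
    · rw [if_pos rfl, if_neg (fun h : d = w => hcd h.symm)]
      simp
    · rw [if_pos rfl, if_neg (fun h : c = w => hcd h)]
      simpa using ht

theorem aux_notdvd_lin_same {K : Type*} [Field K] {n : ℕ} {a b : Fin n} {s t : K}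
    (hab : a ≠ b) (hst : s ≠ t) :
    ¬ (X a + C s * X b : MvPolynomial (Fin n) K) ∣ (X a + C t * X b) := by
  apply aux_not_dvd_of_eval (fun i => if i = a then -s else 1)
  · simp only [map_add, map_mul, MvPolynomial.eval_C, MvPolynomial.eval_X,
      if_neg (fun h : b = a => hab h.symm)]
    simp
  · simp only [map_add, map_mul, MvPolynomial.eval_C, MvPolynomial.eval_X,
      if_neg (fun h : b = a => hab h.symm)]
    simp only [if_true, ite_true, eq_self_iff_true, mul_one]
    intro h
    have hts : t = s := by linear_combination h
    exact hst hts.symm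

theorem aux_prime_X {K : Type*} [Field K] {n : ℕ} (a : Fin n) :
    Prime (X a : MvPolynomial (Fin n) K) := by
  classical
  let e : Fin n ≃ Option {b : Fin n // b ≠ a} := (Equiv.optionSubtypeNe a).symm
  let φ := (MvPolynomial.renameEquiv K e).trans
    (MvPolynomial.optionEquivLeft K {b : Fin n // b ≠ a})
  have hφ : φ (X a) = Polynomial.X := by
    simp only [φ, AlgEquiv.trans_apply, MvPolynomial.renameEquiv_apply, MvPolynomial.rename_X]
    have he : e a = none := Equiv.optionSubtypeNe_symm_self a
    rw [he, MvPolynomial.optionEquivLeft_X_none]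
  rw [← MulEquiv.prime_iff (φ.toRingEquiv.toMulEquiv)]
  have h2 : φ.toRingEquiv.toMulEquiv (X a) = Polynomial.X := hφ
  rw [h2]
  exact Polynomial.prime_X

theorem aux_prime_lin {K : Type*} [Field K] {n : ℕ} {a b : Fin n} (hab : a ≠ b) (s : K) :
    Prime (X a + C s * X b : MvPolynomial (Fin n) K) := by
  classical
  let u : Fin n → MvPolynomial (Fin n) K := Function.update X a (X a + C s * X b)
  let v : Fin n → MvPolynomial (Fin n) K := Function.update X a (X a - C s * X b)
  have hub : u b = X b := Function.update_of_ne hab.symm _ _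
  have hvb : v b = X b := Function.update_of_ne hab.symm _ _
  have hua : u a = X a + C s * X b := Function.update_self _ _ _
  have hva : v a = X a - C s * X b := Function.update_self _ _ _
  have hFG : (MvPolynomial.aeval u).comp (MvPolynomial.aeval (R := K) v) =
      AlgHom.id K (MvPolynomial (Fin n) K) := by
    apply MvPolynomial.algHom_ext
    intro i
    by_cases hi : i = a
    · rw [hi, AlgHom.comp_apply, MvPolynomial.aeval_X, AlgHom.id_apply]
      show (MvPolynomial.aeval u) (Function.update X a (X a - C s * X b) a) = X a
      rw [Function.update_self, map_sub, map_mul, MvPolynomial.aeval_X, MvPolynomial.aeval_C,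
        MvPolynomial.aeval_X]
      show u a - algebraMap K _ s * u b = X a
      rw [hua, hub, MvPolynomial.algebraMap_eq]
      ring
    · rw [AlgHom.comp_apply, MvPolynomial.aeval_X, AlgHom.id_apply]
      show (MvPolynomial.aeval u) (Function.update X a _ i) = X i
      rw [Function.update_of_ne hi, MvPolynomial.aeval_X]
      show Function.update X a _ i = X i
      rw [Function.update_of_ne hi]
  have hGF : (MvPolynomial.aeval v).comp (MvPolynomial.aeval (R := K) u) =
      AlgHom.id K (MvPolynomial (Fin n) K) := by
    apply MvPolynomial.algHom_ext
    intro i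
    by_cases hi : i = a
    · rw [hi, AlgHom.comp_apply, MvPolynomial.aeval_X, AlgHom.id_apply]
      show (MvPolynomial.aeval v) (Function.update X a (X a + C s * X b) a) = X a
      rw [Function.update_self, map_add, map_mul, MvPolynomial.aeval_X, MvPolynomial.aeval_C,
        MvPolynomial.aeval_X]
      show v a + algebraMap K _ s * v b = X a
      rw [hva, hvb, MvPolynomial.algebraMap_eq]
      ring
    · rw [AlgHom.comp_apply, MvPolynomial.aeval_X, AlgHom.id_apply]
      show (MvPolynomial.aeval v) (Function.update X a _ i) = X i
      rw [Function.update_of_ne hi, MvPolynomial.aeval_X]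
      show Function.update X a _ i = X i
      rw [Function.update_of_ne hi]
  let ψ : MvPolynomial (Fin n) K ≃ₐ[K] MvPolynomial (Fin n) K :=
    AlgEquiv.ofAlgHom (MvPolynomial.aeval u) (MvPolynomial.aeval v) hFG hGF
  have hψ : ψ (X a) = X a + C s * X b := by
    show (MvPolynomial.aeval u) (X a) = _
    rw [MvPolynomial.aeval_X]
    exact hua
  have h1 : Prime (ψ.toRingEquiv.toMulEquiv (X a)) := by
    rw [MulEquiv.prime_iff (ψ.toRingEquiv.toMulEquiv)]
    exact aux_prime_X a
  have h2 : ψ.toRingEquiv.toMulEquiv (X a) = X a + C s * X b := hψ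
  rwa [h2] at h1

theorem aux_dvd_sub_aeval {K : Type*} [Field K] {n : ℕ}
    (u : Fin n → MvPolynomial (Fin n) K) (d : MvPolynomial (Fin n) K)
    (hu : ∀ i, d ∣ (X i - u i)) (f : MvPolynomial (Fin n) K) :
    d ∣ (f - MvPolynomial.aeval u f) := by
  induction f using MvPolynomial.induction_on with
  | C a => simp only [MvPolynomial.aeval_C, MvPolynomial.algebraMap_eq, sub_self, dvd_zero]
  | add p q hp hq =>
    have h : p + q - MvPolynomial.aeval u (p + q)
        = (p - MvPolynomial.aeval u p) + (q - MvPolynomial.aeval u q) := by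
      rw [map_add]; ring
    rw [h]; exact dvd_add hp hq
  | mul_X p i hp =>
    have h : p * X i - MvPolynomial.aeval u (p * X i)
        = p * (X i - u i) + (p - MvPolynomial.aeval u p) * u i := by
      rw [map_mul, MvPolynomial.aeval_X]; ring
    rw [h]
    exact dvd_add ((hu i).mul_left p) (hp.mul_right _)

theorem aux_dvd_of_add_self {K : Type*} [Field K] [CharZero K] {n : ℕ}
    {d f : MvPolynomial (Fin n) K} (h : d ∣ f + f) : d ∣ f := by
  obtain ⟨c, hc⟩ := h
  refine ⟨C (2⁻¹ : K) * c, ?_⟩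
  have h2 : f + f = C (2 : K) * f := by
    have h3 : (C (2:K) : MvPolynomial (Fin n) K) = C 1 + C 1 := by
      rw [← map_add]; norm_num
    rw [h3, MvPolynomial.C_1]; ring
  have h4 : C (2⁻¹ : K) * (C (2:K) * f) = f := by
    rw [← mul_assoc, ← MvPolynomial.C_mul]
    norm_num
  calc f = C (2⁻¹ : K) * (C (2:K) * f) := h4.symm
    _ = C (2⁻¹ : K) * (f + f) := by rw [← h2]
    _ = C (2⁻¹ : K) * (d * c) := by rw [hc]
    _ = d * (C (2⁻¹ : K) * c) := by ring

/-- Column Vandermonde product. -/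
noncomputable def auxColProd {R : Type*} [CommRing R] (N : ℕ) (y : ℕ → R) : R :=
  ∏ i ∈ Finset.range N, ∏ j ∈ Finset.range N, if i < j then y i - y j else 1

theorem auxColProd_congr {R : Type*} [CommRing R] {N : ℕ} {y y' : ℕ → R}
    (h : ∀ i < N, y i = y' i) : auxColProd N y = auxColProd N y' := by
  unfold auxColProd
  refine Finset.prod_congr rfl (fun i hi => Finset.prod_congr rfl (fun j hj => ?_))
  rw [Finset.mem_range] at hi hj
  by_cases hij : i < j
  · rw [if_pos hij, if_pos hij, h i hi, h j hj]
  · rw [if_neg hij, if_neg hij]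

theorem auxColProd_det {R : Type*} [CommRing R] {N : ℕ} (z : ℕ → R) :
    auxColProd N z = (∏ i : Fin N, ∏ j ∈ Finset.Ioi i, (-1 : R)) *
      (Matrix.vandermonde fun i : Fin N => z i).det := by
  rw [Matrix.det_vandermonde, ← Finset.prod_mul_distrib]
  have hIoi : ∀ i : Fin N, (univ.filter (fun j => i < j)) = Finset.Ioi i := by
    intro i; ext j; simp
  unfold auxColProd
  rw [← Fin.prod_univ_eq_prod_range
    (fun i => ∏ j ∈ Finset.range N, if i < j then z i - z j else 1) N]
  refine Finset.prod_congr rfl (fun i _ => ?_)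
  rw [← Fin.prod_univ_eq_prod_range (fun j => if (i : ℕ) < j then z i - z j else 1) N]
  rw [← Finset.prod_mul_distrib]
  have h1 : ∀ j : Fin N, (if (i:ℕ) < (j:ℕ) then z ↑i - z ↑j else 1)
      = (if i < j then z ↑i - z ↑j else 1) := by
    intro j
    by_cases hij : i < j
    · rw [if_pos hij, if_pos (Fin.lt_def.mp hij)]
    · rw [if_neg hij, if_neg (fun hc => hij (Fin.lt_def.mpr hc))]
  rw [Finset.prod_congr rfl (fun j _ => h1 j)]
  rw [← Finset.prod_filter (fun j => i < j) (fun j : Fin N => z ↑i - z ↑j)]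
  rw [hIoi i]
  exact Finset.prod_congr rfl (fun j _ => by ring)

theorem auxColProd_swap {R : Type*} [CommRing R] {N i0 j0 : ℕ} (hij : i0 < j0) (hN : j0 < N)
    (y : ℕ → R) :
    auxColProd N (fun i => y (Equiv.swap i0 j0 i)) = - auxColProd N y := by
  have hi0 : i0 < N := lt_trans hij hN
  set fi : Fin N := ⟨i0, hi0⟩
  set fj : Fin N := ⟨j0, hN⟩
  have hfij : fi ≠ fj := by
    simp only [fi, fj, Ne, Fin.mk.injEq]
    omega
  have hcomp : (fun i : Fin N => y (Equiv.swap i0 j0 ↑i))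
      = (fun i : Fin N => y ↑i) ∘ (Equiv.swap fi fj) := by
    funext i
    simp only [Function.comp_apply]
    congr 1
    by_cases h1 : i = fi
    · subst h1
      rw [Equiv.swap_apply_left, Equiv.swap_apply_left]
    · by_cases h2 : i = fj
      · subst h2
        rw [Equiv.swap_apply_right, Equiv.swap_apply_right]
      · rw [Equiv.swap_apply_of_ne_of_ne h1 h2]
        have hn1 : (i : ℕ) ≠ i0 := fun hc => h1 (Fin.ext hc)
        have hn2 : (i : ℕ) ≠ j0 := fun hc => h2 (Fin.ext hc)
        rw [Equiv.swap_apply_of_ne_of_ne hn1 hn2]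
  have hvdm : Matrix.vandermonde ((fun i : Fin N => y ↑i) ∘ (Equiv.swap fi fj))
      = (Matrix.vandermonde (fun i : Fin N => y ↑i)).submatrix (Equiv.swap fi fj) id := by
    ext i j
    simp [Matrix.vandermonde_apply, Matrix.submatrix_apply]
  calc auxColProd N (fun i => y (Equiv.swap i0 j0 i))
      = (∏ i : Fin N, ∏ j ∈ Finset.Ioi i, (-1 : R)) *
        (Matrix.vandermonde fun i : Fin N => y (Equiv.swap i0 j0 ↑i)).det :=
        auxColProd_det _
    _ = (∏ i : Fin N, ∏ j ∈ Finset.Ioi i, (-1 : R)) *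
        ((Matrix.vandermonde (fun i : Fin N => y ↑i)).submatrix (Equiv.swap fi fj) id).det := by
        rw [show (Matrix.vandermonde fun i : Fin N => y (Equiv.swap i0 j0 ↑i)) = _ from
          hcomp ▸ hvdm]
    _ = - auxColProd N y := by
        rw [Matrix.det_permute, Equiv.Perm.sign_swap hfij, auxColProd_det (fun i : ℕ => y i)]
        push_cast
        ring


theorem aux_colLen_iff {l : List ℕ} (hl : l.Pairwise (· ≥ ·)) (c i : ℕ) :
    i < colLen l c ↔ c < l.getD i 0 := by
  induction l generalizing i with
  | nil => simp [colLen, List.getD]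
  | cons a l ih =>
    have hsort : l.Pairwise (· ≥ ·) := (List.pairwise_cons.mp hl).2
    have hle : ∀ x ∈ l, x ≤ a := (List.pairwise_cons.mp hl).1
    have hcount : ¬ c < a → l.countP (fun x => decide (c < x)) = 0 := by
      intro hca
      refine List.countP_eq_zero.mpr (fun x hx => ?_)
      simpa using le_trans (hle x hx) (not_lt.mp hca)
    cases i with
    | zero =>
      simp only [List.getD_cons_zero]
      unfold colLen
      rw [List.countP_cons]
      by_cases hca : c < a
      · simp [hca]
      · rw [if_neg (by simpa using hca)]
        simp only [add_zero]
        rw [hcount hca]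
        simp [hca]
    | succ i =>
      simp only [List.getD_cons_succ]
      unfold colLen
      rw [List.countP_cons]
      by_cases hca : c < a
      · rw [if_pos (by simpa using hca)]
        rw [show (i + 1 < List.countP (fun x => decide (c < x)) l + 1)
          = (i < colLen l c) from by unfold colLen; simp]
        exact ih hsort i
      · rw [if_neg (by simpa using hca)]
        rw [hcount hca]
        simp only [add_zero]
        constructor
        · omega
        · intro hc
          have h2 := (ih hsort i).mpr hc
          unfold colLen at h2
          rw [hcount hca] at h2
          omega

theorem aux_getD_le_head {l : List ℕ} (hl : l.Pairwise (· ≥ ·)) (i : ℕ) :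
    l.getD i 0 ≤ l.getD 0 0 := by
  cases l with
  | nil => simp [List.getD]
  | cons a l =>
    cases i with
    | zero => exact le_refl _
    | succ i =>
      simp only [List.getD_cons_succ, List.getD_cons_zero]
      by_cases hi : i < l.length
      · have : l.getD i 0 ∈ l := by
          rw [List.getD_eq_getElem _ _ hi]
          exact List.getElem_mem hi
        exact (List.pairwise_cons.mp hl).1 _ this
      · rw [List.getD_eq_default _ _ (not_lt.mp hi)]
        exact Nat.zero_le _

theorem aux_isCell_iff {l : List ℕ} (hl : l.Pairwise (· ≥ ·)) {i c : ℕ} :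
    IsCell l (i, c) ↔ i < colLen l c := (aux_colLen_iff hl c i).symm

theorem aux_cell_lt_ncols {l : List ℕ} (hl : l.Pairwise (· ≥ ·)) {i c : ℕ}
    (h : IsCell l (i, c)) : c < l.getD 0 0 :=
  lt_of_lt_of_le h (aux_getD_le_head hl i)

end StmtNineAux
section StmtNineAux2
open Finset

variable {K : Type*} [CommRing K] {n : ℕ}

theorem aux_speSsq_eq (K : Type*) [CommRing K] (n : ℕ) (l : List ℕ) (t : ℕ × ℕ → Fin n) :
    speSsq K n l t = ∏ c ∈ Finset.range (l.getD 0 0),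
      auxColProd (colLen l c) (fun i => X (t (i, c)) ^ 2) := rfl

theorem aux_dact_X (ε : Fin n → ℤˣ) (σ : Equiv.Perm (Fin n)) (u : Fin n) :
    dact K n ε σ (X u) = ((ε u : ℤ) : MvPolynomial (Fin n) K) * X (σ u) := by
  simp [dact]

theorem aux_cast_sq (ε : ℤˣ) : (((ε : ℤ) : MvPolynomial (Fin n) K)) ^ 2 = 1 := by
  have h1 : (((ε : ℤ) : MvPolynomial (Fin n) K)) ^ 2
      = ((((ε ^ 2 : ℤˣ) : ℤ) : MvPolynomial (Fin n) K)) := by push_cast; ring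
  rw [h1, Int.units_sq]
  simp

theorem aux_dact_X_sq (ε : Fin n → ℤˣ) (σ : Equiv.Perm (Fin n)) (u : Fin n) :
    dact K n ε σ (X u ^ 2) = X (σ u) ^ 2 := by
  rw [map_pow, aux_dact_X, mul_pow, aux_cast_sq, one_mul]

theorem aux_dact_speSsq (ε : Fin n → ℤˣ) (σ : Equiv.Perm (Fin n)) (l : List ℕ)
    (t : ℕ × ℕ → Fin n) :
    dact K n ε σ (speSsq K n l t) = speSsq K n l (fun p => σ (t p)) := by
  rw [aux_speSsq_eq, map_prod, aux_speSsq_eq]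
  refine Finset.prod_congr rfl fun c _ => ?_
  unfold auxColProd
  rw [map_prod]
  refine Finset.prod_congr rfl fun i _ => ?_
  rw [map_prod]
  refine Finset.prod_congr rfl fun j _ => ?_
  rw [apply_ite (dact K n ε σ), map_one, map_sub, aux_dact_X_sq, aux_dact_X_sq]

/-- The cells of the Young diagram of `l`, as `⟨column, row⟩` pairs. -/
def cellFinset (l : List ℕ) : Finset (Σ _ : ℕ, ℕ) :=
  (Finset.range (l.getD 0 0)).sigma (fun c => Finset.range (colLen l c))

theorem aux_prodVars_eq (K : Type*) [CommRing K] (n : ℕ) (m : List ℕ) (t : ℕ × ℕ → Fin n) :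
    prodVars K n m t = ∏ x ∈ cellFinset m, X (t (x.2, x.1)) := by
  unfold prodVars cellFinset
  rw [Finset.prod_sigma]

theorem aux_dact_prodVars (ε : Fin n → ℤˣ) (σ : Equiv.Perm (Fin n)) (m : List ℕ)
    (t : ℕ × ℕ → Fin n) :
    dact K n ε σ (prodVars K n m t) =
      (∏ x ∈ cellFinset m, (((ε (t (x.2, x.1)) : ℤ) : MvPolynomial (Fin n) K))) *
      ∏ x ∈ cellFinset m, X (σ (t (x.2, x.1))) := by
  rw [aux_prodVars_eq, map_prod, ← Finset.prod_mul_distrib]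
  exact Finset.prod_congr rfl fun x _ => aux_dact_X ε σ _

theorem aux_mem_cellFinset {l : List ℕ} (hl : l.Pairwise (· ≥ ·)) {x : Σ _ : ℕ, ℕ} :
    x ∈ cellFinset l ↔ IsCell l (x.2, x.1) := by
  unfold cellFinset
  rw [Finset.mem_sigma, Finset.mem_range, Finset.mem_range]
  constructor
  · rintro ⟨-, h2⟩
    exact (aux_isCell_iff hl).mpr h2
  · intro h
    exact ⟨aux_cell_lt_ncols hl h, (aux_isCell_iff hl).mp h⟩

theorem aux_speSsq_congr {l : List ℕ} (hl : l.Pairwise (· ≥ ·)) {t t' : ℕ × ℕ → Fin n}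
    (h : ∀ p, IsCell l p → t p = t' p) : speSsq K n l t = speSsq K n l t' := by
  rw [aux_speSsq_eq, aux_speSsq_eq]
  refine Finset.prod_congr rfl fun c _ => auxColProd_congr (fun i hi => ?_)
  rw [h (i, c) ((aux_isCell_iff hl).mpr hi)]

set_option maxHeartbeats 1000000 in
theorem aux_speSsq_swap {l : List ℕ} (hl : l.Pairwise (· ≥ ·))
    (t : ℕ × ℕ → Fin n) (hinj : ∀ p q, IsCell l p → IsCell l q → t p = t q → p = q)
    {c0 i0 j0 : ℕ} (hij : i0 < j0) (hj0 : j0 < colLen l c0) :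
    speSsq K n l (fun p => Equiv.swap (t (i0, c0)) (t (j0, c0)) (t p)) = - speSsq K n l t := by
  have cell1 : IsCell l (i0, c0) := (aux_isCell_iff hl).mpr (lt_trans hij hj0)
  have cell2 : IsCell l (j0, c0) := (aux_isCell_iff hl).mpr hj0
  have hc0 : c0 < l.getD 0 0 := aux_cell_lt_ncols hl cell2
  rw [aux_speSsq_eq, aux_speSsq_eq]
  have key : ∀ c ∈ Finset.range (l.getD 0 0),
      auxColProd (colLen l c) (fun i => X ((Equiv.swap (t (i0, c0)) (t (j0, c0))) (t (i, c))) ^ 2)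
      = (if c = c0 then (-1 : MvPolynomial (Fin n) K) else 1) *
        auxColProd (colLen l c) (fun i => X (t (i, c)) ^ 2) := by
    intro c _
    by_cases hc : c = c0
    · rw [if_pos hc, neg_one_mul, hc]
      have he : ∀ i < colLen l c0,
          (X ((Equiv.swap (t (i0, c0)) (t (j0, c0))) (t (i, c0))) ^ 2 : MvPolynomial (Fin n) K)
          = (fun i => X (t (i, c0)) ^ 2) (Equiv.swap i0 j0 i) := by
        intro i hi
        by_cases h1 : i = i0
        · subst h1
          rw [Equiv.swap_apply_left, Equiv.swap_apply_left]
        · by_cases h2 : i = j0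
          · subst h2
            rw [Equiv.swap_apply_right, Equiv.swap_apply_right]
          · have hcell : IsCell l (i, c0) := (aux_isCell_iff hl).mpr hi
            have hne1 : t (i, c0) ≠ t (i0, c0) := fun hc' => by
              have := hinj _ _ hcell cell1 hc'
              simp only [Prod.mk.injEq] at this
              exact h1 this.1
            have hne2 : t (i, c0) ≠ t (j0, c0) := fun hc' => by
              have := hinj _ _ hcell cell2 hc'
              simp only [Prod.mk.injEq] at this
              exact h2 this.1
            rw [Equiv.swap_apply_of_ne_of_ne hne1 hne2,
              Equiv.swap_apply_of_ne_of_ne h1 h2]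
      rw [auxColProd_congr he]
      exact auxColProd_swap hij hj0 (fun i => X (t (i, c0)) ^ 2)
    · rw [if_neg hc, one_mul]
      apply auxColProd_congr
      intro i hi
      have hcell : IsCell l (i, c) := (aux_isCell_iff hl).mpr hi
      have hne1 : t (i, c) ≠ t (i0, c0) := fun hc' => by
        have := hinj _ _ hcell cell1 hc'
        simp only [Prod.mk.injEq] at this
        exact hc this.2
      have hne2 : t (i, c) ≠ t (j0, c0) := fun hc' => by
        have := hinj _ _ hcell cell2 hc'
        simp only [Prod.mk.injEq] at this
        exact hc this.2
      rw [Equiv.swap_apply_of_ne_of_ne hne1 hne2]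
  rw [Finset.prod_congr rfl key, Finset.prod_mul_distrib,
    Finset.prod_ite_eq' (Finset.range (l.getD 0 0)) c0
      (fun _ => (-1 : MvPolynomial (Fin n) K)),
    if_pos (Finset.mem_range.mpr hc0), neg_one_mul]

end StmtNineAux2
section StmtNineAux3
open Finset

variable {K : Type*} [CommRing K] {n : ℕ}

theorem aux_cast_int_C (z : ℤ) :
    ((z : ℤ) : MvPolynomial (Fin n) K) = C ((z : ℤ) : K) :=
  (map_intCast (C : K →+* MvPolynomial (Fin n) K) z).symm

theorem aux_dact_monomial (ε : Fin n → ℤˣ) (α : Fin n →₀ ℕ) (a : K) :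
    dact K n ε 1 (monomial α a) = C (∏ i, ((ε i : ℤ) : K) ^ (α i)) * monomial α a := by
  unfold dact
  rw [MvPolynomial.aeval_monomial]
  have h1 : (α.prod fun i k =>
        (((ε i : ℤ) : MvPolynomial (Fin n) K) * X ((1 : Equiv.Perm (Fin n)) i)) ^ k)
      = (∏ i ∈ α.support, (C ((ε i : ℤ) : K)) ^ (α i)) * ∏ i ∈ α.support, X i ^ (α i) := by
    rw [Finsupp.prod, ← Finset.prod_mul_distrib]
    refine Finset.prod_congr rfl fun i _ => ?_
    rw [Equiv.Perm.one_apply, mul_pow, aux_cast_int_C]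
  rw [h1]
  have h2 : (∏ i ∈ α.support, (C ((ε i : ℤ) : K) : MvPolynomial (Fin n) K) ^ (α i))
      = (C (∏ i, ((ε i : ℤ) : K) ^ (α i)) : MvPolynomial (Fin n) K) := by
    have h3 : ∀ i ∈ α.support, (C ((ε i : ℤ) : K) : MvPolynomial (Fin n) K) ^ (α i)
        = C ((((ε i : ℤ) : K)) ^ (α i) : K) := fun i _ => (map_pow _ _ _).symm
    rw [Finset.prod_congr rfl h3, ← map_prod]
    congr 1
    refine Finset.prod_subset (Finset.subset_univ _) fun i _ hi => ?_
    rw [Finsupp.notMem_support_iff.mp hi, pow_zero]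
  rw [h2, MvPolynomial.monomial_eq, MvPolynomial.algebraMap_eq, Finsupp.prod]
  ring

theorem aux_coeff_dact (ε : Fin n → ℤˣ) (q : MvPolynomial (Fin n) K) (β : Fin n →₀ ℕ) :
    MvPolynomial.coeff β (dact K n ε 1 q)
      = (∏ i, ((ε i : ℤ) : K) ^ (β i)) * MvPolynomial.coeff β q := by
  induction q using MvPolynomial.induction_on' with
  | monomial α a =>
    rw [aux_dact_monomial, MvPolynomial.coeff_C_mul, MvPolynomial.coeff_monomial]
    by_cases hab : α = β
    · subst hab; rfl
    · rw [if_neg hab, mul_zero, mul_zero]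
  | add p q hp hq =>
    rw [map_add, MvPolynomial.coeff_add, MvPolynomial.coeff_add, hp, hq, mul_add]

/-- The sign-flip at two indices. -/
def pairFlip (u v : Fin n) : Fin n → ℤˣ := fun i => if i = u ∨ i = v then -1 else 1

theorem aux_pairFlip_split' {ι : Type*} [DecidableEq ι] {M : Type*} [CommMonoid M]
    {u v : ι} (huv : u ≠ v)
    (s : Finset ι) (F : ι → M) (hF1 : ∀ i ∈ s, i ≠ u → i ≠ v → F i = 1) :
    (∏ i ∈ s, F i) = (if u ∈ s then F u else 1) * (if v ∈ s then F v else 1) := by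
  have h : ∀ i ∈ s, F i = (if i = u then F i else 1) * (if i = v then F i else 1) := by
    intro i hi
    by_cases h1 : i = u
    · subst h1; rw [if_pos rfl, if_neg huv, mul_one]
    · by_cases h2 : i = v
      · subst h2; rw [if_neg h1, if_pos rfl, one_mul]
      · rw [if_neg h1, if_neg h2, hF1 i hi h1 h2, mul_one]
  rw [Finset.prod_congr rfl h, Finset.prod_mul_distrib,
    Finset.prod_ite_eq' s u F, Finset.prod_ite_eq' s v F]

theorem aux_pairFlip_split {M : Type*} [CommMonoid M] (u v : Fin n) (huv : u ≠ v)
    (F : Fin n → M) (hF1 : ∀ i, i ≠ u → i ≠ v → F i = 1) :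
    (∏ i, F i) = F u * F v := by
  rw [aux_pairFlip_split' huv Finset.univ F (fun i _ => hF1 i),
    if_pos (Finset.mem_univ u), if_pos (Finset.mem_univ v)]

theorem aux_pairFlip_prod {u v : Fin n} (huv : u ≠ v) : (∏ i, pairFlip u v i) = 1 := by
  rw [aux_pairFlip_split u v huv (pairFlip u v)
    (fun i h1 h2 => by
      show pairFlip u v i = 1
      unfold pairFlip
      rw [if_neg]
      rintro (h | h) <;> [exact h1 h; exact h2 h])]
  unfold pairFlip
  rw [if_pos (Or.inl rfl), if_pos (Or.inr rfl)]
  norm_num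

theorem aux_pairFlip_pow {u v : Fin n} (huv : u ≠ v) (β : Fin n →₀ ℕ) :
    (∏ i, ((pairFlip u v i : ℤ) : K) ^ (β i)) = (-1 : K) ^ (β u) * (-1 : K) ^ (β v) := by
  rw [aux_pairFlip_split u v huv (fun i => ((pairFlip u v i : ℤ) : K) ^ (β i))
    (fun i h1 h2 => by
      show ((pairFlip u v i : ℤ) : K) ^ (β i) = 1
      unfold pairFlip
      rw [if_neg (by rintro (h | h) <;> [exact h1 h; exact h2 h])]
      norm_num)]
  show ((pairFlip u v u : ℤ) : K) ^ (β u) * ((pairFlip u v v : ℤ) : K) ^ (β v) = _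
  unfold pairFlip
  rw [if_pos (Or.inl rfl), if_pos (Or.inr rfl)]
  norm_num

/-- `0,1`-indicator of a finite set of variables, as an exponent vector. -/
noncomputable def indicFinsupp (A : Finset (Fin n)) : Fin n →₀ ℕ := ∑ j ∈ A, Finsupp.single j 1

theorem aux_indic_apply (A : Finset (Fin n)) (k : Fin n) :
    indicFinsupp A k = if k ∈ A then 1 else 0 := by
  unfold indicFinsupp
  rw [Finset.sum_apply']
  rw [Finset.sum_congr rfl (fun j _ => Finsupp.single_apply)]
  exact Finset.sum_ite_eq' A k (fun _ => 1)

theorem aux_prod_X_eq (A : Finset (Fin n)) :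
    (∏ j ∈ A, X j : MvPolynomial (Fin n) K) = MvPolynomial.monomial (indicFinsupp A) 1 := by
  unfold indicFinsupp
  induction A using Finset.induction with
  | empty => simp
  | @insert a s ha ih =>
    rw [Finset.prod_insert ha, Finset.sum_insert ha, ih, MvPolynomial.X,
      MvPolynomial.monomial_mul, one_mul]

theorem aux_monomial_dvd {β E : Fin n →₀ ℕ} (h : E ≤ β) (c : K) :
    (MvPolynomial.monomial E 1 : MvPolynomial (Fin n) K) ∣ MvPolynomial.monomial β c := by
  refine ⟨MvPolynomial.monomial (β - E) c, ?_⟩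
  rw [MvPolynomial.monomial_mul, one_mul, add_tsub_cancel_of_le h]

/-- Index set for the linear factors of `speSsq`. -/
def pairFinset (l : List ℕ) : Finset ((Σ _ : ℕ, ℕ × ℕ) × Bool) :=
  ((Finset.range (l.getD 0 0)).sigma fun c =>
    ((Finset.range (colLen l c)) ×ˢ (Finset.range (colLen l c))).filter
      fun p => p.1 < p.2) ×ˢ (Finset.univ : Finset Bool)

noncomputable def pairFactor (K : Type*) [CommRing K] (n : ℕ) (t : ℕ × ℕ → Fin n)
    (z : (Σ _ : ℕ, ℕ × ℕ) × Bool) : MvPolynomial (Fin n) K :=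
  X (t (z.1.2.1, z.1.1)) + C (if z.2 then (1 : K) else -1) * X (t (z.1.2.2, z.1.1))

theorem aux_lt_head_of_colLen_pos {l : List ℕ} (hl : l.Pairwise (· ≥ ·)) {c : ℕ}
    (h : 0 < colLen l c) : c < l.getD 0 0 := by
  unfold colLen at h
  rw [List.countP_pos_iff] at h
  obtain ⟨x, hx, hcx⟩ := h
  have hcx' : c < x := by simpa using hcx
  refine lt_of_lt_of_le hcx' ?_
  cases l with
  | nil => simp at hx
  | cons a l =>
    rcases List.mem_cons.mp hx with rfl | hx'
    · simp
    · simpa using (List.pairwise_cons.mp hl).1 _ hx'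

theorem aux_mem_pairFinset {l : List ℕ} (hl : l.Pairwise (· ≥ ·))
    {z : (Σ _ : ℕ, ℕ × ℕ) × Bool} :
    z ∈ pairFinset l ↔ z.1.2.1 < z.1.2.2 ∧ z.1.2.2 < colLen l z.1.1 := by
  unfold pairFinset
  rw [Finset.mem_product, Finset.mem_sigma, Finset.mem_filter, Finset.mem_product]
  simp only [Finset.mem_range, Finset.mem_univ, and_true]
  constructor
  · rintro ⟨-, ⟨-, hj⟩, hij⟩
    exact ⟨hij, hj⟩
  · rintro ⟨hij, hj⟩
    exact ⟨aux_lt_head_of_colLen_pos hl (lt_of_le_of_lt (Nat.zero_le _) hj),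
      ⟨lt_trans hij hj, hj⟩, hij⟩

theorem aux_speSsq_factor (l : List ℕ) (t : ℕ × ℕ → Fin n) :
    speSsq K n l t = ∏ z ∈ pairFinset l, pairFactor K n t z := by
  unfold pairFinset
  rw [Finset.prod_product]
  have h1 : ∀ x : (Σ _ : ℕ, ℕ × ℕ), (∏ y ∈ (Finset.univ : Finset Bool), pairFactor K n t (x, y))
      = X (t (x.2.1, x.1)) ^ 2 - X (t (x.2.2, x.1)) ^ 2 := by
    intro x
    rw [show (Finset.univ : Finset Bool) = {true, false} from rfl]
    rw [Finset.prod_insert (by simp), Finset.prod_singleton]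
    unfold pairFactor
    simp
    ring
  rw [Finset.prod_congr rfl (fun x _ => h1 x), Finset.prod_sigma]
  rw [aux_speSsq_eq]
  refine Finset.prod_congr rfl fun c _ => ?_
  rw [Finset.prod_filter, Finset.prod_product]
  rfl

end StmtNineAux3
section StmtNineAux4
open Finset

variable {K : Type*} {n : ℕ}

theorem aux_perm_one_comp {α : Type*} (t : α → Fin n) :
    (fun p => (1 : Equiv.Perm (Fin n)) (t p)) = t := by
  funext p
  simp

/-- Main divisibility extraction: if `f` is (sign-)antisymmetric under the
(signed) swap of `a` and `b`, then the corresponding linear form divides `f`. -/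
theorem aux_swap_dvd [Field K] [CharZero K] {a b : Fin n} (hab : a ≠ b) (sgn : Bool)
    (f : MvPolynomial (Fin n) K)
    (hdf : dact K n (if sgn then pairFlip a b else fun _ => 1) (Equiv.swap a b) f
      = (-1 : K) • f) :
    (X a + C (if sgn then (1 : K) else -1) * X b) ∣ f := by
  set ε : Fin n → ℤˣ := if sgn then pairFlip a b else fun _ => 1 with hε
  set σ : Equiv.Perm (Fin n) := Equiv.swap a b with hσ
  set d : MvPolynomial (Fin n) K := X a + C (if sgn then (1 : K) else -1) * X b with hd
  have hsub : ∀ i, d ∣ (X i - (((ε i : ℤ) : MvPolynomial (Fin n) K) * X (σ i))) := by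
    intro i
    by_cases hia : i = a
    · subst hia
      have hσa : σ i = b := Equiv.swap_apply_left i b
      rw [hσa]
      cases sgn with
      | true =>
        have hεa : ε i = -1 := by rw [hε]; show pairFlip i b i = -1; unfold pairFlip; rw [if_pos (Or.inl rfl)]
        rw [hεa, hd]
        refine Dvd.intro 1 ?_
        push_cast
        simp only [if_true, MvPolynomial.C_1]
        ring
      | false =>
        have hεa : ε i = 1 := rfl
        rw [hεa, hd]
        refine Dvd.intro 1 ?_
        push_cast
        simp only [if_false, map_neg, MvPolynomial.C_1]
        ring
    · by_cases hib : i = b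
      · subst hib
        have hσb : σ i = a := Equiv.swap_apply_right a i
        rw [hσb]
        cases sgn with
        | true =>
          have hεb : ε i = -1 := by rw [hε]; show pairFlip a i i = -1; unfold pairFlip; rw [if_pos (Or.inr rfl)]
          rw [hεb, hd]
          refine Dvd.intro 1 ?_
          push_cast
          simp only [if_true, MvPolynomial.C_1]
          ring
        | false =>
          have hεb : ε i = 1 := rfl
          rw [hεb, hd]
          refine Dvd.intro (-1) ?_
          push_cast
          simp only [if_false, map_neg, MvPolynomial.C_1]
          ring
      · have hσi : σ i = i := Equiv.swap_apply_of_ne_of_ne hia hib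
        have hεi : ε i = 1 := by
          cases sgn with
          | true =>
            rw [hε]; show pairFlip a b i = 1; unfold pairFlip
            rw [if_neg (by rintro (h | h) <;> [exact hia h; exact hib h])]
          | false => rfl
        rw [hσi, hεi]
        push_cast
        simp only [one_mul, sub_self, dvd_zero]
  have hd2 : d ∣ (f - MvPolynomial.aeval
      (fun i => ((ε i : ℤ) : MvPolynomial (Fin n) K) * X (σ i)) f) :=
    aux_dvd_sub_aeval _ d hsub f
  have hda : (MvPolynomial.aeval
      (fun i => ((ε i : ℤ) : MvPolynomial (Fin n) K) * X (σ i))) f = dact K n ε σ f := rfl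
  rw [hda, hdf, neg_one_smul, sub_neg_eq_add] at hd2
  exact aux_dvd_of_add_self hd2

theorem aux_dact_prodVars' [CommRing K] (ε : Fin n → ℤˣ) (σ : Equiv.Perm (Fin n))
    (m : List ℕ) (t : ℕ × ℕ → Fin n)
    (hinj : ∀ x ∈ cellFinset m, ∀ y ∈ cellFinset m, t (x.2, x.1) = t (y.2, y.1) → x = y) :
    dact K n ε σ (prodVars K n m t) =
      (∏ j ∈ (cellFinset m).image (fun x => t (x.2, x.1)), ((ε j : ℤ) : MvPolynomial (Fin n) K)) *
      ∏ j ∈ (cellFinset m).image (fun x => t (x.2, x.1)), X (σ j) := by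
  rw [Finset.prod_image hinj, Finset.prod_image hinj]
  exact aux_dact_prodVars ε σ m t

theorem aux_prod_X_swap [CommRing K] {A : Finset (Fin n)} {a b : Fin n}
    (ha : a ∈ A) (hb : b ∈ A) :
    (∏ j ∈ A, (X (Equiv.swap a b j) : MvPolynomial (Fin n) K)) = ∏ j ∈ A, X j := by
  have hinj : Set.InjOn (Equiv.swap a b) A := fun x _ y _ h => (Equiv.swap a b).injective h
  have himg : A.image (Equiv.swap a b) = A := by
    ext x
    rw [Finset.mem_image]
    constructor
    · rintro ⟨y, hy, rfl⟩
      by_cases h1 : y = a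
      · subst h1; rw [Equiv.swap_apply_left]; exact hb
      · by_cases h2 : y = b
        · subst h2; rw [Equiv.swap_apply_right]; exact ha
        · rwa [Equiv.swap_apply_of_ne_of_ne h1 h2]
    · intro hx
      refine ⟨Equiv.swap a b x, ?_, Equiv.swap_apply_self a b x⟩
      by_cases h1 : x = a
      · subst h1; rw [Equiv.swap_apply_left]; exact hb
      · by_cases h2 : x = b
        · subst h2; rw [Equiv.swap_apply_right]; exact ha
        · rwa [Equiv.swap_apply_of_ne_of_ne h1 h2]
  calc (∏ j ∈ A, (X (Equiv.swap a b j) : MvPolynomial (Fin n) K))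
      = ∏ j ∈ A.image (Equiv.swap a b), X j := (Finset.prod_image (fun x hx y hy h => hinj hx hy h)).symm
    _ = ∏ j ∈ A, X j := by rw [himg]

theorem aux_witness {lst : List ℕ} (hl : lst.Pairwise (· ≥ ·)) (t : ℕ × ℕ → Fin n)
    (hinj : ∀ p q, IsCell lst p → IsCell lst q → t p = t q → p = q)
    {x x' : Σ _ : ℕ, ℕ × ℕ}
    (hx : x.2.1 < x.2.2 ∧ x.2.2 < colLen lst x.1)
    (hx' : x'.2.1 < x'.2.2 ∧ x'.2.2 < colLen lst x'.1)
    (hne : x ≠ x') :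
    ∃ w : Fin n, (w = t (x'.2.1, x'.1) ∨ w = t (x'.2.2, x'.1)) ∧
      w ≠ t (x.2.1, x.1) ∧ w ≠ t (x.2.2, x.1) := by
  obtain ⟨c, i, j⟩ := x
  obtain ⟨c', i', j'⟩ := x'
  simp only at hx hx' ⊢
  have hcell_i : IsCell lst (i, c) := (aux_isCell_iff hl).mpr (lt_trans hx.1 hx.2)
  have hcell_j : IsCell lst (j, c) := (aux_isCell_iff hl).mpr hx.2
  have hcell_i' : IsCell lst (i', c') := (aux_isCell_iff hl).mpr (lt_trans hx'.1 hx'.2)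
  have hcell_j' : IsCell lst (j', c') := (aux_isCell_iff hl).mpr hx'.2
  have hnec : ¬ (c = c' ∧ i = i' ∧ j = j') := by
    rintro ⟨rfl, rfl, rfl⟩
    exact hne rfl
  by_cases hA : (i', c') ≠ (i, c) ∧ (i', c') ≠ (j, c)
  · refine ⟨t (i', c'), Or.inl rfl, ?_, ?_⟩
    · intro hval
      exact hA.1 (hinj _ _ hcell_i' hcell_i hval)
    · intro hval
      exact hA.2 (hinj _ _ hcell_i' hcell_j hval)
  · refine ⟨t (j', c'), Or.inr rfl, ?_, ?_⟩
    · intro hval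
      have h1 := hinj _ _ hcell_j' hcell_i hval
      push_neg at hA
      simp only [Prod.mk.injEq] at h1
      by_cases h2 : (i', c') = (i, c)
      · simp only [Prod.mk.injEq] at h2
        omega
      · have h3 := hA h2
        simp only [Prod.mk.injEq] at h3
        omega
    · intro hval
      have h1 := hinj _ _ hcell_j' hcell_j hval
      push_neg at hA
      simp only [Prod.mk.injEq] at h1
      by_cases h2 : (i', c') = (i, c)
      · simp only [Prod.mk.injEq] at h2
        omega
      · have h3 := hA h2
        simp only [Prod.mk.injEq] at h3
        omega

end StmtNineAux4
section StmtNineAux5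
open Finset

set_option maxHeartbeats 1000000 in
theorem aux_gen_mem (K : Type*) [Field K] [CharZero K] (n : ℕ) (l m : List ℕ)
    (hl : l.Pairwise (· ≥ ·)) (hm : m.Pairwise (· ≥ ·)) (tT tS : ℕ × ℕ → Fin n)
    (hbt : IsBitableau n l m tT tS) (f : MvPolynomial (Fin n) K)
    (hrel : ∀ (ε : Fin n → ℤˣ) (σ : Equiv.Perm (Fin n)), (∏ i, ε i) = 1 → ∀ c : K,
      dact K n ε σ (speB K n l m tT tS) = c • speB K n l m tT tS → dact K n ε σ f = c • f) :
    f ∈ IdealD K n (Dipart.pair {l, m}) := by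
  classical
  obtain ⟨injT, injS, hdisj, hcover⟩ := id hbt
  set A : Finset (Fin n) := (cellFinset m).image (fun x => tS (x.2, x.1)) with hA
  set B : Finset (Fin n) := (cellFinset l).image (fun x => tT (x.2, x.1)) with hB
  -- membership characterizations
  have hmemA : ∀ k, k ∈ A ↔ ∃ p, IsCell m p ∧ tS p = k := by
    intro k
    rw [hA, Finset.mem_image]
    constructor
    · rintro ⟨x, hx, rfl⟩
      exact ⟨(x.2, x.1), (aux_mem_cellFinset hm).mp hx, rfl⟩
    · rintro ⟨p, hp, rfl⟩
      refine ⟨⟨p.2, p.1⟩, (aux_mem_cellFinset hm).mpr (by simpa using hp), by simp⟩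
  have hmemB : ∀ k, k ∈ B ↔ ∃ p, IsCell l p ∧ tT p = k := by
    intro k
    rw [hB, Finset.mem_image]
    constructor
    · rintro ⟨x, hx, rfl⟩
      exact ⟨(x.2, x.1), (aux_mem_cellFinset hl).mp hx, rfl⟩
    · rintro ⟨p, hp, rfl⟩
      refine ⟨⟨p.2, p.1⟩, (aux_mem_cellFinset hl).mpr (by simpa using hp), by simp⟩
  have hnotB : ∀ k, k ∈ A → k ∉ B := by
    intro k hkA hkB
    obtain ⟨p, hp, hpk⟩ := (hmemA k).mp hkA
    obtain ⟨q, hq, hqk⟩ := (hmemB k).mp hkB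
    exact hdisj q p hq hp (hqk.trans hpk.symm)
  have hBcompl : B = Finset.univ \ A := by
    ext k
    rw [Finset.mem_sdiff]
    constructor
    · intro hkB
      refine ⟨Finset.mem_univ _, fun hkA => hnotB k hkA hkB⟩
    · rintro ⟨-, hkA⟩
      rcases hcover k with ⟨p, hp, hpk⟩ | ⟨p, hp, hpk⟩
      · exact (hmemB k).mpr ⟨p, hp, hpk⟩
      · exact absurd ((hmemA k).mpr ⟨p, hp, hpk⟩) hkA
  have hinjS' : ∀ x ∈ cellFinset m, ∀ y ∈ cellFinset m,
      tS (x.2, x.1) = tS (y.2, y.1) → x = y := by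
    intro x hx y hy hval
    have := injS _ _ ((aux_mem_cellFinset hm).mp hx) ((aux_mem_cellFinset hm).mp hy) hval
    simp only [Prod.mk.injEq] at this
    exact Sigma.ext this.2 (heq_of_eq this.1)
  have hinjT' : ∀ x ∈ cellFinset l, ∀ y ∈ cellFinset l,
      tT (x.2, x.1) = tT (y.2, y.1) → x = y := by
    intro x hx y hy hval
    have := injT _ _ ((aux_mem_cellFinset hl).mp hx) ((aux_mem_cellFinset hl).mp hy) hval
    simp only [Prod.mk.injEq] at this
    exact Sigma.ext this.2 (heq_of_eq this.1)
  have hPA : prodVars K n m tS = ∏ j ∈ A, X j := by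
    rw [aux_prodVars_eq, hA, Finset.prod_image hinjS']
  have hPB : prodVars K n l tT = ∏ j ∈ B, X j := by
    rw [aux_prodVars_eq, hB, Finset.prod_image hinjT']
  -- T-pair relations
  have hfT : ∀ (c0 i0 j0 : ℕ), i0 < j0 → j0 < colLen l c0 → ∀ sgn : Bool,
      (X (tT (i0, c0)) + C (if sgn then (1:K) else -1) * X (tT (j0, c0))) ∣ f := by
    intro c0 i0 j0 hij hj0 sgn
    have cell1 : IsCell l (i0, c0) := (aux_isCell_iff hl).mpr (lt_trans hij hj0)
    have cell2 : IsCell l (j0, c0) := (aux_isCell_iff hl).mpr hj0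
    have hab : tT (i0, c0) ≠ tT (j0, c0) := by
      intro hval
      have := injT _ _ cell1 cell2 hval
      simp only [Prod.mk.injEq] at this
      omega
    set a := tT (i0, c0)
    set b := tT (j0, c0)
    set ε : Fin n → ℤˣ := if sgn then pairFlip a b else fun _ => 1 with hε
    set σ : Equiv.Perm (Fin n) := Equiv.swap a b with hσ
    have hprodε : (∏ i, ε i) = 1 := by
      cases sgn with
      | true => exact aux_pairFlip_prod hab
      | false => exact Finset.prod_const_one
    have hεA : ∀ j ∈ A, ε j = 1 := by
      intro j hj
      obtain ⟨p, hp, rfl⟩ := (hmemA j).mp hj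
      cases sgn with
      | true =>
        show pairFlip a b (tS p) = 1
        unfold pairFlip
        rw [if_neg]
        rintro (h | h)
        · exact hdisj _ _ cell1 hp h.symm
        · exact hdisj _ _ cell2 hp h.symm
      | false => rfl
    have hσA : ∀ j ∈ A, σ j = j := by
      intro j hj
      obtain ⟨p, hp, rfl⟩ := (hmemA j).mp hj
      exact Equiv.swap_apply_of_ne_of_ne
        (fun h => hdisj _ _ cell1 hp h.symm) (fun h => hdisj _ _ cell2 hp h.symm)
    have hdg : dact K n ε σ (speB K n l m tT tS) = (-1 : K) • speB K n l m tT tS := by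
      unfold speB
      rw [map_mul, map_mul, aux_dact_speSsq, aux_dact_speSsq,
        aux_dact_prodVars' ε σ m tS hinjS', ← hA]
      rw [aux_speSsq_swap hl tT injT hij hj0]
      rw [aux_speSsq_congr hm (t := fun p => σ (tS p)) (t' := tS) (fun p hp => hσA _ ((hmemA _).mpr ⟨p, hp, rfl⟩))]
      have h1 : (∏ j ∈ A, ((ε j : ℤ) : MvPolynomial (Fin n) K)) = 1 := by
        refine Finset.prod_eq_one fun j hj => ?_
        rw [hεA j hj]
        simp
      have h2 : (∏ j ∈ A, (X (σ j) : MvPolynomial (Fin n) K)) = ∏ j ∈ A, X j :=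
        Finset.prod_congr rfl fun j hj => by rw [hσA j hj]
      rw [h1, h2, ← hPA, one_mul, neg_one_smul]
      ring
    exact aux_swap_dvd hab sgn f (hrel ε σ hprodε (-1 : K) hdg)
  -- S-pair relations
  have hfS : ∀ (c0 i0 j0 : ℕ), i0 < j0 → j0 < colLen m c0 → ∀ sgn : Bool,
      (X (tS (i0, c0)) + C (if sgn then (1:K) else -1) * X (tS (j0, c0))) ∣ f := by
    intro c0 i0 j0 hij hj0 sgn
    have cell1 : IsCell m (i0, c0) := (aux_isCell_iff hm).mpr (lt_trans hij hj0)
    have cell2 : IsCell m (j0, c0) := (aux_isCell_iff hm).mpr hj0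
    have hab : tS (i0, c0) ≠ tS (j0, c0) := by
      intro hval
      have := injS _ _ cell1 cell2 hval
      simp only [Prod.mk.injEq] at this
      omega
    set a := tS (i0, c0)
    set b := tS (j0, c0)
    have haA : a ∈ A := (hmemA a).mpr ⟨_, cell1, rfl⟩
    have hbA : b ∈ A := (hmemA b).mpr ⟨_, cell2, rfl⟩
    set ε : Fin n → ℤˣ := if sgn then pairFlip a b else fun _ => 1 with hε
    set σ : Equiv.Perm (Fin n) := Equiv.swap a b with hσ
    have hprodε : (∏ i, ε i) = 1 := by
      cases sgn with
      | true => exact aux_pairFlip_prod hab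
      | false => exact Finset.prod_const_one
    have hσB : ∀ p, IsCell l p → σ (tT p) = tT p := by
      intro p hp
      exact Equiv.swap_apply_of_ne_of_ne
        (fun h => hdisj _ _ hp cell1 h) (fun h => hdisj _ _ hp cell2 h)
    have hdg : dact K n ε σ (speB K n l m tT tS) = (-1 : K) • speB K n l m tT tS := by
      unfold speB
      rw [map_mul, map_mul, aux_dact_speSsq, aux_dact_speSsq,
        aux_dact_prodVars' ε σ m tS hinjS', ← hA]
      rw [aux_speSsq_congr hl (t := fun p => σ (tT p)) (t' := tT) (fun p hp => hσB p hp)]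
      rw [aux_speSsq_swap hm tS injS hij hj0]
      have h1 : (∏ j ∈ A, ((ε j : ℤ) : MvPolynomial (Fin n) K)) = 1 := by
        cases sgn with
        | true =>
          show (∏ j ∈ A, (((pairFlip a b j : ℤˣ) : ℤ) : MvPolynomial (Fin n) K)) = 1
          rw [aux_pairFlip_split' hab A
            (fun j => (((pairFlip a b j : ℤˣ) : ℤ) : MvPolynomial (Fin n) K))
            (fun j _ h1 h2 => by
              show (((pairFlip a b j : ℤˣ) : ℤ) : MvPolynomial (Fin n) K) = 1
              unfold pairFlip
              rw [if_neg (by rintro (h | h) <;> [exact h1 h; exact h2 h])]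
              simp)]
          rw [if_pos haA, if_pos hbA]
          show ((((pairFlip a b a : ℤˣ) : ℤ) : MvPolynomial (Fin n) K)) *
            ((((pairFlip a b b : ℤˣ) : ℤ) : MvPolynomial (Fin n) K)) = 1
          unfold pairFlip
          rw [if_pos (Or.inl rfl), if_pos (Or.inr rfl)]
          norm_num
        | false =>
          show (∏ j ∈ A, ((((1:ℤˣ) : ℤˣ) : ℤ) : MvPolynomial (Fin n) K)) = 1
          refine Finset.prod_eq_one fun j hj => by simp
      have h2 : (∏ j ∈ A, (X (σ j) : MvPolynomial (Fin n) K)) = ∏ j ∈ A, X j :=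
        aux_prod_X_swap haA hbA
      rw [h1, h2, ← hPA, one_mul, neg_one_smul]
      ring
    exact aux_swap_dvd hab sgn f (hrel ε σ hprodε (-1 : K) hdg)
  -- flip relations on f
  have hfflip : ∀ u v : Fin n, u ≠ v →
      dact K n (pairFlip u v) 1 f
        = (((if u ∈ A then (-1:K) else 1) * (if v ∈ A then (-1:K) else 1))) • f := by
    intro u v huv
    refine hrel _ 1 (aux_pairFlip_prod huv) _ ?_
    unfold speB
    rw [map_mul, map_mul, aux_dact_speSsq, aux_dact_speSsq,
      aux_dact_prodVars' (pairFlip u v) 1 m tS hinjS', ← hA]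
    rw [aux_perm_one_comp tT, aux_perm_one_comp tS]
    have h2 : (∏ j ∈ A, (X ((1 : Equiv.Perm (Fin n)) j) : MvPolynomial (Fin n) K))
        = ∏ j ∈ A, X j := Finset.prod_congr rfl fun j _ => by simp
    have h1 : (∏ j ∈ A, ((pairFlip u v j : ℤ) : MvPolynomial (Fin n) K))
        = C ((if u ∈ A then (-1:K) else 1) * (if v ∈ A then (-1:K) else 1)) := by
      rw [aux_pairFlip_split' huv A
        (fun j => (((pairFlip u v j : ℤˣ) : ℤ) : MvPolynomial (Fin n) K))
        (fun j _ h1 h2 => by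
          show (((pairFlip u v j : ℤˣ) : ℤ) : MvPolynomial (Fin n) K) = 1
          unfold pairFlip
          rw [if_neg (by rintro (h | h) <;> [exact h1 h; exact h2 h])]
          simp)]
      rw [map_mul]
      congr 1
      · by_cases hu : u ∈ A
        · rw [if_pos hu, if_pos hu]
          show (((pairFlip u v u : ℤˣ) : ℤ) : MvPolynomial (Fin n) K) = C (-1 : K)
          unfold pairFlip
          rw [if_pos (Or.inl rfl)]
          simp
        · rw [if_neg hu, if_neg hu, MvPolynomial.C_1]
      · by_cases hv : v ∈ A
        · rw [if_pos hv, if_pos hv]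
          show (((pairFlip u v v : ℤˣ) : ℤ) : MvPolynomial (Fin n) K) = C (-1 : K)
          unfold pairFlip
          rw [if_pos (Or.inr rfl)]
          simp
        · rw [if_neg hv, if_neg hv, MvPolynomial.C_1]
    rw [h1, h2, ← hPA, MvPolynomial.smul_eq_C_mul]
    ring
  -- prime factorization family for the Vandermonde part
  set fam : Finset (((Σ _ : ℕ, ℕ × ℕ) × Bool) ⊕ ((Σ _ : ℕ, ℕ × ℕ) × Bool)) :=
    (pairFinset l).disjSum (pairFinset m) with hfam
  set P : (((Σ _ : ℕ, ℕ × ℕ) × Bool) ⊕ ((Σ _ : ℕ, ℕ × ℕ) × Bool)) → MvPolynomial (Fin n) K :=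
    Sum.elim (pairFactor K n tT) (pairFactor K n tS) with hP
  have hdataL : ∀ z ∈ pairFinset l,
      (z : (Σ _ : ℕ, ℕ × ℕ) × Bool).1.2.1 < z.1.2.2 ∧ z.1.2.2 < colLen l z.1.1 :=
    fun z hz => (aux_mem_pairFinset hl).mp hz
  have hdataM : ∀ z ∈ pairFinset m,
      (z : (Σ _ : ℕ, ℕ × ℕ) × Bool).1.2.1 < z.1.2.2 ∧ z.1.2.2 < colLen m z.1.1 :=
    fun z hz => (aux_mem_pairFinset hm).mp hz
  have hcellL1 : ∀ z ∈ pairFinset l, IsCell l (z.1.2.1, z.1.1) := fun z hz =>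
    (aux_isCell_iff hl).mpr (lt_trans (hdataL z hz).1 (hdataL z hz).2)
  have hcellL2 : ∀ z ∈ pairFinset l, IsCell l (z.1.2.2, z.1.1) := fun z hz =>
    (aux_isCell_iff hl).mpr (hdataL z hz).2
  have hcellM1 : ∀ z ∈ pairFinset m, IsCell m (z.1.2.1, z.1.1) := fun z hz =>
    (aux_isCell_iff hm).mpr (lt_trans (hdataM z hz).1 (hdataM z hz).2)
  have hcellM2 : ∀ z ∈ pairFinset m, IsCell m (z.1.2.2, z.1.1) := fun z hz =>
    (aux_isCell_iff hm).mpr (hdataM z hz).2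
  have habL : ∀ z ∈ pairFinset l, tT (z.1.2.1, z.1.1) ≠ tT (z.1.2.2, z.1.1) := by
    intro z hz hval
    have := injT _ _ (hcellL1 z hz) (hcellL2 z hz) hval
    simp only [Prod.mk.injEq] at this
    have := (hdataL z hz).1
    omega
  have habM : ∀ z ∈ pairFinset m, tS (z.1.2.1, z.1.1) ≠ tS (z.1.2.2, z.1.1) := by
    intro z hz hval
    have := injS _ _ (hcellM1 z hz) (hcellM2 z hz) hval
    simp only [Prod.mk.injEq] at this
    have := (hdataM z hz).1
    omega
  have hsgn_ne : ∀ s t : Bool, s ≠ t → (if s then (1:K) else -1) ≠ (if t then (1:K) else -1) := by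
    intro s t hst
    cases s <;> cases t
    · exact absurd rfl hst
    · norm_num
    · norm_num
    · exact absurd rfl hst
  have hsgn_ne0 : ∀ s : Bool, (if s then (1:K) else -1) ≠ 0 := by
    intro s; cases s <;> norm_num
  have hprime : ∀ z ∈ fam, Prime (P z) := by
    intro z hz
    rw [hfam] at hz
    cases z with
    | inl w =>
      rw [Finset.inl_mem_disjSum] at hz
      exact aux_prime_lin (habL w hz) _
    | inr w =>
      rw [Finset.inr_mem_disjSum] at hz
      exact aux_prime_lin (habM w hz) _
  have hdvdf : ∀ z ∈ fam, P z ∣ f := by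
    intro z hz
    rw [hfam] at hz
    cases z with
    | inl w =>
      rw [Finset.inl_mem_disjSum] at hz
      exact hfT w.1.1 w.1.2.1 w.1.2.2 (hdataL w hz).1 (hdataL w hz).2 w.2
    | inr w =>
      rw [Finset.inr_mem_disjSum] at hz
      exact hfS w.1.1 w.1.2.1 w.1.2.2 (hdataM w hz).1 (hdataM w hz).2 w.2
  have hnd : ∀ z ∈ fam, ∀ z' ∈ fam, z ≠ z' → ¬ P z ∣ P z' := by
    intro z hz z' hz' hne
    rw [hfam] at hz hz'
    cases z with
    | inl w =>
      cases z' with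
      | inl w' =>
        rw [Finset.inl_mem_disjSum] at hz hz'
        by_cases hww : w.1 = w'.1
        · have hsg : w.2 ≠ w'.2 := by
            intro hs
            exact hne (by rw [show w = w' from Prod.ext hww hs])
          show ¬ pairFactor K n tT w ∣ pairFactor K n tT w'
          unfold pairFactor
          rw [hww]
          exact aux_notdvd_lin_same (habL w' hz') (hsgn_ne _ _ hsg)
        · obtain ⟨wit, hwit, hwa, hwb⟩ := aux_witness hl tT injT
            (hdataL w hz) (hdataL w' hz') hww
          show ¬ pairFactor K n tT w ∣ pairFactor K n tT w'
          unfold pairFactor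
          exact aux_notdvd_lin (hsgn_ne0 w'.2) hwit hwa hwb (habL w' hz')
      | inr w' =>
        rw [Finset.inl_mem_disjSum] at hz
        rw [Finset.inr_mem_disjSum] at hz'
        show ¬ pairFactor K n tT w ∣ pairFactor K n tS w'
        unfold pairFactor
        refine aux_notdvd_lin (hsgn_ne0 w'.2) (Or.inl rfl) ?_ ?_ (habM w' hz')
        · exact fun hh => hdisj _ _ (hcellL1 w hz) (hcellM1 w' hz') hh.symm
        · exact fun hh => hdisj _ _ (hcellL2 w hz) (hcellM1 w' hz') hh.symm
    | inr w =>
      cases z' with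
      | inl w' =>
        rw [Finset.inr_mem_disjSum] at hz
        rw [Finset.inl_mem_disjSum] at hz'
        show ¬ pairFactor K n tS w ∣ pairFactor K n tT w'
        unfold pairFactor
        refine aux_notdvd_lin (hsgn_ne0 w'.2) (Or.inl rfl) ?_ ?_ (habL w' hz')
        · exact fun hh => hdisj _ _ (hcellL1 w' hz') (hcellM1 w hz) hh
        · exact fun hh => hdisj _ _ (hcellL1 w' hz') (hcellM2 w hz) hh
      | inr w' =>
        rw [Finset.inr_mem_disjSum] at hz hz'
        by_cases hww : w.1 = w'.1
        · have hsg : w.2 ≠ w'.2 := by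
            intro hs
            exact hne (by rw [show w = w' from Prod.ext hww hs])
          show ¬ pairFactor K n tS w ∣ pairFactor K n tS w'
          unfold pairFactor
          rw [hww]
          exact aux_notdvd_lin_same (habM w' hz') (hsgn_ne _ _ hsg)
        · obtain ⟨wit, hwit, hwa, hwb⟩ := aux_witness hm tS injS
            (hdataM w hz) (hdataM w' hz') hww
          show ¬ pairFactor K n tS w ∣ pairFactor K n tS w'
          unfold pairFactor
          exact aux_notdvd_lin (hsgn_ne0 w'.2) hwit hwa hwb (habM w' hz')
  have hVdvd : (speSsq K n l tT * speSsq K n m tS) ∣ f := by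
    have hpp := aux_prod_prime_dvd fam P hprime hnd hdvdf
    rw [hfam, hP, Finset.prod_sumElim, ← aux_speSsq_factor, ← aux_speSsq_factor] at hpp
    exact hpp
  obtain ⟨h, hfVh⟩ := hVdvd
  have hVne : (speSsq K n l tT * speSsq K n m tS) ≠ 0 := by
    have hzz : (∏ z ∈ fam, P z) ≠ 0 :=
      Finset.prod_ne_zero_iff.mpr (fun z hz => (hprime z hz).ne_zero)
    rwa [hfam, hP, Finset.prod_sumElim, ← aux_speSsq_factor, ← aux_speSsq_factor] at hzz
  have hflip_h : ∀ u v : Fin n, u ≠ v →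
      dact K n (pairFlip u v) 1 h
        = ((if u ∈ A then (-1:K) else 1) * (if v ∈ A then (-1:K) else 1)) • h := by
    intro u v huv
    have h1 : dact K n (pairFlip u v) 1 (speSsq K n l tT * speSsq K n m tS)
        = speSsq K n l tT * speSsq K n m tS := by
      rw [map_mul, aux_dact_speSsq, aux_dact_speSsq, aux_perm_one_comp tT, aux_perm_one_comp tS]
    have h2 := hfflip u v huv
    rw [hfVh, map_mul, h1] at h2
    have h3 : ((if u ∈ A then (-1:K) else 1) * (if v ∈ A then (-1:K) else 1)) •
        (speSsq K n l tT * speSsq K n m tS * h)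
        = (speSsq K n l tT * speSsq K n m tS) *
          (((if u ∈ A then (-1:K) else 1) * (if v ∈ A then (-1:K) else 1)) • h) := by
      rw [MvPolynomial.smul_eq_C_mul, MvPolynomial.smul_eq_C_mul]
      ring
    rw [h3] at h2
    exact mul_left_cancel₀ hVne h2
  have hsupp : ∀ β ∈ h.support, ∀ u v : Fin n, u ≠ v →
      ((-1:K) ^ (β u) * (-1:K) ^ (β v))
        = (if u ∈ A then (-1:K) else 1) * (if v ∈ A then (-1:K) else 1) := by
    intro β hβ u v huv
    have hc := congrArg (MvPolynomial.coeff β) (hflip_h u v huv)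
    rw [aux_coeff_dact, MvPolynomial.coeff_smul, aux_pairFlip_pow huv, smul_eq_mul] at hc
    exact mul_right_cancel₀ (MvPolynomial.mem_support_iff.mp hβ) hc
  have hclass : ∀ β ∈ h.support, ¬ (∀ j ∈ A, Odd (β j)) → (∀ k, k ∉ A → Odd (β k)) := by
    intro β hβ hnotQ k hk
    push_neg at hnotQ
    obtain ⟨j0, hj0A, hj0ev⟩ := hnotQ
    have hj0ev' : Even (β j0) := Nat.not_odd_iff_even.mp hj0ev
    have hj0k : j0 ≠ k := fun hh => hk (hh ▸ hj0A)
    have hs := hsupp β hβ j0 k hj0k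
    rw [if_pos hj0A, if_neg hk, mul_one, hj0ev'.neg_one_pow, one_mul] at hs
    by_contra hkodd
    rw [(Nat.not_odd_iff_even.mp hkodd).neg_one_pow] at hs
    norm_num at hs
  -- decomposition of h by parity of exponents
  set s0 : Finset (Fin n →₀ ℕ) := h.support.filter (fun β => ∀ j ∈ A, Odd (β j)) with hs0
  set h0 : MvPolynomial (Fin n) K :=
    ∑ β ∈ s0, MvPolynomial.monomial β (MvPolynomial.coeff β h) with hh0
  have hcoeff0 : ∀ γ, MvPolynomial.coeff γ h0
      = if γ ∈ s0 then MvPolynomial.coeff γ h else 0 := by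
    intro γ
    rw [hh0, MvPolynomial.coeff_sum]
    rw [Finset.sum_congr rfl (fun β _ => MvPolynomial.coeff_monomial γ β _)]
    exact Finset.sum_ite_eq' s0 γ (fun β => MvPolynomial.coeff β h)
  have hdvd0 : MvPolynomial.monomial (indicFinsupp A) (1:K) ∣ h0 := by
    rw [hh0]
    refine Finset.dvd_sum fun β hβ => aux_monomial_dvd ?_ _
    rw [hs0, Finset.mem_filter] at hβ
    rw [Finsupp.le_def]
    intro k
    rw [aux_indic_apply]
    by_cases hkA : k ∈ A
    · rw [if_pos hkA]; exact (hβ.2 k hkA).pos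
    · rw [if_neg hkA]; exact Nat.zero_le _
  set h1p : MvPolynomial (Fin n) K := h - h0 with hh1
  have hdvd1 : MvPolynomial.monomial (indicFinsupp B) (1:K) ∣ h1p := by
    have hsum : h1p = ∑ β ∈ h1p.support, MvPolynomial.monomial β (MvPolynomial.coeff β h1p) :=
      (MvPolynomial.support_sum_monomial_coeff h1p).symm
    rw [hsum]
    refine Finset.dvd_sum fun β hβ => aux_monomial_dvd ?_ _
    have hcoeffne : MvPolynomial.coeff β h1p ≠ 0 := MvPolynomial.mem_support_iff.mp hβ
    have hβns0 : β ∉ s0 := by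
      intro hmem
      apply hcoeffne
      rw [hh1, MvPolynomial.coeff_sub, hcoeff0, if_pos hmem, sub_self]
    have hβh : β ∈ h.support := by
      by_contra hns
      apply hcoeffne
      rw [hh1, MvPolynomial.coeff_sub, hcoeff0, if_neg hβns0, sub_zero]
      exact MvPolynomial.notMem_support_iff.mp hns
    have hnQ : ¬ (∀ j ∈ A, Odd (β j)) := fun hQβ =>
      hβns0 (by rw [hs0]; exact Finset.mem_filter.mpr ⟨hβh, hQβ⟩)
    have hodd := hclass β hβh hnQ
    rw [Finsupp.le_def]
    intro k
    rw [aux_indic_apply]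
    by_cases hkB : k ∈ B
    · rw [if_pos hkB]
      have hknA : k ∉ A := by rw [hBcompl] at hkB; exact (Finset.mem_sdiff.mp hkB).2
      exact (hodd k hknA).pos
    · rw [if_neg hkB]; exact Nat.zero_le _
  obtain ⟨q0, hq0⟩ := hdvd0
  obtain ⟨q1, hq1⟩ := hdvd1
  have hbt2 : IsBitableau n m l tS tT :=
    ⟨injS, injT, fun p q hp hq => (hdisj q p hq hp).symm, fun k => (hcover k).symm⟩
  have hfinal : f = speB K n l m tT tS * q0 + speB K n m l tS tT * q1 := by
    have hPAm : prodVars K n m tS = MvPolynomial.monomial (indicFinsupp A) 1 := by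
      rw [hPA, aux_prod_X_eq]
    have hPBm : prodVars K n l tT = MvPolynomial.monomial (indicFinsupp B) 1 := by
      rw [hPB, aux_prod_X_eq]
    have hsplit : h = h0 + h1p := by rw [hh1]; ring
    calc f = (speSsq K n l tT * speSsq K n m tS) * h := hfVh
      _ = (speSsq K n l tT * speSsq K n m tS) * (h0 + h1p) := by rw [← hsplit]
      _ = (speSsq K n l tT * speSsq K n m tS) *
            ((MvPolynomial.monomial (indicFinsupp A) 1) * q0) +
          (speSsq K n l tT * speSsq K n m tS) *
            ((MvPolynomial.monomial (indicFinsupp B) 1) * q1) := by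
          rw [← hq0, ← hq1]; ring
      _ = speB K n l m tT tS * q0 + speB K n m l tS tT * q1 := by
          unfold speB
          rw [hPAm, hPBm]
          ring
  rw [hfinal]
  have hideal : IdealD K n (Dipart.pair {l, m}) = Ideal.span
      {f | ∃ l' m' tT' tS', ({l, m} : Multiset (List ℕ)) = {l', m'} ∧
        IsBitableau n l' m' tT' tS' ∧ f = speB K n l' m' tT' tS'} := rfl
  rw [hideal]
  refine Ideal.add_mem _ ?_ ?_
  · exact Ideal.mul_mem_right _ _ (Ideal.subset_span ⟨l, m, tT, tS, rfl, hbt, rfl⟩)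
  · exact Ideal.mul_mem_right _ _ (Ideal.subset_span
      ⟨m, l, tS, tT, Multiset.cons_swap l m 0, hbt2, rfl⟩)

end StmtNineAux5

/-- For distinct partitions `l ≠ m` with `|l| + |m| = n`, every `Dₙ`-submodule of `K[X]` that is
`Dₙ`-equivariantly isomorphic to the Specht module `𝕊^{{l,m}}` (the span of all `B`-Specht
polynomials of shapes `(l,m)` and `(m,l)`) is contained in the `D`-Specht ideal
`I_{{l,m}}^D`; i.e. the isotypic component of `𝕊^{{l,m}}` is contained in `I_{{l,m}}^D`. -/
theorem stmt9 (K : Type*) [Field K] [CharZero K] (n : ℕ) (l m : List ℕ)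
    (hl : IsPtn l) (hm : IsPtn m) (hne : l ≠ m) (hsum : l.sum + m.sum = n)
    (S : Submodule K (MvPolynomial (Fin n) K))
    (hS : S = Submodule.span K
      ({f | ∃ tT tS, IsBitableau n l m tT tS ∧ f = speB K n l m tT tS} ∪
       {f | ∃ tT tS, IsBitableau n m l tT tS ∧ f = speB K n m l tT tS}))
    (M : Submodule K (MvPolynomial (Fin n) K))
    (hMinv : ∀ (ε : Fin n → ℤˣ) (σ : Equiv.Perm (Fin n)), (∏ i, ε i) = 1 →
      ∀ v ∈ M, dact K n ε σ v ∈ M)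
    (e : S ≃ₗ[K] M)
    (he : ∀ (ε : Fin n → ℤˣ) (σ : Equiv.Perm (Fin n)), (∏ i, ε i) = 1 →
      ∀ v w : S, (w : MvPolynomial (Fin n) K) = dact K n ε σ (v : MvPolynomial (Fin n) K) →
        (e w : MvPolynomial (Fin n) K) = dact K n ε σ ((e v : MvPolynomial (Fin n) K))) :
    (M : Set (MvPolynomial (Fin n) K)) ⊆ (IdealD K n (Dipart.pair {l, m}) : Set _) := by
  subst hS
  intro v hv
  have key : ∀ (y : MvPolynomial (Fin n) K)
      (hy : y ∈ Submodule.span K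
        ({f | ∃ tT tS, IsBitableau n l m tT tS ∧ f = speB K n l m tT tS} ∪
         {f | ∃ tT tS, IsBitableau n m l tT tS ∧ f = speB K n m l tT tS})),
      ((e ⟨y, hy⟩ : _) : MvPolynomial (Fin n) K) ∈ IdealD K n (Dipart.pair {l, m}) := by
    intro y hy
    induction hy using Submodule.span_induction with
    | mem y hyG =>
      rcases hyG with ⟨tT, tS, hbt, rfl⟩ | ⟨tT, tS, hbt, rfl⟩
      · -- shape (l, m)
        set vv :=
          (⟨speB K n l m tT tS, Submodule.subset_span (Or.inl ⟨tT, tS, hbt, rfl⟩)⟩ :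
            ↥(Submodule.span K
              ({f | ∃ tT tS, IsBitableau n l m tT tS ∧ f = speB K n l m tT tS} ∪
               {f | ∃ tT tS, IsBitableau n m l tT tS ∧ f = speB K n m l tT tS}))) with hvv
        refine aux_gen_mem K n l m hl.1 hm.1 tT tS hbt _ ?_
        intro ε σ hprod c hdg
        have hw : ((c • vv : _) : MvPolynomial (Fin n) K)
            = dact K n ε σ (vv : MvPolynomial (Fin n) K) := by
          rw [Submodule.coe_smul]
          exact hdg.symm
        have hee := he ε σ hprod vv (c • vv) hw
        rw [map_smul] at hee
        rw [Submodule.coe_smul] at hee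
        exact hee.symm
      · -- shape (m, l)
        set vv :=
          (⟨speB K n m l tT tS, Submodule.subset_span (Or.inr ⟨tT, tS, hbt, rfl⟩)⟩ :
            ↥(Submodule.span K
              ({f | ∃ tT tS, IsBitableau n l m tT tS ∧ f = speB K n l m tT tS} ∪
               {f | ∃ tT tS, IsBitableau n m l tT tS ∧ f = speB K n m l tT tS}))) with hvv
        have hpair : Dipart.pair ({m, l} : Multiset (List ℕ)) = Dipart.pair {l, m} := by
          rw [show ({m, l} : Multiset (List ℕ)) = {l, m} from Multiset.cons_swap m l 0]
        rw [← hpair]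
        refine aux_gen_mem K n m l hm.1 hl.1 tT tS hbt _ ?_
        intro ε σ hprod c hdg
        have hw : ((c • vv : _) : MvPolynomial (Fin n) K)
            = dact K n ε σ (vv : MvPolynomial (Fin n) K) := by
          rw [Submodule.coe_smul]
          exact hdg.symm
        have hee := he ε σ hprod vv (c • vv) hw
        rw [map_smul] at hee
        rw [Submodule.coe_smul] at hee
        exact hee.symm
    | zero =>
      have h0 : (⟨(0 : MvPolynomial (Fin n) K), Submodule.zero_mem _⟩ :
          ↥(Submodule.span K
            ({f | ∃ tT tS, IsBitableau n l m tT tS ∧ f = speB K n l m tT tS} ∪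
             {f | ∃ tT tS, IsBitableau n m l tT tS ∧ f = speB K n m l tT tS}))) = 0 := rfl
      rw [h0, LinearEquiv.map_zero, ZeroMemClass.coe_zero]
      exact Ideal.zero_mem _
    | add y z hy hz ihy ihz =>
      have hadd : (⟨y + z, Submodule.add_mem _ hy hz⟩ :
          ↥(Submodule.span K
            ({f | ∃ tT tS, IsBitableau n l m tT tS ∧ f = speB K n l m tT tS} ∪
             {f | ∃ tT tS, IsBitableau n m l tT tS ∧ f = speB K n m l tT tS})))
          = ⟨y, hy⟩ + ⟨z, hz⟩ := rfl
      rw [hadd, LinearEquiv.map_add, Submodule.coe_add]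
      exact Ideal.add_mem _ ihy ihz
    | smul a y hy ihy =>
      have hsmul : (⟨a • y, Submodule.smul_mem _ a hy⟩ :
          ↥(Submodule.span K
            ({f | ∃ tT tS, IsBitableau n l m tT tS ∧ f = speB K n l m tT tS} ∪
             {f | ∃ tT tS, IsBitableau n m l tT tS ∧ f = speB K n m l tT tS})))
          = a • ⟨y, hy⟩ := rfl
      rw [hsmul, LinearEquiv.map_smul, Submodule.coe_smul, MvPolynomial.smul_eq_C_mul]
      exact Ideal.mul_mem_left _ _ ihy
  have hx := key ((e.symm ⟨v, hv⟩ : _) : MvPolynomial (Fin n) K) (e.symm ⟨v, hv⟩).2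
  have hxe : (⟨((e.symm ⟨v, hv⟩ : _) : MvPolynomial (Fin n) K), (e.symm ⟨v, hv⟩).2⟩ :
      ↥(Submodule.span K
        ({f | ∃ tT tS, IsBitableau n l m tT tS ∧ f = speB K n l m tT tS} ∪
         {f | ∃ tT tS, IsBitableau n m l tT tS ∧ f = speB K n m l tT tS})))
      = e.symm ⟨v, hv⟩ := rfl
  rw [hxe, e.apply_symm_apply] at hx
  exact hx
end

section
/- For every positive integer n, the didominance relation ⊴_D is a partial order (reflexive, antisymmetric and transitive) on the set 𝒟_n of dipartitions of n, and the dipartition {∅, (1,1,…,1)} consisting of the empty partition and the all-ones partition of n is the minimum of (𝒟_n, ⊴_D). -/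
open MvPolynomial

section Aux

/-- Prefix sums of a list expressed as a finite sum of `getD` values. -/
lemma sum_take_eq (l : List ℕ) : ∀ j, (l.take j).sum = ∑ i ∈ Finset.range j, l.getD i 0 := by
  induction l with
  | nil => intro j; simp
  | cons a l ih =>
    intro j
    cases j with
    | zero => simp
    | succ j =>
      rw [List.take_succ_cons, List.sum_cons, Finset.sum_range_succ', ih j]
      simp [Nat.add_comm]

lemma ptn_getD_pos {l : List ℕ} (hl : IsPtn l) {j : ℕ} (hj : j < l.length) :
    0 < l.getD j 0 := by
  rw [List.getD_eq_getElem _ _ hj]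
  exact hl.2 _ (List.getElem_mem _)

lemma ptn_len_le {l : List ℕ} (hl : IsPtn l) {j : ℕ} (hj : l.getD j 0 = 0) :
    l.length ≤ j := by
  by_contra h
  have := ptn_getD_pos hl (by omega : j < l.length)
  omega

lemma ptn_ext : ∀ l m : List ℕ, IsPtn l → IsPtn m →
    (∀ j, l.getD j 0 = m.getD j 0) → l = m := by
  intro l
  induction l with
  | nil =>
    intro m _ hm h
    cases m with
    | nil => rfl
    | cons b m =>
      have hb := hm.2 b (by simp)
      have := h 0
      simp at this
      omega
  | cons a l ih =>
    intro m hl hm h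
    cases m with
    | nil =>
      have ha := hl.2 a (by simp)
      have := h 0
      simp at this
      omega
    | cons b m =>
      have h0 := h 0
      simp at h0
      have htail : l = m := by
        refine ih m ⟨hl.1.of_cons, fun x hx => hl.2 x (by simp [hx])⟩
          ⟨hm.1.of_cons, fun x hx => hm.2 x (by simp [hx])⟩ (fun j => ?_)
        have := h (j + 1)
        simpa using this
      rw [h0, htail]

lemma bidom_refl (l m : List ℕ) : bidom l m l m := fun _ _ => ⟨le_rfl, le_rfl⟩

lemma bidom_trans {l m t w a b : List ℕ} (h1 : bidom l m t w) (h2 : bidom t w a b) :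
    bidom l m a b := by
  intro j hj
  obtain ⟨c1, c2⟩ := h1 j hj
  obtain ⟨d1, d2⟩ := h2 j hj
  exact ⟨le_trans c1 d1, le_trans c2 d2⟩

lemma predD_refl (l m : List ℕ) : predD l m l m :=
  ⟨Or.inl (bidom_refl l m), Or.inr (bidom_refl m l)⟩

lemma predD_swap_left {l m t w : List ℕ} (h : predD l m t w) : predD m l t w :=
  ⟨h.2, h.1⟩

lemma predD_swap_right {l m t w : List ℕ} (h : predD l m t w) : predD l m w t :=
  ⟨h.1.symm, h.2.symm⟩

lemma predD_trans {l m t w a b : List ℕ} (h1 : predD l m t w) (h2 : predD t w a b) :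
    predD l m a b := by
  obtain ⟨h1a, h1b⟩ := h1
  obtain ⟨h2a, h2b⟩ := h2
  constructor
  · rcases h1a with h | h
    · exact h2a.imp (bidom_trans h) (bidom_trans h)
    · exact h2b.imp (bidom_trans h) (bidom_trans h)
  · rcases h1b with h | h
    · exact h2a.imp (bidom_trans h) (bidom_trans h)
    · exact h2b.imp (bidom_trans h) (bidom_trans h)

/-- Two-sided `predD` forces the prefix sums to agree. -/
lemma predD_sums_eq {l m t w : List ℕ} (h1 : predD l m t w) (h2 : predD t w l m) :
    ∀ j, (l.take j).sum + (m.take j).sum = (t.take j).sum + (w.take j).sum := by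
  intro j
  cases j with
  | zero => simp
  | succ j =>
    have hle1 : (l.take (j+1)).sum + (m.take (j+1)).sum
        ≤ (t.take (j+1)).sum + (w.take (j+1)).sum := by
      rcases h1.1 with h | h
      · exact (h (j+1) (by omega)).1
      · have := (h (j+1) (by omega)).1; omega
    have hle2 : (t.take (j+1)).sum + (w.take (j+1)).sum
        ≤ (l.take (j+1)).sum + (m.take (j+1)).sum := by
      rcases h2.1 with h | h
      · exact (h (j+1) (by omega)).1
      · have := (h (j+1) (by omega)).1; omega
    omega

/-- Pointwise version of the equal-sums conclusion. -/
lemma sums_eq_pointwise {l m t w : List ℕ}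
    (hs : ∀ j, (l.take j).sum + (m.take j).sum = (t.take j).sum + (w.take j).sum) :
    ∀ j, l.getD j 0 + m.getD j 0 = t.getD j 0 + w.getD j 0 := by
  intro j
  have e1 := hs j
  have e2 := hs (j + 1)
  rw [sum_take_eq, sum_take_eq, sum_take_eq, sum_take_eq] at e1 e2
  rw [Finset.sum_range_succ, Finset.sum_range_succ, Finset.sum_range_succ,
    Finset.sum_range_succ] at e2
  omega

/-- Given equal prefix sums, `bidom` gives a pointwise inequality on the first components. -/
lemma bidom_pointwise {l m t w : List ℕ}
    (hs : ∀ j, (l.take j).sum + (m.take j).sum = (t.take j).sum + (w.take j).sum)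
    (h : bidom l m t w) : ∀ j, l.getD j 0 ≤ t.getD j 0 := by
  intro j
  have := (h (j + 1) (by omega)).2
  have hsj := hs j
  simp only [Nat.add_sub_cancel] at this
  omega

lemma predD_antisymm {l m t w : List ℕ} (hl : IsPtn l) (hm : IsPtn m) (ht : IsPtn t)
    (hw : IsPtn w) (h1 : predD l m t w) (h2 : predD t w l m) :
    (l = t ∧ m = w) ∨ (l = w ∧ m = t) := by
  have hs : ∀ j, (l.take j).sum + (m.take j).sum = (t.take j).sum + (w.take j).sum :=
    predD_sums_eq h1 h2
  have hs' : ∀ j, (m.take j).sum + (l.take j).sum = (t.take j).sum + (w.take j).sum := by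
    intro j; have := hs j; omega
  have hswap : ∀ j, (l.take j).sum + (m.take j).sum = (w.take j).sum + (t.take j).sum := by
    intro j; have := hs j; omega
  have hswap' : ∀ j, (m.take j).sum + (l.take j).sum = (w.take j).sum + (t.take j).sum := by
    intro j; have := hs j; omega
  have hts : ∀ j, (t.take j).sum + (w.take j).sum = (l.take j).sum + (m.take j).sum := by
    intro j; have := hs j; omega
  have hts' : ∀ j, (t.take j).sum + (w.take j).sum = (m.take j).sum + (l.take j).sum := by
    intro j; have := hs j; omega
  have hws : ∀ j, (w.take j).sum + (t.take j).sum = (l.take j).sum + (m.take j).sum := by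
    intro j; have := hs j; omega
  have hws' : ∀ j, (w.take j).sum + (t.take j).sum = (m.take j).sum + (l.take j).sum := by
    intro j; have := hs j; omega
  have hC : ∀ j, l.getD j 0 + m.getD j 0 = t.getD j 0 + w.getD j 0 := sums_eq_pointwise hs
  have hA : (∀ j, l.getD j 0 ≤ t.getD j 0) ∨ (∀ j, l.getD j 0 ≤ w.getD j 0) :=
    h1.1.imp (bidom_pointwise hs) (bidom_pointwise hswap)
  have hB : (∀ j, m.getD j 0 ≤ t.getD j 0) ∨ (∀ j, m.getD j 0 ≤ w.getD j 0) :=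
    h1.2.imp (bidom_pointwise hs') (bidom_pointwise hswap')
  have hA' : (∀ j, t.getD j 0 ≤ l.getD j 0) ∨ (∀ j, t.getD j 0 ≤ m.getD j 0) :=
    h2.1.imp (bidom_pointwise hts) (bidom_pointwise hts')
  have hB' : (∀ j, w.getD j 0 ≤ l.getD j 0) ∨ (∀ j, w.getD j 0 ≤ m.getD j 0) :=
    h2.2.imp (bidom_pointwise hws) (bidom_pointwise hws')
  have key : (∀ j, l.getD j 0 = t.getD j 0) ∨ (∀ j, l.getD j 0 = w.getD j 0) := by
    rcases hA with hLT | hLW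
    · rcases hB with hMT | hMW
      · rcases hA' with hTL | hTM
        · exact Or.inl fun j => le_antisymm (hLT j) (hTL j)
        · exact Or.inr fun j => by
            have := hC j; have := hLT j; have := hMT j; have := hTM j; omega
      · exact Or.inl fun j => by have := hC j; have := hLT j; have := hMW j; omega
    · rcases hB with hMT | hMW
      · exact Or.inr fun j => by have := hC j; have := hLW j; have := hMT j; omega
      · rcases hB' with hWL | hWM
        · exact Or.inr fun j => le_antisymm (hLW j) (hWL j)
        · exact Or.inl fun j => by
            have := hC j; have := hLW j; have := hMW j; have := hWM j; omega
  rcases key with hk | hk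
  · refine Or.inl ⟨ptn_ext l t hl ht hk, ptn_ext m w hm hw fun j => ?_⟩
    have := hC j; have := hk j; omega
  · refine Or.inr ⟨ptn_ext l w hl hw hk, ptn_ext m t hm ht fun j => ?_⟩
    have := hC j; have := hk j; omega

/-- The combined prefix sums of two partitions of total sum `n` dominate `min k n`. -/
lemma sums_ge_min {n : ℕ} {t w : List ℕ} (ht : IsPtn t) (hw : IsPtn w)
    (hsum : t.sum + w.sum = n) (k : ℕ) :
    min k n ≤ (t.take k).sum + (w.take k).sum := by
  by_cases h : ∀ i < k, 0 < t.getD i 0 + w.getD i 0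
  · have : k ≤ ∑ i ∈ Finset.range k, (t.getD i 0 + w.getD i 0) := by
      calc k = ∑ _i ∈ Finset.range k, 1 := by simp
        _ ≤ _ := Finset.sum_le_sum fun i hi => h i (Finset.mem_range.mp hi)
    rw [sum_take_eq, sum_take_eq, ← Finset.sum_add_distrib]
    omega
  · push_neg at h
    obtain ⟨i, hik, hi0⟩ := h
    have h1 : t.length ≤ i := ptn_len_le ht (by omega)
    have h2 : w.length ≤ i := ptn_len_le hw (by omega)
    rw [List.take_of_length_le (by omega), List.take_of_length_le (by omega), hsum]
    omega

lemma getD_replicate_one (n j : ℕ) :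
    (List.replicate n (1 : ℕ)).getD j 0 = if j < n then 1 else 0 := by
  split
  · rw [List.getD_eq_getElem _ _ (by simpa using ‹j < n›)]
    simp
  · exact List.getD_eq_default _ _ (by simpa using le_of_not_gt ‹¬ j < n›)

lemma take_replicate_sum (n j : ℕ) :
    ((List.replicate n (1 : ℕ)).take j).sum = min j n := by
  rw [List.take_replicate, List.sum_replicate]
  simp

lemma bidom_min1 {n : ℕ} {t w : List ℕ} (ht : IsPtn t) (hw : IsPtn w)
    (hsum : t.sum + w.sum = n) : bidom [] (List.replicate n 1) t w := by
  intro j hj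
  constructor
  · have := sums_ge_min ht hw hsum j
    simp [take_replicate_sum]
    omega
  · have := sums_ge_min ht hw hsum (j - 1)
    simp [take_replicate_sum]
    omega

lemma bidom_min2 {n : ℕ} {t w : List ℕ} (ht : IsPtn t) (hw : IsPtn w)
    (hsum : t.sum + w.sum = n) (hlen : w.length ≤ t.length) :
    bidom (List.replicate n 1) [] t w := by
  intro j hj
  have key : min j n ≤ t.getD (j-1) 0 + ((t.take (j-1)).sum + (w.take (j-1)).sum) := by
    by_cases hc : j - 1 < t.length
    · have h1 : 1 ≤ t.getD (j-1) 0 := ptn_getD_pos ht hc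
      have h2 : j - 1 ≤ (t.take (j-1)).sum := by
        rw [sum_take_eq]
        calc j - 1 = ∑ _i ∈ Finset.range (j-1), 1 := by simp
          _ ≤ _ := Finset.sum_le_sum fun i hi => by
              exact ptn_getD_pos ht (by have := Finset.mem_range.mp hi; omega)
      omega
    · rw [List.take_of_length_le (by omega), List.take_of_length_le (by omega), hsum]
      omega
  constructor
  · have := sums_ge_min ht hw hsum j
    simp [take_replicate_sum]
    omega
  · rw [getD_replicate_one, take_replicate_sum]
    simp only [List.take_nil, List.sum_nil]
    split <;> omega

lemma predD_min {n : ℕ} {t w : List ℕ} (ht : IsPtn t) (hw : IsPtn w)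
    (hsum : t.sum + w.sum = n) : predD [] (List.replicate n 1) t w := by
  constructor
  · exact Or.inl (bidom_min1 ht hw hsum)
  · rcases le_total w.length t.length with h | h
    · exact Or.inl (bidom_min2 ht hw hsum h)
    · exact Or.inr (bidom_min2 hw ht (by omega) h)

lemma pair_eq_pair {α : Type*} {a b c d : α} (h : ({a, b} : Multiset α) = {c, d}) :
    (a = c ∧ b = d) ∨ (a = d ∧ b = c) := by
  have h' : a ::ₘ ({b} : Multiset α) = c ::ₘ {d} := h
  rw [Multiset.cons_eq_cons] at h'
  rcases h' with ⟨h1, h2⟩ | ⟨hne, cs, h1, h2⟩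
  · exact Or.inl ⟨h1, Multiset.singleton_inj.mp h2⟩
  · have hcs : cs = 0 := by
      have hcard := congrArg Multiset.card h1
      rw [Multiset.card_singleton, Multiset.card_cons] at hcard
      exact Multiset.card_eq_zero.mp (by omega)
    subst hcs
    have hb : b = c := Multiset.singleton_inj.mp h1
    have hd : ({d} : Multiset α) = {a} := h2
    exact Or.inr ⟨(Multiset.singleton_inj.mp hd).symm, hb⟩

/-- Extract properties of an arbitrary decomposition of a valid pair dipartition. -/
lemma valid_pair {n : ℕ} {s : Multiset (List ℕ)} (h : Dipart.Valid n (.pair s))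
    {l m : List ℕ} (hs : s = {l, m}) :
    IsPtn l ∧ IsPtn m ∧ l ≠ m ∧ l.sum + m.sum = n := by
  obtain ⟨l0, m0, hs0, hne, hl0, hm0, hsum⟩ := h
  rcases pair_eq_pair (hs0.symm.trans hs) with ⟨h1, h2⟩ | ⟨h1, h2⟩
  · subst h1; subst h2; exact ⟨hl0, hm0, hne, hsum⟩
  · subst h1; subst h2; exact ⟨hm0, hl0, Ne.symm hne, by omega⟩

/-- Align a `predD` statement along two decompositions of the same multiset (first pair). -/
lemma predD_align {s : Multiset (List ℕ)} {t w t' w' a b : List ℕ}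
    (h1 : s = {t, w}) (h2 : s = {t', w'}) (hp : predD t' w' a b) : predD t w a b := by
  rcases pair_eq_pair (h2.symm.trans h1) with ⟨e1, e2⟩ | ⟨e1, e2⟩
  · subst e1; subst e2; exact hp
  · subst e1; subst e2; exact predD_swap_left hp

/-- Align a `predD` statement along two decompositions of the same multiset (second pair). -/
lemma predD_align_right {s : Multiset (List ℕ)} {t w t' w' a b : List ℕ}
    (h1 : s = {t, w}) (h2 : s = {t', w'}) (hp : predD a b t' w') : predD a b t w := by
  rcases pair_eq_pair (h2.symm.trans h1) with ⟨e1, e2⟩ | ⟨e1, e2⟩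
  · subst e1; subst e2; exact hp
  · subst e1; subst e2; exact predD_swap_right hp

end Aux

/-- The didominance relation is a partial order on the set of dipartitions of `n`, with
minimum `{∅, (1,…,1)}`. -/
theorem stmt10 (n : ℕ) (hn : 0 < n) :
    (∀ d : Dipart, d.Valid n → didom d d) ∧
    (∀ d e : Dipart, d.Valid n → e.Valid n → didom d e → didom e d → d = e) ∧
    (∀ d e f : Dipart, d.Valid n → e.Valid n → f.Valid n →
      didom d e → didom e f → didom d f) ∧
    (∀ d : Dipart, d.Valid n →
      didom (Dipart.pair {([] : List ℕ), List.replicate n 1}) d) := by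
  refine ⟨?_, ?_, ?_, ?_⟩
  · -- reflexivity
    intro d hd
    cases d with
    | pair s =>
      obtain ⟨l, m, hs, -, -, -, -⟩ := hd
      exact ⟨l, m, l, m, hs, hs, predD_refl l m⟩
    | signed l b => exact Or.inl ⟨rfl, rfl⟩
  · -- antisymmetry
    intro d e hd he hde hed
    cases d with
    | pair s =>
      cases e with
      | pair s' =>
        obtain ⟨l, m, t, w, hs, hs', hp⟩ := hde
        obtain ⟨t', w', l', m', hs'2, hs2, hq0⟩ := hed
        obtain ⟨hl, hm, -, -⟩ := valid_pair hd hs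
        obtain ⟨ht, hw, -, -⟩ := valid_pair he hs'
        have hq1 : predD t w l' m' := predD_align hs' hs'2 hq0
        have hq : predD t w l m := predD_align_right hs hs2 hq1
        have hss' : s = s' := by
          rcases predD_antisymm hl hm ht hw hp hq with ⟨h1, h2⟩ | ⟨h1, h2⟩
          · rw [hs, hs', h1, h2]
          · rw [hs, hs', h1, h2]; exact Multiset.cons_swap w t 0
        rw [hss']
      | signed l' b =>
        obtain ⟨l, m, hs, hp⟩ := hde
        obtain ⟨t, w, hs2, hq0⟩ := hed
        obtain ⟨hl, hm, hlm, -⟩ := valid_pair hd hs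
        obtain ⟨hl', -⟩ := he
        have hq : predD l' l' l m := predD_align_right hs hs2 hq0
        rcases predD_antisymm hl hm hl' hl' hp hq with ⟨h1, h2⟩ | ⟨h1, h2⟩ <;>
          exact absurd (h1.trans h2.symm) hlm
    | signed l b =>
      cases e with
      | pair s' =>
        obtain ⟨t, w, hs', hp⟩ := hde
        obtain ⟨l2, m2, hs2, hq0⟩ := hed
        obtain ⟨ht, hw, htw, -⟩ := valid_pair he hs'
        obtain ⟨hl, -⟩ := hd
        have hq : predD t w l l := predD_align hs' hs2 hq0
        rcases predD_antisymm hl hl ht hw hp hq with ⟨h1, h2⟩ | ⟨h1, h2⟩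
        · exact absurd (h1.symm.trans h2) htw
        · exact absurd (h2.symm.trans h1) htw
      | signed m b' =>
        rcases hde with ⟨h1, h2⟩ | ⟨hne, hp⟩
        · rw [h1, h2]
        · rcases hed with ⟨h1, h2⟩ | ⟨-, hq⟩
          · exact absurd h1.symm hne
          · obtain ⟨hl, -⟩ := hd
            obtain ⟨hm, -⟩ := he
            rcases predD_antisymm hl hl hm hm hp hq with ⟨h1, -⟩ | ⟨h1, -⟩ <;>
              exact absurd h1 hne
  · -- transitivity
    intro d e f hd he hf hde hef
    cases d with
    | pair s =>
      cases e with
      | pair s' =>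
        obtain ⟨l, m, t, w, hs, hs', hp⟩ := hde
        cases f with
        | pair s'' =>
          obtain ⟨t', w', a, b, hs'2, hs'', hq⟩ := hef
          exact ⟨l, m, a, b, hs, hs'', predD_trans hp (predD_align hs' hs'2 hq)⟩
        | signed a b'' =>
          obtain ⟨t', w', hs'2, hq⟩ := hef
          exact ⟨l, m, hs, predD_trans hp (predD_align hs' hs'2 hq)⟩
      | signed l' b' =>
        obtain ⟨l, m, hs, hp⟩ := hde
        cases f with
        | pair s'' =>
          obtain ⟨a, b, hs'', hq⟩ := hef
          exact ⟨l, m, a, b, hs, hs'', predD_trans hp hq⟩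
        | signed a b'' =>
          rcases hef with ⟨h1, -⟩ | ⟨-, hq⟩
          · subst h1; exact ⟨l, m, hs, hp⟩
          · exact ⟨l, m, hs, predD_trans hp hq⟩
    | signed l b =>
      cases e with
      | pair s' =>
        obtain ⟨t, w, hs', hp⟩ := hde
        cases f with
        | pair s'' =>
          obtain ⟨t', w', a, bb, hs'2, hs'', hq⟩ := hef
          exact ⟨a, bb, hs'', predD_trans hp (predD_align hs' hs'2 hq)⟩
        | signed a b'' =>
          obtain ⟨t', w', hs'2, hq⟩ := hef
          have hq' : predD t w a a := predD_align hs' hs'2 hq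
          obtain ⟨hl, -⟩ := hd
          obtain ⟨ht, hw, htw, -⟩ := valid_pair he hs'
          by_cases hla : l = a
          · subst hla
            rcases predD_antisymm hl hl ht hw hp hq' with ⟨h1, h2⟩ | ⟨h1, h2⟩
            · exact absurd (h1.symm.trans h2) htw
            · exact absurd (h2.symm.trans h1) htw
          · exact Or.inr ⟨hla, predD_trans hp hq'⟩
      | signed m b' =>
        rcases hde with ⟨h1, h2⟩ | ⟨hne, hp⟩
        · subst h1; subst h2; exact hef
        · cases f with
          | pair s'' =>
            obtain ⟨a, bb, hs'', hq⟩ := hef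
            exact ⟨a, bb, hs'', predD_trans hp hq⟩
          | signed a b'' =>
            rcases hef with ⟨h1, -⟩ | ⟨hne2, hq⟩
            · subst h1; exact Or.inr ⟨hne, hp⟩
            · refine Or.inr ⟨?_, predD_trans hp hq⟩
              intro hla
              subst hla
              obtain ⟨hl, -⟩ := hd
              obtain ⟨hm, -⟩ := he
              rcases predD_antisymm hl hl hm hm hp hq with ⟨h1, -⟩ | ⟨h1, -⟩ <;>
                exact absurd h1 hne
  · -- minimality
    intro d hd
    cases d with
    | pair s =>
      obtain ⟨l, m, hs, -, hl, hm, hsum⟩ := hd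
      exact ⟨[], List.replicate n 1, l, m, rfl, hs, predD_min hl hm hsum⟩
    | signed l' b =>
      obtain ⟨hl', hsum⟩ := hd
      exact ⟨[], List.replicate n 1, rfl, predD_min hl' hl' (by omega)⟩
end
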